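/- arXiv:1607.08003 — 9 statements merged into one kernel-verified Lean document; each statement's English description precedes it below -/
import Mathlib

section
/- For δ > 0 define g_δ(z) = −1/(i·δ − 1/(z + i·δ)). Then: (a) for every z with Im z ≥ 0 the expressions are well defined (z + iδ ≠ 0 and iδ − 1/(z+iδ) ≠ 0), g_δ(z) has strictly positive imaginary part, and there exists a compact subset K of the open upper half-plane H⁺ (depending on δ) such that g_δ({z : Im z ≥ 0}) ⊆ K; (b) g_δ(z) → z as δ → 0⁺, uniformly in z on every compact subset of H⁺. -/
open Complex


lemma gaux (δ : ℝ) (hδ : 0 < δ) (z : ℂ) (hz : 0 ≤ z.im) :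
    let u := z + Complex.I * (δ : ℂ)
    let w := Complex.I * (δ : ℂ) - 1 / u
    u ≠ 0 ∧ δ ≤ u.im ∧ w ≠ 0 ∧ δ ≤ w.im ∧ ‖w‖ ≤ δ + 1/δ ∧
      ‖(-1/w)‖ ≤ 1/δ ∧ δ / (δ + 1/δ)^2 ≤ (-1/w).im := by
  intro u w
  have huim : u.im = z.im + δ := by simp [u]
  have huim' : δ ≤ u.im := by rw [huim]; linarith
  have hu : u ≠ 0 := fun h => by simp [h] at huim'; linarith
  have habsu : δ ≤ ‖u‖ := le_trans huim' (Complex.im_le_norm u)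
  have hnpos : 0 < Complex.normSq u := Complex.normSq_pos.2 hu
  have hwim : w.im = δ + u.im / Complex.normSq u := by
    simp [w, Complex.sub_im, one_div, Complex.inv_im, Complex.mul_im]
    ring
  have hwim' : δ ≤ w.im := by
    rw [hwim]
    have : 0 ≤ u.im / Complex.normSq u := div_nonneg (by linarith) hnpos.le
    linarith
  have hw : w ≠ 0 := fun h => by simp [h] at hwim'; linarith
  have habsw : ‖w‖ ≤ δ + 1/δ := by
    have h1 : ‖(1/u)‖ ≤ 1/δ := by
      rw [norm_div, norm_one]
      exact one_div_le_one_div_of_le hδ habsu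
    calc ‖w‖ ≤ ‖(Complex.I * (δ:ℂ))‖ + ‖(1/u)‖ := by
          simpa [w, sub_eq_add_neg] using (norm_add_le (Complex.I * (δ:ℂ)) (-(1/u)))
      _ ≤ δ + 1/δ := by
          rw [norm_mul, Complex.norm_I, Complex.norm_real, Real.norm_eq_abs, one_mul, abs_of_pos hδ]
          linarith
  have habswlb : δ ≤ ‖w‖ := hwim'.trans (Complex.im_le_norm w)
  have habsg : ‖(-1/w)‖ ≤ 1/δ := by
    rw [norm_div, norm_neg, norm_one]
    exact one_div_le_one_div_of_le hδ habswlb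
  have hgim : (-1/w).im = w.im / Complex.normSq w := by
    simp [Complex.div_im, Complex.normSq_apply, neg_div]
  refine ⟨hu, huim', hw, hwim', habsw, habsg, ?_⟩
  rw [hgim]
  have hsq : Complex.normSq w ≤ (δ + 1/δ)^2 := by
    have := Complex.sq_norm w
    nlinarith [norm_nonneg w]
  have h2 : 0 < Complex.normSq w := Complex.normSq_pos.2 hw
  have hd : 0 < (δ + 1/δ)^2 := by positivity
  calc δ / (δ + 1/δ)^2 ≤ w.im / (δ + 1/δ)^2 := by gcongr
    _ ≤ w.im / Complex.normSq w := by gcongr; linarith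

lemma gkey (δ:ℝ)(z v:ℂ)(h1 : (z + Complex.I*δ) * v = 1)(h2 : Complex.I*δ - v ≠ 0)
    (h3 : (1 - Complex.I*δ*(z+Complex.I*δ)) ≠ 0) :
    -1/(Complex.I*δ - v) - z
      = Complex.I*δ*(1+z*(z+Complex.I*δ))/(1 - Complex.I*δ*(z+Complex.I*δ)) := by
  field_simp
  linear_combination h1

lemma gdiff (δ : ℝ) (hδ : 0 < δ) (z : ℂ) (hz : 0 ≤ z.im) (hu : z + Complex.I * (δ:ℂ) ≠ 0)
    (hw : Complex.I * (δ:ℂ) - 1 / (z + Complex.I * (δ:ℂ)) ≠ 0) :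
    ‖((-1/(Complex.I * (δ:ℂ) - 1 / (z + Complex.I * (δ:ℂ)))) - z)‖ ≤
      δ * (1 + ‖z‖ * (‖z‖ + δ)) := by
  set u : ℂ := z + Complex.I * (δ:ℂ) with hudef
  set d : ℂ := 1 - Complex.I * (δ:ℂ) * u with hddef
  have hdre : d.re = 1 + δ^2 + δ * z.im := by
    simp [hddef, hudef, Complex.sub_re, Complex.mul_re, Complex.mul_im, Complex.add_re,
      Complex.add_im, Complex.I_re, Complex.I_im, Complex.ofReal_re, Complex.ofReal_im]
    ring
  have hdre1 : (1:ℝ) ≤ d.re := by rw [hdre]; nlinarith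
  have habsd : (1:ℝ) ≤ ‖d‖ := le_trans hdre1 (Complex.re_le_norm d)
  have hd : d ≠ 0 := fun h => by simp [h] at hdre1; linarith
  have hid : (-1/(Complex.I * (δ:ℂ) - 1 / u)) - z = Complex.I * (δ:ℂ) * (1 + z * u) / d := by
    rw [hddef, hudef]
    exact gkey δ z (1/(z + Complex.I*(δ:ℂ)))
      (mul_one_div_cancel (hudef ▸ hu)) (hudef ▸ hw) (by rw [hddef, hudef] at hd; exact hd)
  rw [hid, norm_div, norm_mul, norm_mul, Complex.norm_I, Complex.norm_real, Real.norm_eq_abs, one_mul,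
    abs_of_pos hδ]
  have h1 : ‖(1 + z * u)‖ ≤ 1 + ‖z‖ * (‖z‖ + δ) := by
    calc ‖(1 + z * u)‖ ≤ 1 + ‖(z * u)‖ := by
          simpa using norm_add_le 1 (z * u)
      _ ≤ 1 + ‖z‖ * (‖z‖ + δ) := by
          rw [norm_mul]
          have : ‖u‖ ≤ ‖z‖ + δ := by
            calc ‖u‖ ≤ ‖z‖ + ‖(Complex.I * (δ:ℂ))‖ :=
                  norm_add_le _ _
              _ = ‖z‖ + δ := by
                  rw [norm_mul, Complex.norm_I, Complex.norm_real, Real.norm_eq_abs, one_mul, abs_of_pos hδ]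
          have := mul_le_mul_of_nonneg_left this (norm_nonneg z)
          linarith
  calc δ * ‖(1 + z * u)‖ / ‖d‖ ≤ δ * ‖(1 + z * u)‖ / 1 := by
        gcongr
    _ ≤ δ * (1 + ‖z‖ * (‖z‖ + δ)) := by
        rw [div_one]; gcongr

/-- For `δ > 0` define `g_δ(z) = -1/(iδ - 1/(z + iδ))`. Then:
(a) for every `z` with `Im z ≥ 0` the expression is well defined, has strictly positive
imaginary part, and `g_δ` maps the closed upper half-plane into some compact subset of the
open upper half-plane;
(b) `g_δ(z) → z` as `δ → 0⁺`, uniformly in `z` on every compact subset of the open upper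
half-plane. -/
theorem g_delta_maps_into_compact_and_tendsto_id :
    (∀ δ : ℝ, 0 < δ →
      (∀ z : ℂ, 0 ≤ z.im →
        z + Complex.I * (δ : ℂ) ≠ 0 ∧
        Complex.I * (δ : ℂ) - 1 / (z + Complex.I * (δ : ℂ)) ≠ 0 ∧
        0 < (-1 / (Complex.I * (δ : ℂ) - 1 / (z + Complex.I * (δ : ℂ)))).im) ∧
      ∃ K : Set ℂ, IsCompact K ∧ K ⊆ {z : ℂ | 0 < z.im} ∧
        (fun z : ℂ => -1 / (Complex.I * (δ : ℂ) - 1 / (z + Complex.I * (δ : ℂ)))) ''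
          {z : ℂ | 0 ≤ z.im} ⊆ K) ∧
    (∀ K : Set ℂ, IsCompact K → K ⊆ {z : ℂ | 0 < z.im} →
      TendstoUniformlyOn
        (fun (δ : ℝ) (z : ℂ) => -1 / (Complex.I * (δ : ℂ) - 1 / (z + Complex.I * (δ : ℂ))))
        (fun z : ℂ => z) (nhdsWithin 0 (Set.Ioi (0 : ℝ))) K) := by
  constructor
  · intro δ hδ
    have hc : 0 < δ / (δ + 1/δ)^2 := by positivity
    constructor
    · intro z hz
      obtain ⟨hu, _, hw, _, _, _, hgim⟩ := gaux δ hδ z hz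
      exact ⟨hu, hw, lt_of_lt_of_le hc hgim⟩
    · refine ⟨Metric.closedBall 0 (1/δ) ∩ {w : ℂ | δ / (δ + 1/δ)^2 ≤ w.im}, ?_, ?_, ?_⟩
      · exact (isCompact_closedBall 0 _).inter_right
          (isClosed_le continuous_const Complex.continuous_im)
      · intro w hwK
        exact lt_of_lt_of_le hc hwK.2
      · rintro g ⟨z, hz, rfl⟩
        obtain ⟨hu, _, hw, _, _, habsg, hgim⟩ := gaux δ hδ z hz
        refine ⟨?_, hgim⟩
        rw [Metric.mem_closedBall, dist_zero_right]
        exact habsg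
  · intro K hK hKup
    obtain ⟨R, hR⟩ := hK.isBounded.subset_closedBall 0
    set R' : ℝ := max R 0 with hR'def
    have hR'0 : 0 ≤ R' := le_max_right _ _
    set M : ℝ := 1 + R' * (R' + 1) with hMdef
    have hM : 0 < M := by positivity
    rw [Metric.tendstoUniformlyOn_iff]
    intro ε hε
    have hcpos : 0 < min 1 (ε / (2 * M)) := by positivity
    filter_upwards [Ioo_mem_nhdsGT_of_mem (Set.left_mem_Ico.2 hcpos)] with δ hδ z hzK
    have hδ0 : 0 < δ := hδ.1
    have hz : 0 ≤ z.im := (hKup hzK).le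
    have hzR : ‖z‖ ≤ R' := by
      have := hR hzK
      rw [Metric.mem_closedBall, dist_zero_right] at this
      exact this.trans (le_max_left _ _)
    obtain ⟨hu, _, hw, _⟩ := gaux δ hδ0 z hz
    rw [Complex.dist_eq]
    calc ‖(z - (-1 / (Complex.I * (δ:ℂ) - 1 / (z + Complex.I * (δ:ℂ)))))‖
        = ‖((-1 / (Complex.I * (δ:ℂ) - 1 / (z + Complex.I * (δ:ℂ)))) - z)‖ := by
          rw [norm_sub_rev]
      _ ≤ δ * (1 + ‖z‖ * (‖z‖ + δ)) := gdiff δ hδ0 z hz hu hw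
      _ ≤ δ * M := by
          have hδ1 : δ ≤ 1 := (hδ.2.le.trans (min_le_left _ _))
          have h1 : ‖z‖ * (‖z‖ + δ) ≤ R' * (R' + 1) := by
            apply mul_le_mul hzR (by linarith) (by positivity) hR'0
          rw [hMdef]
          nlinarith
      _ < ε := by
          have h2 : δ < ε / (2 * M) := lt_of_lt_of_le hδ.2 (min_le_right _ _)
          have := (mul_lt_mul_of_pos_right h2 hM)
          have h3 : ε / (2 * M) * M = ε / 2 := by field_simp
          nlinarith
end

section
/- Let φ be a Pick function, i.e. φ is holomorphic on the open upper half-plane H⁺ and φ(H⁺) ⊆ H⁺. Then for every ε > 0 and every compact set Ω ⊂ H⁺ there exists a function ψ, holomorphic on H⁺, such that: (i) ψ extends to a continuous function on the closed upper half-plane {z : Im z ≥ 0}; (ii) the closure of ψ(H⁺) is a compact subset of H⁺; and (iii) |φ(z) − ψ(z)| < ε for all z ∈ Ω. -/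
open Complex

noncomputable def Mob (a b : ℝ) (z : ℂ) : ℂ :=
  Complex.I * ((a:ℂ)*z + Complex.I*b) / ((b:ℂ)*z + Complex.I*a)

lemma mob_denom_im (a b : ℝ) (z : ℂ) : ((b:ℂ)*z + Complex.I*a).im = b*z.im + a := by
  simp

lemma mob_denom_ne (a b : ℝ) (ha : 0 < a) (hb : 0 ≤ b) (z : ℂ) (hz : 0 ≤ z.im) :
    ((b:ℂ)*z + Complex.I*a) ≠ 0 := by
  intro h
  have := congrArg Complex.im h
  rw [mob_denom_im] at this
  simp at this
  nlinarith

lemma mob_im_eq (a b : ℝ) (z : ℂ) :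
    (Mob a b z).im =
      (a*b*(z.re^2+z.im^2+1) + (a^2+b^2)*z.im) / ((b*z.re)^2 + (b*z.im+a)^2) := by
  simp only [Mob, Complex.div_im, Complex.normSq_apply, Complex.add_im, Complex.add_re,
    Complex.mul_im, Complex.mul_re, Complex.I_re, Complex.I_im, Complex.ofReal_re,
    Complex.ofReal_im]
  ring

lemma mob_im_lb (a b : ℝ) (hb : 0 < b) (hab : b ≤ a) (z : ℂ) (hz : 0 ≤ z.im) :
    a*b/(2*(a^2+b^2)) ≤ (Mob a b z).im := by
  have ha : 0 < a := lt_of_lt_of_le hb hab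
  rw [mob_im_eq]
  rw [div_le_div_iff₀ (by positivity) (by positivity)]
  have key : 0 ≤ 2*z.im*(a^4 + a^2*b^2 + b^4) := by positivity
  nlinarith [mul_nonneg (mul_nonneg ha.le hb.le) (sq_nonneg z.re),
    mul_nonneg (mul_nonneg ha.le hb.le) (sq_nonneg z.im),
    mul_pos ha hb, sq_nonneg a, sq_nonneg b,
    mul_nonneg (mul_nonneg (mul_nonneg ha.le hb.le) (sq_nonneg z.re)) (sq_nonneg a),
    mul_nonneg (mul_nonneg (mul_nonneg ha.le hb.le) (sq_nonneg z.re)) (sq_nonneg b),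
    mul_nonneg (mul_nonneg (mul_nonneg ha.le hb.le) (sq_nonneg z.im)) (sq_nonneg a),
    mul_nonneg (mul_nonneg (mul_nonneg ha.le hb.le) (sq_nonneg z.im)) (sq_nonneg b),
    mul_nonneg (mul_nonneg ha.le hb.le) (sq_nonneg a),
    mul_nonneg (mul_nonneg ha.le hb.le) (sq_nonneg b)]

lemma mob_abs_le (a b : ℝ) (hb : 0 < b) (hab : b ≤ a) (z : ℂ) (hz : 0 ≤ z.im) :
    ‖Mob a b z‖ ≤ a / b := by
  have ha : 0 < a := lt_of_lt_of_le hb hab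
  have hD := mob_denom_ne a b ha hb.le z hz
  have habs : 0 < ‖(b:ℂ)*z + Complex.I*a‖ := by
    simpa [norm_pos_iff] using hD
  rw [Mob, norm_div, div_le_div_iff₀ habs hb]
  have hsq : (‖Complex.I * ((a:ℂ)*z + Complex.I*b)‖ * b)^2
      ≤ (a * ‖(b:ℂ)*z + Complex.I*a‖)^2 := by
    have h1 : (‖Complex.I * ((a:ℂ)*z + Complex.I*b)‖)^2
        = (a*z.re)^2 + (a*z.im+b)^2 := by
      rw [Complex.sq_norm, Complex.normSq_apply]
      simp only [Complex.add_im, Complex.add_re, Complex.mul_im, Complex.mul_re,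
        Complex.I_re, Complex.I_im, Complex.ofReal_re, Complex.ofReal_im]
      ring
    have h2 : (‖(b:ℂ)*z + Complex.I*a‖)^2 = (b*z.re)^2 + (b*z.im+a)^2 := by
      rw [Complex.sq_norm, Complex.normSq_apply]
      simp only [Complex.add_im, Complex.add_re, Complex.mul_im, Complex.mul_re,
        Complex.I_re, Complex.I_im, Complex.ofReal_re, Complex.ofReal_im]
      ring
    rw [mul_pow, mul_pow, h1, h2]
    have key : 0 ≤ (a^2 - b^2) * (2*a*b*z.im + a^2 + b^2) := by
      apply mul_nonneg
      · nlinarith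
      · nlinarith [mul_nonneg (mul_nonneg ha.le hb.le) hz]
    nlinarith [key, sq_nonneg z.re, mul_nonneg (sq_nonneg b) (sq_nonneg z.re), mul_nonneg (sq_nonneg a) (sq_nonneg z.re)]
  have h3 : 0 ≤ ‖Complex.I * ((a:ℂ)*z + Complex.I*b)‖ * b := by positivity
  have h4 : 0 ≤ a * ‖(b:ℂ)*z + Complex.I*a‖ := by positivity
  nlinarith

lemma mob_sub_le (a b : ℝ) (hb : 0 < b) (hab : b ≤ a) (z : ℂ) (hz : 0 ≤ z.im) :
    ‖Mob a b z - z‖ ≤ b * (1 + (‖z‖)^2) / a := by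
  have ha : 0 < a := lt_of_lt_of_le hb hab
  have hD := mob_denom_ne a b ha hb.le z hz
  have key : Mob a b z - z = -(b:ℂ) * (1 + z^2) / ((b:ℂ)*z + Complex.I*a) := by
    rw [Mob]
    rw [eq_div_iff hD, sub_mul, div_mul_cancel₀ _ hD]
    linear_combination (b:ℂ) * Complex.I_sq
  rw [key, norm_div]
  have hDa : a ≤ ‖(b:ℂ)*z + Complex.I*a‖ := by
    have := Complex.abs_im_le_norm ((b:ℂ)*z + Complex.I*a)
    rw [mob_denom_im] at this
    have : b*z.im + a ≤ ‖(b:ℂ)*z + Complex.I*a‖ := le_trans (le_abs_self _) this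
    nlinarith
  have hnum : ‖-(b:ℂ) * (1 + z^2)‖ ≤ b * (1 + (‖z‖)^2) := by
    rw [norm_mul]
    have : ‖1 + z^2‖ ≤ 1 + (‖z‖)^2 := by
      calc ‖1 + z^2‖ ≤ ‖1‖ + ‖z^2‖ := norm_add_le _ _
        _ = 1 + (‖z‖)^2 := by simp [norm_pow]
    have hb' : ‖-(b:ℂ)‖ = b := by simp [abs_of_pos hb]
    rw [hb']
    exact mul_le_mul_of_nonneg_left this hb.le
  calc ‖-(b:ℂ) * (1 + z^2)‖ / ‖(b:ℂ)*z + Complex.I*a‖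
      ≤ (b * (1 + (‖z‖)^2)) / a :=
        div_le_div₀ (by positivity) hnum ha hDa

lemma mob_diff (a b : ℝ) (ha : 0 < a) (hb : 0 ≤ b) (z : ℂ) (hz : 0 ≤ z.im) :
    DifferentiableAt ℂ (Mob a b) z := by
  have hD := mob_denom_ne a b ha hb z hz
  unfold Mob
  fun_prop (disch := assumption)

/-- The class `P_b` is dense in the class of Pick functions: for every Pick function `φ`
(holomorphic self-map of the open upper half-plane `H⁺`), every `ε > 0` and every compact
`Ω ⊆ H⁺`, there is `ψ` holomorphic on `H⁺`, continuous on the closed half-plane, with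
closure of `ψ(H⁺)` a compact subset of `H⁺`, such that `|φ - ψ| < ε` on `Ω`. -/
theorem pick_bounded_dense
    (φ : ℂ → ℂ)
    (hφ : DifferentiableOn ℂ φ {z : ℂ | 0 < z.im})
    (hmap : Set.MapsTo φ {z : ℂ | 0 < z.im} {z : ℂ | 0 < z.im})
    (ε : ℝ) (hε : 0 < ε)
    (Ω : Set ℂ) (hΩc : IsCompact Ω) (hΩ : Ω ⊆ {z : ℂ | 0 < z.im}) :
    ∃ ψ : ℂ → ℂ,
      DifferentiableOn ℂ ψ {z : ℂ | 0 < z.im} ∧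
      ContinuousOn ψ {z : ℂ | 0 ≤ z.im} ∧
      IsCompact (closure (ψ '' {z : ℂ | 0 < z.im})) ∧
      closure (ψ '' {z : ℂ | 0 < z.im}) ⊆ {z : ℂ | 0 < z.im} ∧
      ∀ z ∈ Ω, ‖φ z - ψ z‖ < ε := by
  have hUopen : IsOpen {z : ℂ | 0 < z.im} := isOpen_lt continuous_const Complex.continuous_im
  obtain ⟨η, hη, hηsub⟩ := hΩc.exists_cthickening_subset_open hUopen hΩ
  set Ω' := Metric.cthickening η Ω with hΩ'def
  have hΩ'c : IsCompact Ω' := hΩc.cthickening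
  have hφc : ContinuousOn φ Ω' := hφ.continuousOn.mono hηsub
  obtain ⟨M₀, hM₀⟩ := hΩ'c.exists_bound_of_continuousOn hφc
  obtain ⟨R₀, hR₀⟩ := hΩc.exists_bound_of_continuousOn continuousOn_id
  obtain ⟨δ, hδpos, hδ⟩ := (Metric.uniformContinuousOn_iff.mp
    (hΩ'c.uniformContinuousOn_of_continuous hφc)) (ε/2) (by linarith)
  set ρ : ℝ := min (min (η/(1+R₀^2)) (δ/(2*(1+R₀^2)))) (min (ε/(4*(1+M₀^2))) (1/2)) with hρdef
  have hρ : 0 < ρ := by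
    refine lt_min (lt_min ?_ ?_) (lt_min ?_ ?_) <;> positivity
  have hρhalf : ρ ≤ 1/2 := le_trans (min_le_right _ _) (min_le_right _ _)
  set b : ℝ := ρ with hbdef
  set a : ℝ := 2 - ρ with hadef
  have hb : 0 < b := hρ
  have hab : b ≤ a := by rw [hbdef, hadef]; linarith
  have ha : 0 < a := lt_of_lt_of_le hb hab
  have ha1 : 1 ≤ a := by rw [hadef]; linarith
  set ψ : ℂ → ℂ := fun z => Mob a b (φ (Mob a b z)) with hψdef
  have hMmem : ∀ z : ℂ, 0 ≤ z.im → Mob a b z ∈ {z : ℂ | 0 < z.im} := by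
    intro z hz
    have := mob_im_lb a b hb hab z hz
    have hpos : 0 < a*b/(2*(a^2+b^2)) := by positivity
    exact lt_of_lt_of_le hpos this
  have hsub_bound : ∀ z : ℂ, 0 ≤ z.im →
      ‖Mob a b z - z‖ ≤ ρ * (1 + (‖z‖)^2) := by
    intro z hz
    refine le_trans (mob_sub_le a b hb hab z hz) ?_
    rw [hbdef]
    calc ρ * (1 + (‖z‖)^2) / a ≤ ρ * (1 + (‖z‖)^2) / 1 := by
          apply div_le_div_of_nonneg_left _ one_pos ha1
          positivity
      _ = ρ * (1 + (‖z‖)^2) := by ring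
  refine ⟨ψ, ?_, ?_, ?_, ?_, ?_⟩
  · -- differentiability
    intro z hz
    have hz' : (0:ℝ) < z.im := hz
    have h1 : DifferentiableAt ℂ (Mob a b) z := mob_diff a b ha hb.le z hz'.le
    have hMz := hMmem z hz'.le
    have h2 : DifferentiableAt ℂ φ (Mob a b z) := hφ.differentiableAt (hUopen.mem_nhds hMz)
    have h3 : DifferentiableAt ℂ (Mob a b) (φ (Mob a b z)) :=
      mob_diff a b ha hb.le _ (le_of_lt (hmap hMz))
    exact (DifferentiableAt.comp z h3 (DifferentiableAt.comp z h2 h1)).differentiableWithinAt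
  · -- continuity on closed half-plane
    intro z hz
    have hz' : (0:ℝ) ≤ z.im := hz
    have h1 : ContinuousAt (Mob a b) z := (mob_diff a b ha hb.le z hz').continuousAt
    have hMz := hMmem z hz'
    have h2 : ContinuousAt φ (Mob a b z) :=
      hφ.continuousOn.continuousAt (hUopen.mem_nhds hMz)
    have h3 : ContinuousAt (Mob a b) (φ (Mob a b z)) :=
      (mob_diff a b ha hb.le _ (le_of_lt (hmap hMz))).continuousAt
    have hc : ContinuousAt (φ ∘ Mob a b) z := ContinuousAt.comp (g := φ) (f := Mob a b) h2 h1
    have hc2 : ContinuousAt (Mob a b ∘ (φ ∘ Mob a b)) z :=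
      ContinuousAt.comp (g := Mob a b) (f := φ ∘ Mob a b) h3 hc
    exact hc2.continuousWithinAt
  · -- compactness of closure of image
    have hKclosed : IsClosed ({w : ℂ | a*b/(2*(a^2+b^2)) ≤ w.im} ∩ Metric.closedBall 0 (a/b)) :=
      (isClosed_le continuous_const Complex.continuous_im).inter Metric.isClosed_closedBall
    have hKcpt : IsCompact ({w : ℂ | a*b/(2*(a^2+b^2)) ≤ w.im} ∩ Metric.closedBall 0 (a/b)) :=
      Metric.isCompact_of_isClosed_isBounded hKclosed
        (Metric.isBounded_closedBall.subset Set.inter_subset_right)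
    have himg : ψ '' {z : ℂ | 0 < z.im} ⊆
        ({w : ℂ | a*b/(2*(a^2+b^2)) ≤ w.im} ∩ Metric.closedBall 0 (a/b)) := by
      rintro _ ⟨z, hz, rfl⟩
      have hz' : (0:ℝ) ≤ z.im := le_of_lt hz
      have hw : (0:ℝ) ≤ (φ (Mob a b z)).im := le_of_lt (hmap (hMmem z hz'))
      constructor
      · exact mob_im_lb a b hb hab _ hw
      · rw [Metric.mem_closedBall, dist_zero_right]
        exact mob_abs_le a b hb hab _ hw
    exact hKcpt.of_isClosed_subset isClosed_closure (closure_minimal himg hKclosed)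
  · -- closure inside upper half-plane
    have hKclosed : IsClosed ({w : ℂ | a*b/(2*(a^2+b^2)) ≤ w.im} ∩ Metric.closedBall 0 (a/b)) :=
      (isClosed_le continuous_const Complex.continuous_im).inter Metric.isClosed_closedBall
    have himg : ψ '' {z : ℂ | 0 < z.im} ⊆
        ({w : ℂ | a*b/(2*(a^2+b^2)) ≤ w.im} ∩ Metric.closedBall 0 (a/b)) := by
      rintro _ ⟨z, hz, rfl⟩
      have hz' : (0:ℝ) ≤ z.im := le_of_lt hz
      have hw : (0:ℝ) ≤ (φ (Mob a b z)).im := le_of_lt (hmap (hMmem z hz'))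
      constructor
      · exact mob_im_lb a b hb hab _ hw
      · rw [Metric.mem_closedBall, dist_zero_right]
        exact mob_abs_le a b hb hab _ hw
    intro w hw
    have := closure_minimal himg hKclosed hw
    have hpos : 0 < a*b/(2*(a^2+b^2)) := by positivity
    exact lt_of_lt_of_le hpos this.1
  · -- approximation
    intro z hzΩ
    have hzU : z ∈ {z : ℂ | 0 < z.im} := hΩ hzΩ
    have hz0 : (0:ℝ) ≤ z.im := le_of_lt hzU
    have hzΩ' : z ∈ Ω' := Metric.self_subset_cthickening Ω hzΩ
    have habsz : ‖z‖ ≤ R₀ := by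
      have := hR₀ z hzΩ
      simpa using this
    have hzsq : (‖z‖)^2 ≤ R₀^2 := pow_le_pow_left₀ (norm_nonneg z) habsz 2
    have hsubz : ‖Mob a b z - z‖ ≤ ρ * (1 + R₀^2) := by
      refine le_trans (hsub_bound z hz0) ?_
      nlinarith
    have hρη : ρ * (1 + R₀^2) ≤ η := by
      have h1 : ρ ≤ η/(1+R₀^2) := le_trans (min_le_left _ _) (min_le_left _ _)
      rw [le_div_iff₀ (by positivity)] at h1
      linarith
    have hρδ : ρ * (1 + R₀^2) ≤ δ/2 := by
      have h1 : ρ ≤ δ/(2*(1+R₀^2)) := le_trans (min_le_left _ _) (min_le_right _ _)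
      rw [le_div_iff₀ (by positivity)] at h1
      linarith
    have hMzΩ' : Mob a b z ∈ Ω' := by
      apply Metric.mem_cthickening_of_dist_le (Mob a b z) z η Ω hzΩ
      rw [Complex.dist_eq]
      exact le_trans hsubz hρη
    have hdistδ : dist z (Mob a b z) < δ := by
      rw [dist_comm, Complex.dist_eq]
      calc ‖Mob a b z - z‖ ≤ ρ * (1 + R₀^2) := hsubz
        _ ≤ δ/2 := hρδ
        _ < δ := by linarith
    have h1 : dist (φ z) (φ (Mob a b z)) < ε/2 := hδ z hzΩ' (Mob a b z) hMzΩ' hdistδ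
    have hw0 : (0:ℝ) ≤ (φ (Mob a b z)).im := le_of_lt (hmap (hMmem z hz0))
    have habsw : ‖φ (Mob a b z)‖ ≤ M₀ := by
      have := hM₀ _ hMzΩ'
      simpa using this
    have hwsq : (‖φ (Mob a b z)‖)^2 ≤ M₀^2 :=
      pow_le_pow_left₀ (norm_nonneg _) habsw 2
    have h2 : ‖φ (Mob a b z) - ψ z‖ ≤ ε/4 := by
      have heq : ‖φ (Mob a b z) - ψ z‖
          = ‖Mob a b (φ (Mob a b z)) - φ (Mob a b z)‖ := by
        rw [hψdef]
        exact norm_sub_rev _ _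
      rw [heq]
      have hb1 := hsub_bound (φ (Mob a b z)) hw0
      have hρε : ρ ≤ ε/(4*(1+M₀^2)) := le_trans (min_le_right _ _) (min_le_left _ _)
      rw [le_div_iff₀ (by positivity)] at hρε
      nlinarith
    calc ‖φ z - ψ z‖ = dist (φ z) (ψ z) := (Complex.dist_eq _ _).symm
      _ ≤ dist (φ z) (φ (Mob a b z)) + dist (φ (Mob a b z)) (ψ z) := dist_triangle _ _ _
      _ = dist (φ z) (φ (Mob a b z)) + ‖φ (Mob a b z) - ψ z‖ := by
          simp only [Complex.dist_eq]
      _ < ε := by linarith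
end

section
/- Let F and W be complex numbers with F ≠ 0 and |W| < 1. Then W·F − conj(F) ≠ 0, F − conj(W)·conj(F) ≠ 0, and the following identity holds: (1 − |W|²)/|W·F − conj(F)|² = 1/(F·conj(F)) + W/(conj(F)·(conj(F) − W·F)) + conj(W)/(F·(F − conj(W)·conj(F))), where both sides are complex numbers (the left-hand side being real and positive). -/
open Complex

/-- The key algebraic identity (2.8) of the paper: for complex `F ≠ 0` and `|W| < 1`,
the denominators are nonzero and
`(1 - |W|²)/|W·F - conj F|² = 1/(F·conj F) + W/(conj F·(conj F - W·F))
  + conj W/(F·(F - conj W·conj F))`. -/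
theorem main_identity (F W : ℂ) (hF : F ≠ 0) (hW : ‖W‖ < 1) :
    W * F - (starRingEnd ℂ) F ≠ 0 ∧
    F - (starRingEnd ℂ) W * (starRingEnd ℂ) F ≠ 0 ∧
    (((1 - ‖W‖ ^ 2) / ‖W * F - (starRingEnd ℂ) F‖ ^ 2 : ℝ) : ℂ) =
      1 / (F * (starRingEnd ℂ) F)
      + W / ((starRingEnd ℂ) F * ((starRingEnd ℂ) F - W * F))
      + (starRingEnd ℂ) W / (F * (F - (starRingEnd ℂ) W * (starRingEnd ℂ) F)) := by
  have hFc : (starRingEnd ℂ) F ≠ 0 := by simpa using hF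
  have h1 : W * F - (starRingEnd ℂ) F ≠ 0 := by
    intro h
    have h' : ‖W * F‖ = ‖F‖ := by
      rw [sub_eq_zero] at h
      rw [h, Complex.norm_conj]
    rw [norm_mul] at h'
    have hFne : ‖F‖ ≠ 0 := by simpa using hF
    have : ‖W‖ = 1 := by
      have := mul_right_cancel₀ hFne (h'.trans (one_mul ‖F‖).symm)
      exact this
    linarith
  have h2 : F - (starRingEnd ℂ) W * (starRingEnd ℂ) F ≠ 0 := by
    intro h
    apply h1
    have := congrArg (starRingEnd ℂ) h
    simp only [map_sub, map_mul, Complex.conj_conj, map_zero] at this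
    linear_combination -this
  refine ⟨h1, h2, ?_⟩
  have habs2 : ((‖W * F - (starRingEnd ℂ) F‖ ^ 2 : ℝ) : ℂ)
      = (W * F - (starRingEnd ℂ) F) * ((starRingEnd ℂ) W * (starRingEnd ℂ) F - F) := by
    rw [← Complex.normSq_eq_norm_sq, ← Complex.mul_conj]
    simp [map_sub, map_mul]
  have habsW : ((‖W‖ ^ 2 : ℝ) : ℂ) = W * (starRingEnd ℂ) W := by
    rw [← Complex.normSq_eq_norm_sq, ← Complex.mul_conj]
  have h3 : ((starRingEnd ℂ) F - W * F) ≠ 0 := by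
    intro h; apply h1; linear_combination -h
  have hden : (W * F - (starRingEnd ℂ) F) * ((starRingEnd ℂ) W * (starRingEnd ℂ) F - F) ≠ 0 := by
    apply mul_ne_zero h1
    intro h; apply h2; linear_combination -h
  rw [Complex.ofReal_div, Complex.ofReal_sub, Complex.ofReal_one, habs2, habsW]
  have h4 : (starRingEnd ℂ) W * (starRingEnd ℂ) F - F ≠ 0 := by
    intro h; apply h2; linear_combination -h
  field_simp
  ring
end

section
/- Let f be an entire function such that: (M1) f(z) ≠ 0 whenever Im z ≤ 0; (M3) for every m ∈ ℕ, z^m/f(z) → 0 as |z| → ∞ uniformly on {z : Im z ≤ 0} (i.e. for every ε > 0 there is R > 0 such that |z|^m ≤ ε|f(z)| whenever Im z ≤ 0 and |z| ≥ R). Let φ : ℝ → ℂ be continuous with the closure of φ(ℝ) a compact subset of the open upper half-plane. Define b(x) = (f(x) + conj(f(x)))/2 and d(x) = i(f(x) − conj(f(x)))/2 for real x (so b, d are real-valued and f = b − i·d on ℝ), and μ(x;φ) = (Im φ(x)/π)/|d(x) − φ(x)·b(x)|². Then d(x) − φ(x)b(x) ≠ 0 for all x ∈ ℝ, and for every n ∈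 ℕ the function x ↦ x^n·μ(x;φ) is (absolutely) integrable on ℝ. -/
open Complex MeasureTheory

lemma aux_quad (T v₀ u v a c : ℝ) (hv₀ : 0 < v₀) (hv : v₀ ≤ v) (hT : 1 + u^2 + v^2 ≤ T) :
    v₀^2 * (a^2 + c^2) ≤ ((c + u*a)^2 + v^2*a^2) * T := by
  have hT1 : 0 < T := by nlinarith [sq_nonneg u, sq_nonneg v]
  have hD : 0 < T - v₀^2 := by nlinarith [sq_nonneg u]
  have hcoef : 0 ≤ T^2*v^2 - T*v₀^2*(1+u^2+v^2) + v₀^4 := by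
    nlinarith [mul_le_mul_of_nonneg_left hT (mul_nonneg hT1.le (sq_nonneg v₀)), sq_nonneg v₀,
      mul_le_mul_of_nonneg_left (mul_self_le_mul_self hv₀.le hv) (mul_pos hT1 hT1).le]
  nlinarith [sq_nonneg ((T - v₀^2)*c + T*u*a), mul_nonneg hcoef (sq_nonneg a), hD]

lemma aux_normSq (w p : ℂ) :
    Complex.normSq (Complex.I * (w - (starRingEnd ℂ) w) / 2 - p * ((w + (starRingEnd ℂ) w) / 2))
      = (w.im + p.re * w.re)^2 + p.im^2 * w.re^2 := by
  have h1 : Complex.I * (w - (starRingEnd ℂ) w) / 2 = -(w.im : ℂ) := by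
    rw [Complex.sub_conj]
    push_cast
    rw [div_eq_iff (two_ne_zero)]
    ring_nf
    rw [Complex.I_sq]
    ring
  have h2 : (w + (starRingEnd ℂ) w) / 2 = (w.re : ℂ) := by
    rw [Complex.add_conj]
    push_cast
    ring
  rw [h1, h2, Complex.normSq_apply]
  simp [Complex.mul_re, Complex.mul_im]
  ring

/-- First assertion of Theorem 1: for an entire function `f` with no zeros in the closed
lower half-plane (M1) and super-polynomial growth there (M3), and a continuous `φ : ℝ → ℂ`
whose range has compact closure inside the open upper half-plane, the density
`μ(x;φ) = (Im φ(x)/π)/|d(x) - φ(x)·b(x)|²` (where `b = (f + conj f)/2`,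
`d = i(f - conj f)/2` on ℝ) is well defined and all its moments are finite. -/
theorem moments_finite
    (f : ℂ → ℂ) (hf : Differentiable ℂ f)
    (hM1 : ∀ z : ℂ, z.im ≤ 0 → f z ≠ 0)
    (hM3 : ∀ m : ℕ, ∀ ε : ℝ, 0 < ε → ∃ R : ℝ, 0 < R ∧ ∀ z : ℂ, z.im ≤ 0 →
      R ≤ ‖z‖ → ‖z‖ ^ m ≤ ε * ‖f z‖)
    (φ : ℝ → ℂ) (hφc : Continuous φ)
    (hφcpt : IsCompact (closure (Set.range φ)))
    (hφim : closure (Set.range φ) ⊆ {z : ℂ | 0 < z.im}) :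
    (∀ x : ℝ,
      Complex.I * (f (x : ℂ) - (starRingEnd ℂ) (f (x : ℂ))) / 2 -
        φ x * ((f (x : ℂ) + (starRingEnd ℂ) (f (x : ℂ))) / 2) ≠ 0) ∧
    ∀ n : ℕ, Integrable (fun x : ℝ =>
      x ^ n * (((φ x).im / Real.pi) /
        ‖Complex.I * (f (x : ℂ) - (starRingEnd ℂ) (f (x : ℂ))) / 2 -
          φ x * ((f (x : ℂ) + (starRingEnd ℂ) (f (x : ℂ))) / 2)‖ ^ 2)) := by
  set g : ℝ → ℂ := fun x => Complex.I * (f (x : ℂ) - (starRingEnd ℂ) (f (x : ℂ))) / 2 -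
      φ x * ((f (x : ℂ) + (starRingEnd ℂ) (f (x : ℂ))) / 2) with hg
  -- lower bound on the imaginary part of φ
  have hKne : (closure (Set.range φ)).Nonempty := ⟨φ 0, subset_closure ⟨0, rfl⟩⟩
  obtain ⟨z₀, hz₀K, hz₀min⟩ := hφcpt.exists_isMinOn hKne Complex.continuous_im.continuousOn
  set v₀ : ℝ := z₀.im with hv₀def
  have hv₀ : 0 < v₀ := hφim hz₀K
  have hv₀le : ∀ x : ℝ, v₀ ≤ (φ x).im := fun x => hz₀min (subset_closure ⟨x, rfl⟩)
  -- upper bound on φ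
  obtain ⟨M, hM⟩ := hφcpt.isBounded.exists_norm_le
  have hMb : ∀ x : ℝ, ‖φ x‖ ≤ M := fun x => hM _ (subset_closure ⟨x, rfl⟩)
  have hM0 : 0 < M := lt_of_lt_of_le (lt_of_lt_of_le hv₀ (Complex.im_le_norm z₀)) (hM _ hz₀K)
  set T : ℝ := 1 + 2 * M ^ 2 with hT
  have hTpos : 0 < T := by positivity
  set κ : ℝ := v₀ ^ 2 / T with hκ
  have hκpos : 0 < κ := by positivity
  -- key pointwise lower bound
  have hkey : ∀ x : ℝ, κ * Complex.normSq (f (x : ℂ)) ≤ Complex.normSq (g x) := by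
    intro x
    rw [hg, aux_normSq, hκ, div_mul_eq_mul_div, div_le_iff₀ hTpos, Complex.normSq_apply,
      ← pow_two, ← pow_two]
    have h1 : (φ x).re ^ 2 + (φ x).im ^ 2 ≤ M ^ 2 := by
      have h2 : ‖φ x‖ ^ 2 ≤ M ^ 2 :=
        pow_le_pow_left₀ (norm_nonneg _) (hMb x) 2
      rwa [Complex.sq_norm, Complex.normSq_apply, ← pow_two, ← pow_two] at h2
    exact aux_quad T v₀ (φ x).re (φ x).im (f (x : ℂ)).re (f (x : ℂ)).im hv₀ (hv₀le x)
      (by rw [hT]; nlinarith [sq_nonneg (φ x).re, sq_nonneg (φ x).im])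
  have hfne : ∀ x : ℝ, f (x : ℂ) ≠ 0 := fun x => hM1 _ (by simp)
  have hgne : ∀ x : ℝ, g x ≠ 0 := by
    intro x
    have h1 : 0 < Complex.normSq (f (x : ℂ)) := Complex.normSq_pos.2 (hfne x)
    have h2 : 0 < Complex.normSq (g x) := lt_of_lt_of_le (by positivity) (hkey x)
    exact fun h => by simp [h] at h2
  refine ⟨hgne, fun n => ?_⟩
  -- continuity of the integrand
  have hfc : Continuous fun x : ℝ => f (x : ℂ) := hf.continuous.comp Complex.continuous_ofReal
  have hconj : Continuous fun x : ℝ => (starRingEnd ℂ) (f (x : ℂ)) := continuous_star.comp hfc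
  have hgc : Continuous g :=
    ((continuous_const.mul (hfc.sub hconj)).div_const 2).sub
      (hφc.mul ((hfc.add hconj).div_const 2))
  set h : ℝ → ℝ := fun x => x ^ n * (((φ x).im / Real.pi) / ‖g x‖ ^ 2) with hh
  have hhc : Continuous h := by
    apply (continuous_pow n).mul
    exact (((Complex.continuous_im.comp hφc).div_const Real.pi).div
      ((continuous_norm.comp hgc).pow 2)
      (fun x => pow_ne_zero 2 (norm_ne_zero_iff.mpr (hgne x))))
  -- the radius
  obtain ⟨R, hR0, hR⟩ := hM3 (n + 2) 1 one_pos
  set R' : ℝ := max R 1 with hR'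
  have hR'1 : (1 : ℝ) ≤ R' := le_max_right _ _
  -- integrable on the compact part
  have hint1 : IntegrableOn h (Set.Icc (-R') R') := hhc.integrableOn_Icc
  -- tail bound
  set C : ℝ := 2 * M / (Real.pi * κ) with hC
  have hbound : ∀ x : ℝ, R' ≤ |x| → |h x| ≤ C * (1 + x ^ 2)⁻¹ := by
    intro x hx
    have hpi := Real.pi_pos
    have hx1 : (1 : ℝ) ≤ |x| := le_trans hR'1 hx
    have hxpos : (0 : ℝ) < |x| := lt_of_lt_of_le one_pos hx1
    have hxabs : ‖(x : ℂ)‖ = |x| := by rw [Complex.norm_real, Real.norm_eq_abs]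
    have hfx : |x| ^ (n + 2) ≤ ‖f (x : ℂ)‖ := by
      have := hR (x : ℂ) (by simp) (by rw [hxabs]; exact le_trans (le_max_left _ _) hx)
      rwa [hxabs, one_mul] at this
    have hfx2 : κ * |x| ^ (2 * n + 4) ≤ ‖g x‖ ^ 2 := by
      have h1 : (|x| ^ (n + 2)) ^ 2 ≤ ‖f (x : ℂ)‖ ^ 2 :=
        pow_le_pow_left₀ (by positivity) hfx 2
      have h2 := hkey x
      rw [← Complex.sq_norm, ← Complex.sq_norm] at h2
      calc κ * |x| ^ (2 * n + 4) = κ * (|x| ^ (n + 2)) ^ 2 := by ring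
        _ ≤ κ * ‖f (x : ℂ)‖ ^ 2 := by gcongr
        _ ≤ _ := h2
    have hGpos : 0 < ‖g x‖ ^ 2 := pow_pos (norm_pos_iff.mpr (hgne x)) 2
    have himpos : 0 < (φ x).im := lt_of_lt_of_le hv₀ (hv₀le x)
    have him : (φ x).im ≤ M := le_trans (Complex.im_le_norm _) (hMb x)
    have hxpow : x ^ 2 ≤ |x| ^ (n + 4) := by
      calc x ^ 2 = |x| ^ 2 := (_root_.sq_abs x).symm
        _ ≤ |x| ^ (n + 4) := pow_le_pow_right₀ hx1 (by omega)
    have hfrac : |x| ^ n / |x| ^ (2 * n + 4) ≤ 2 / (1 + x ^ 2) := by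
      have e1 : |x| ^ n / |x| ^ (2 * n + 4) = 1 / |x| ^ (n + 4) := by
        rw [show 2 * n + 4 = n + (n + 4) from by omega, pow_add, div_mul_eq_div_div,
          div_self (by positivity : |x| ^ n ≠ 0)]
      rw [e1, div_le_div_iff₀ (by positivity) (by positivity)]
      nlinarith [_root_.sq_abs x, hxpow]
    have hnn : (0:ℝ) ≤ (φ x).im / Real.pi / ‖g x‖ ^ 2 := by positivity
    calc |h x| = |x| ^ n * (((φ x).im / Real.pi) / ‖g x‖ ^ 2) := by
          rw [hh, abs_mul, _root_.abs_pow, _root_.abs_of_nonneg hnn]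
      _ ≤ |x| ^ n * ((M / Real.pi) / (κ * |x| ^ (2 * n + 4))) := by gcongr
      _ = (M / Real.pi / κ) * (|x| ^ n / |x| ^ (2 * n + 4)) := by
          field_simp
      _ ≤ (M / Real.pi / κ) * (2 / (1 + x ^ 2)) := by gcongr
      _ = C * (1 + x ^ 2)⁻¹ := by rw [hC]; field_simp
  -- assemble
  have hS : MeasurableSet {x : ℝ | R' ≤ |x|} :=
    (isClosed_le continuous_const _root_.continuous_abs).measurableSet
  have hint2 : IntegrableOn h {x : ℝ | R' ≤ |x|} := by
    have hmaj : Integrable (fun x : ℝ => C * (1 + x ^ 2)⁻¹) :=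
      integrable_inv_one_add_sq.const_mul C
    refine Integrable.mono' hmaj.integrableOn hhc.aestronglyMeasurable.restrict ?_
    rw [ae_restrict_iff' hS]
    exact ae_of_all _ fun x hx => by
      rw [Real.norm_eq_abs]; exact hbound x hx
  have hcover : (Set.univ : Set ℝ) ⊆ Set.Icc (-R') R' ∪ {x : ℝ | R' ≤ |x|} := by
    intro x _
    rcases le_or_gt |x| R' with hc | hc
    · exact Or.inl (abs_le.mp hc)
    · exact Or.inr hc.le
  rw [← integrableOn_univ]
  exact (hint1.union hint2).mono_set hcover
end

section
/- Let f be an entire function such that: (M1) f(z) ≠ 0 whenever Im z ≤ 0; (M2) |f(z)| ≤ |f̄(z)| whenever Im z ≥ 0, where f̄(z) := conj(f(conj z)); (M3) for every m ∈ ℕ, z^m/f(z) → 0 as |z| → ∞ uniformly on {z : Im z ≤ 0}. Let δ ∈ (0,1) and let w be continuous on the closed upper half-plane {z : Im z ≥ 0}, holomorphic on the open upper half-plane, with |w(z)| ≤ δ for all z with Im z ≥ 0. Then for every n ∈ ℕ the function x ↦ x^n·w(x)/(f̄(x)·(f̄(x) − w(x)·f(x))) is integrable on ℝ and ∫_ℝ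 x^n·w(x)/(f̄(x)·(f̄(x) − w(x)·f(x))) dx = 0. -/
open Complex MeasureTheory Filter Set Topology

lemma hasDerivAt_conjConj {f : ℂ → ℂ} {d z : ℂ} (h : HasDerivAt f d ((starRingEnd ℂ) z)) :
    HasDerivAt (fun w => (starRingEnd ℂ) (f ((starRingEnd ℂ) w))) ((starRingEnd ℂ) d) z := by
  rw [hasDerivAt_iff_tendsto_slope] at h ⊢
  have hconj : Filter.Tendsto (starRingEnd ℂ) (nhdsWithin z {z}ᶜ)
      (nhdsWithin ((starRingEnd ℂ) z) {(starRingEnd ℂ) z}ᶜ) := by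
    apply Filter.Tendsto.inf
    · exact (Complex.continuous_conj.tendsto z)
    · apply Filter.tendsto_principal_principal.mpr
      intro w hw
      simp only [Set.mem_compl_iff, Set.mem_singleton_iff] at hw ⊢
      exact fun hc => hw ((starRingEnd ℂ).injective hc)
  have := (Complex.continuous_conj.tendsto d).comp (h.comp hconj)
  refine this.congr fun w => ?_
  simp only [Function.comp_apply, slope_def_field]
  rw [div_eq_mul_inv, map_mul, map_inv₀, map_sub, map_sub, Complex.conj_conj,
    Complex.conj_conj, div_eq_mul_inv]


section main
variable {f : ℂ → ℂ} {w : ℂ → ℂ} (n : ℕ)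

noncomputable def Fb (f : ℂ → ℂ) : ℂ → ℂ := fun z => (starRingEnd ℂ) (f ((starRingEnd ℂ) z))

noncomputable def FF (f w : ℂ → ℂ) (n : ℕ) : ℂ → ℂ :=
  fun z => z ^ n * w z / (Fb f z * (Fb f z - w z * f z))

lemma Fb_diff {f : ℂ → ℂ} (hf : Differentiable ℂ f) : Differentiable ℂ (Fb f) := fun z =>
  (hasDerivAt_conjConj (hf ((starRingEnd ℂ) z)).hasDerivAt).differentiableAt

lemma Fb_ne (hM1 : ∀ z : ℂ, z.im ≤ 0 → f z ≠ 0) {z : ℂ} (hz : 0 ≤ z.im) : Fb f z ≠ 0 := by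
  simp only [Fb, map_ne_zero]
  exact hM1 _ (by simpa using neg_nonpos.mpr hz)

lemma denom_lb {δ : ℝ} (hδ : δ ∈ Set.Ioo (0 : ℝ) 1)
    (hM2 : ∀ z : ℂ, 0 ≤ z.im →
      ‖f z‖ ≤ ‖(starRingEnd ℂ) (f ((starRingEnd ℂ) z))‖)
    (hwb : ∀ z : ℂ, 0 ≤ z.im → ‖w z‖ ≤ δ)
    {z : ℂ} (hz : 0 ≤ z.im) :
    (1 - δ) * ‖Fb f z‖ ≤ ‖Fb f z - w z * f z‖ := by
  have h1 : ‖w z * f z‖ ≤ δ * ‖Fb f z‖ := by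
    rw [norm_mul]
    exact mul_le_mul (hwb z hz) (hM2 z hz) (norm_nonneg _) hδ.1.le
  have h2 : ‖Fb f z‖ - ‖w z * f z‖
      ≤ ‖Fb f z - w z * f z‖ := by
    exact norm_sub_norm_le (Fb f z) (w z * f z)
  nlinarith [norm_nonneg (Fb f z)]

lemma denom_ne {δ : ℝ} (hδ : δ ∈ Set.Ioo (0 : ℝ) 1)
    (hM1 : ∀ z : ℂ, z.im ≤ 0 → f z ≠ 0)
    (hM2 : ∀ z : ℂ, 0 ≤ z.im →
      ‖f z‖ ≤ ‖(starRingEnd ℂ) (f ((starRingEnd ℂ) z))‖)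
    (hwb : ∀ z : ℂ, 0 ≤ z.im → ‖w z‖ ≤ δ)
    {z : ℂ} (hz : 0 ≤ z.im) :
    Fb f z * (Fb f z - w z * f z) ≠ 0 := by
  have h0 : Fb f z ≠ 0 := Fb_ne hM1 hz
  refine mul_ne_zero h0 ?_
  have := denom_lb hδ hM2 hwb hz
  intro hc
  rw [hc] at this
  simp only [norm_zero] at this
  have hb : 0 < ‖Fb f z‖ := norm_pos_iff.mpr h0
  obtain ⟨h3, h4⟩ := hδ
  nlinarith

variable (hf : Differentiable ℂ f)
  (hM1 : ∀ z : ℂ, z.im ≤ 0 → f z ≠ 0)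
  (hM2 : ∀ z : ℂ, 0 ≤ z.im →
    ‖f z‖ ≤ ‖(starRingEnd ℂ) (f ((starRingEnd ℂ) z))‖)
  {δ : ℝ} (hδ : δ ∈ Set.Ioo (0 : ℝ) 1)
  (hwc : ContinuousOn w {z : ℂ | 0 ≤ z.im})
  (hwh : DifferentiableOn ℂ w {z : ℂ | 0 < z.im})
  (hwb : ∀ z : ℂ, 0 ≤ z.im → ‖w z‖ ≤ δ)

include hf hM1 hM2 hδ hwb in
lemma FF_contOn (hwc : ContinuousOn w {z : ℂ | 0 ≤ z.im}) :
    ContinuousOn (FF f w n) {z : ℂ | 0 ≤ z.im} := by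
  apply ContinuousOn.div
  · exact (continuous_pow n).continuousOn.mul hwc
  · exact ((Fb_diff hf).continuous.continuousOn).mul
      (((Fb_diff hf).continuous.continuousOn).sub (hwc.mul hf.continuous.continuousOn))
  · exact fun z hz => denom_ne hδ hM1 hM2 hwb hz

include hf hM1 hM2 hδ hwb in
lemma FF_diffOn (hwh : DifferentiableOn ℂ w {z : ℂ | 0 < z.im}) :
    DifferentiableOn ℂ (FF f w n) {z : ℂ | 0 < z.im} := by
  apply DifferentiableOn.div
  · exact (differentiable_pow n).differentiableOn.mul hwh
  · exact ((Fb_diff hf).differentiableOn).mul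
      (((Fb_diff hf).differentiableOn).sub (hwh.mul hf.differentiableOn))
  · exact fun z hz => denom_ne hδ hM1 hM2 hwb (le_of_lt hz)

include hM2 hδ hwb in
lemma FF_decay
    (hM3 : ∀ m : ℕ, ∀ ε : ℝ, 0 < ε → ∃ R : ℝ, 0 < R ∧ ∀ z : ℂ, z.im ≤ 0 →
      R ≤ ‖z‖ → ‖z‖ ^ m ≤ ε * ‖f z‖) :
    ∃ R : ℝ, 1 ≤ R ∧ ∀ z : ℂ, 0 ≤ z.im → R ≤ ‖z‖ →
      ‖FF f w n z‖ ≤ (δ / (1 - δ)) / ‖z‖ ^ 2 := by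
  obtain ⟨R0, hR0, hR⟩ := hM3 (n + 2) 1 one_pos
  refine ⟨max R0 1, le_max_right _ _, fun z hz hzR => ?_⟩
  set a := ‖z‖ with ha
  have ha1 : (1 : ℝ) ≤ a := le_trans (le_max_right R0 1) hzR
  have ha0 : 0 < a := lt_of_lt_of_le one_pos ha1
  have hfb : a ^ (n + 2) ≤ ‖Fb f z‖ := by
    have := hR ((starRingEnd ℂ) z) (by simpa using neg_nonpos.mpr hz)
      (by simpa using le_trans (le_max_left R0 1) hzR)
    simpa [Fb, ha] using this
  have hfb0 : 0 < ‖Fb f z‖ :=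
    lt_of_lt_of_le (pow_pos ha0 _) hfb
  have hden : (1 - δ) * ‖Fb f z‖ ≤ ‖Fb f z - w z * f z‖ :=
    denom_lb hδ hM2 hwb hz
  have hδ1 : 0 < 1 - δ := by linarith [hδ.2]
  have hDpos : 0 < (1 - δ) * (a ^ (n + 2) * a ^ (n + 2)) := by positivity
  have key : ‖FF f w n z‖
      ≤ (a ^ n * δ) / ((1 - δ) * (a ^ (n + 2) * a ^ (n + 2))) := by
    rw [FF, norm_div, norm_mul, norm_mul, norm_pow]
    apply div_le_div₀ (mul_nonneg (by positivity) hδ.1.le)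
    · exact mul_le_mul_of_nonneg_left (hwb z hz) (by positivity)
    · exact hDpos
    · calc (1 - δ) * (a ^ (n + 2) * a ^ (n + 2))
          = a ^ (n + 2) * ((1 - δ) * a ^ (n + 2)) := by ring
        _ ≤ ‖Fb f z‖ * ((1 - δ) * ‖Fb f z‖) := by
            apply mul_le_mul hfb (mul_le_mul_of_nonneg_left hfb hδ1.le) (by positivity)
              hfb0.le
        _ ≤ ‖Fb f z‖ * ‖Fb f z - w z * f z‖ :=
            mul_le_mul_of_nonneg_left hden hfb0.le
  refine key.trans ?_
  rw [div_le_div_iff₀ hDpos (by positivity)]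
  have h1 : a ^ n * a ^ 2 ≤ a ^ (n + 2) * a ^ (n + 2) := by
    rw [← pow_add, ← pow_add]
    exact pow_le_pow_right₀ ha1 (by omega)
  have hδ0 := hδ.1
  calc a ^ n * δ * a ^ 2 = δ * (a ^ n * a ^ 2) := by ring
    _ ≤ δ * (a ^ (n + 2) * a ^ (n + 2)) := by
        exact mul_le_mul_of_nonneg_left h1 hδ0.le
    _ = δ / (1 - δ) * ((1 - δ) * (a ^ (n + 2) * a ^ (n + 2))) := by
        field_simp

lemma FF_integrable {C R : ℝ} (hC : 0 ≤ C) (hR1 : 1 ≤ R)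
    (hcont : ContinuousOn (FF f w n) {z : ℂ | 0 ≤ z.im})
    (hdecay : ∀ z : ℂ, 0 ≤ z.im → R ≤ ‖z‖ →
      ‖FF f w n z‖ ≤ C / ‖z‖ ^ 2) :
    Integrable (fun x : ℝ => FF f w n (x : ℂ)) := by
  have hg : Continuous (fun x : ℝ => FF f w n (x : ℂ)) :=
    hcont.comp_continuous Complex.continuous_ofReal
      (fun x => by simp [Set.mem_setOf_eq])
  obtain ⟨M, hM⟩ := (isCompact_Icc (a := -R) (b := R)).exists_bound_of_continuousOn
    hg.continuousOn
  have hM0 : 0 ≤ M := le_trans (norm_nonneg _) (hM 0 (by constructor <;> linarith))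
  set K := max (M * (1 + R ^ 2)) (2 * C) with hK
  have hK0 : 0 ≤ K := le_trans (by positivity) (le_max_left _ _)
  refine Integrable.mono' ((integrable_inv_one_add_sq).const_mul K)
    hg.aestronglyMeasurable (ae_of_all _ fun x => ?_)
  have hx2 : (0:ℝ) < 1 + x ^ 2 := by positivity
  rcases le_or_gt (|x|) R with hxR | hxR
  · have h1 : ‖FF f w n (x : ℂ)‖ ≤ M := hM x (abs_le.mp hxR)
    have h2 : 1 + x ^ 2 ≤ 1 + R ^ 2 := by nlinarith [_root_.sq_abs x, abs_nonneg x]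
    calc ‖FF f w n (x : ℂ)‖ ≤ M := h1
      _ = M * (1 + R ^ 2) / (1 + R ^ 2) := by field_simp
      _ ≤ M * (1 + R ^ 2) / (1 + x ^ 2) := by
          apply div_le_div_of_nonneg_left (by positivity) hx2 h2
      _ ≤ K * (1 + x ^ 2)⁻¹ := by
          rw [div_eq_mul_inv]
          exact mul_le_mul_of_nonneg_right (le_max_left _ _) (by positivity)
  · have habs : ‖(x : ℂ)‖ = |x| := by simp
    have h1 : ‖FF f w n (x : ℂ)‖ ≤ C / |x| ^ 2 := by
      simpa [habs] using hdecay (x : ℂ) (by simp) (by rw [habs]; linarith)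
    have hx1 : (1:ℝ) ≤ |x| := by linarith
    have h2 : 1 + x ^ 2 ≤ 2 * x ^ 2 := by nlinarith [_root_.sq_abs x]
    calc ‖FF f w n (x : ℂ)‖ ≤ C / |x| ^ 2 := h1
      _ = C / x ^ 2 := by rw [_root_.sq_abs]
      _ ≤ 2 * C / (1 + x ^ 2) := by
          rw [div_le_div_iff₀ (by nlinarith [_root_.sq_abs x]) hx2]
          nlinarith [_root_.sq_abs x]
      _ ≤ K * (1 + x ^ 2)⁻¹ := by
          rw [div_eq_mul_inv]
          exact mul_le_mul_of_nonneg_right (le_max_right _ _) (by positivity)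

lemma FF_tendsto_zero {C R0 : ℝ} (hC : 0 ≤ C) (hR0 : 1 ≤ R0)
    (hcont : ContinuousOn (FF f w n) {z : ℂ | 0 ≤ z.im})
    (hdiff : DifferentiableOn ℂ (FF f w n) {z : ℂ | 0 < z.im})
    (hdecay : ∀ z : ℂ, 0 ≤ z.im → R0 ≤ ‖z‖ →
      ‖FF f w n z‖ ≤ C / ‖z‖ ^ 2) :
    Tendsto (fun R : ℝ => ∫ x in (-R)..R, FF f w n (x : ℂ)) atTop (𝓝 0) := by
  refine squeeze_zero_norm' (a := fun R : ℝ => 4 * C / R) ?_ ?_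
  · filter_upwards [eventually_ge_atTop R0] with R hRR
    have hR1 : (1:ℝ) ≤ R := hR0.trans hRR
    have hRpos : (0:ℝ) < R := lt_of_lt_of_le one_pos hR1
    have hrect := Complex.integral_boundary_rect_eq_zero_of_differentiable_on_off_countable
      (FF f w n) (((-R : ℝ)) : ℂ) (((R : ℝ) : ℂ) + (R : ℝ) * I) ∅ countable_empty ?_ ?_
    rotate_left
    · -- continuity on closed rectangle
      apply hcont.mono
      intro p hp
      simp only [Set.mem_setOf_eq]
      have h2 := hp.2
      simp only [Complex.add_im, Complex.ofReal_im, Complex.mul_im, Complex.I_im,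
        Complex.ofReal_re, Complex.I_re, Complex.neg_im, mul_zero, mul_one, zero_add,
        Complex.ofReal_neg, neg_zero] at h2
      rw [Set.uIcc_of_le (by linarith)] at h2
      exact h2.1
    · -- differentiability on open rectangle
      intro p hp
      have h2 := hp.1.2
      simp only [Complex.add_im, Complex.ofReal_im, Complex.mul_im, Complex.I_im,
        Complex.ofReal_re, Complex.I_re, Complex.neg_im, mul_zero, mul_one, zero_add,
        Complex.ofReal_neg, neg_zero] at h2
      rw [min_eq_left (by linarith : (0:ℝ) ≤ R + 0)] at h2
      have hpim : 0 < p.im := h2.1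
      exact hdiff.differentiableAt ((isOpen_lt continuous_const Complex.continuous_im).mem_nhds
        (by exact hpim : p ∈ {z : ℂ | 0 < z.im}))
    · simp only [Complex.ofReal_neg, Complex.neg_re, Complex.ofReal_re, Complex.neg_im,
        Complex.ofReal_im, Complex.add_re, Complex.add_im, Complex.mul_re, Complex.mul_im,
        Complex.I_re, Complex.I_im, mul_zero, mul_one, zero_mul, sub_zero, add_zero,
        zero_add, neg_zero, Complex.ofReal_zero, zero_mul] at hrect
      have hpt : ∀ p : ℂ, 0 ≤ p.im → R ≤ ‖p‖ → ‖FF f w n p‖ ≤ C / R ^ 2 := by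
        intro p h1 h2
        refine (hdecay p h1 (hRR.trans h2)).trans ?_
        exact div_le_div_of_nonneg_left hC (by positivity)
          (pow_le_pow_left₀ hRpos.le h2 2)
      have hB : ‖∫ x : ℝ in (-R)..R, FF f w n (↑x + ↑R * Complex.I)‖ ≤ C / R ^ 2 * |R - (-R)| := by
        apply intervalIntegral.norm_integral_le_of_norm_le_const
        intro x hx
        apply hpt
        · simpa using hRpos.le
        · refine le_trans ?_ (Complex.abs_im_le_norm _)
          simp [_root_.abs_of_nonneg hRpos.le]
      have hSr : ‖∫ y : ℝ in (0:ℝ)..R, FF f w n (↑R + ↑y * Complex.I)‖ ≤ C / R ^ 2 * |R - 0| := by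
        apply intervalIntegral.norm_integral_le_of_norm_le_const
        intro y hy
        rw [Set.uIoc_of_le hRpos.le] at hy
        apply hpt
        · simp [hy.1.le]
        · refine le_trans ?_ (Complex.abs_re_le_norm _)
          simp [_root_.abs_of_nonneg hRpos.le]
      have hSl : ‖∫ y : ℝ in (0:ℝ)..R, FF f w n (-↑R + ↑y * Complex.I)‖ ≤ C / R ^ 2 * |R - 0| := by
        apply intervalIntegral.norm_integral_le_of_norm_le_const
        intro y hy
        rw [Set.uIoc_of_le hRpos.le] at hy
        apply hpt
        · simp [hy.1.le]
        · refine le_trans ?_ (Complex.abs_re_le_norm _)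
          simp [_root_.abs_of_nonneg hRpos.le]
      have hA : (∫ x : ℝ in (-R)..R, FF f w n ↑x)
          = (∫ x : ℝ in (-R)..R, FF f w n (↑x + ↑R * Complex.I))
            - Complex.I • (∫ y : ℝ in (0:ℝ)..R, FF f w n (↑R + ↑y * Complex.I))
            + Complex.I • (∫ y : ℝ in (0:ℝ)..R, FF f w n (-↑R + ↑y * Complex.I)) := by
        linear_combination hrect
      rw [hA]
      have hnorm : ∀ z : ℂ, ‖Complex.I • z‖ = ‖z‖ := by
        intro z; simp [norm_smul]
      calc ‖_ - _ + _‖ ≤ ‖_ - Complex.I • _‖ + ‖Complex.I • _‖ := norm_add_le _ _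
        _ ≤ ‖_‖ + ‖Complex.I • _‖ + ‖Complex.I • _‖ := by
            exact add_le_add (norm_sub_le _ _) le_rfl
        _ ≤ C / R ^ 2 * |R - (-R)| + C / R ^ 2 * |R - 0| + C / R ^ 2 * |R - 0| := by
            rw [hnorm, hnorm]
            exact add_le_add (add_le_add hB hSr) hSl
        _ ≤ 4 * C / R := by
            rw [sub_neg_eq_add, sub_zero]
            rw [_root_.abs_of_nonneg (by linarith : (0:ℝ) ≤ R + R),
              _root_.abs_of_nonneg hRpos.le]
            have : C / R ^ 2 * (R + R) + C / R ^ 2 * R + C / R ^ 2 * R = 4 * C / R := by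
              field_simp
              ring
            linarith [this]
  · exact Tendsto.div_atTop tendsto_const_nhds tendsto_id


end main

/-- Vanishing of the integrals `I_n` (equation (2.12)): for `f` entire satisfying (M1),
(M2), (M3), and `w` continuous on the closed upper half-plane, holomorphic on the open
upper half-plane, with `|w| ≤ δ < 1` there, the integrand
`x^n·w(x)/(f̄(x)·(f̄(x) - w(x)·f(x)))` (with `f̄(x) = conj (f x)` for real `x`) is
integrable on ℝ and its integral vanishes. -/
theorem I_n_eq_zero
    (f : ℂ → ℂ) (hf : Differentiable ℂ f)
    (hM1 : ∀ z : ℂ, z.im ≤ 0 → f z ≠ 0)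
    (hM2 : ∀ z : ℂ, 0 ≤ z.im →
      ‖f z‖ ≤ ‖(starRingEnd ℂ) (f ((starRingEnd ℂ) z))‖)
    (hM3 : ∀ m : ℕ, ∀ ε : ℝ, 0 < ε → ∃ R : ℝ, 0 < R ∧ ∀ z : ℂ, z.im ≤ 0 →
      R ≤ ‖z‖ → ‖z‖ ^ m ≤ ε * ‖f z‖)
    (δ : ℝ) (hδ : δ ∈ Set.Ioo (0 : ℝ) 1)
    (w : ℂ → ℂ)
    (hwc : ContinuousOn w {z : ℂ | 0 ≤ z.im})
    (hwh : DifferentiableOn ℂ w {z : ℂ | 0 < z.im})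
    (hwb : ∀ z : ℂ, 0 ≤ z.im → ‖w z‖ ≤ δ)
    (n : ℕ) :
    Integrable (fun x : ℝ => (x : ℂ) ^ n * w (x : ℂ) /
      ((starRingEnd ℂ) (f (x : ℂ)) *
        ((starRingEnd ℂ) (f (x : ℂ)) - w (x : ℂ) * f (x : ℂ)))) ∧
    ∫ x : ℝ, (x : ℂ) ^ n * w (x : ℂ) /
      ((starRingEnd ℂ) (f (x : ℂ)) *
        ((starRingEnd ℂ) (f (x : ℂ)) - w (x : ℂ) * f (x : ℂ))) = 0 := by
  obtain ⟨R0, hR01, hdecay⟩ := FF_decay (f := f) (w := w) (n := n) hM2 hδ hwb hM3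
  have hδ1 : (0:ℝ) < 1 - δ := by linarith [hδ.2]
  have hC : (0:ℝ) ≤ δ / (1 - δ) := div_nonneg hδ.1.le hδ1.le
  have hcont : ContinuousOn (FF f w n) {z : ℂ | 0 ≤ z.im} :=
    FF_contOn n hf hM1 hM2 hδ hwb hwc
  have hdiffOn : DifferentiableOn ℂ (FF f w n) {z : ℂ | 0 < z.im} :=
    FF_diffOn n hf hM1 hM2 hδ hwb hwh
  have heq : (fun x : ℝ => (x : ℂ) ^ n * w (x : ℂ) /
      ((starRingEnd ℂ) (f (x : ℂ)) *
        ((starRingEnd ℂ) (f (x : ℂ)) - w (x : ℂ) * f (x : ℂ))))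
      = fun x : ℝ => FF f w n (x : ℂ) := by
    funext x
    simp only [FF, Fb, Complex.conj_ofReal]
  have hint : Integrable (fun x : ℝ => FF f w n (x : ℂ)) :=
    FF_integrable n hC hR01 hcont hdecay
  have h1 := MeasureTheory.intervalIntegral_tendsto_integral hint
    tendsto_neg_atTop_atBot tendsto_id
  have h2 := FF_tendsto_zero n hC hR01 hcont hdiffOn hdecay
  rw [heq]
  exact ⟨hint, tendsto_nhds_unique h1 h2⟩
end

section
/- Let f be an entire function such that: (M1) f(z) ≠ 0 whenever Im z ≤ 0; (M3) for every m ∈ ℕ, z^m/f(z) → 0 as |z| → ∞ uniformly on {z : Im z ≤ 0}. Define, for z with Im z < 0, g(z) = −(f(z)/π)·∫_ℝ 1/(f(x)·conj(f(x))·(x − z)) dx. Then there exists an entire function G such that G(z) = g(z) for all z with Im z < 0. -/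
open Complex MeasureTheory Filter

lemma hasDerivAt_conj_conj {f : ℂ → ℂ} {z d : ℂ} (h : HasDerivAt f d ((starRingEnd ℂ) z)) :
    HasDerivAt (fun w => (starRingEnd ℂ) (f ((starRingEnd ℂ) w))) ((starRingEnd ℂ) d) z := by
  rw [hasDerivAt_iff_isLittleO] at h ⊢
  have hc : Filter.Tendsto (fun w : ℂ => (starRingEnd ℂ) w) (nhds z) (nhds ((starRingEnd ℂ) z)) :=
    (Complex.continuous_conj.tendsto z)
  have h2 := h.comp_tendsto hc
  rw [Asymptotics.isLittleO_iff] at h2 ⊢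
  intro c hc'
  filter_upwards [h2 hc'] with w hw
  simp only [Function.comp] at hw
  have e1 : (starRingEnd ℂ) (f ((starRingEnd ℂ) w)) - (starRingEnd ℂ) (f ((starRingEnd ℂ) z)) -
      (w - z) • (starRingEnd ℂ) d =
      (starRingEnd ℂ) (f ((starRingEnd ℂ) w) - f ((starRingEnd ℂ) z) -
        ((starRingEnd ℂ) w - (starRingEnd ℂ) z) • d) := by
    simp only [smul_eq_mul, map_sub, map_mul, Complex.conj_conj]
  calc ‖(starRingEnd ℂ) (f ((starRingEnd ℂ) w)) - (starRingEnd ℂ) (f ((starRingEnd ℂ) z)) -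
      (w - z) • (starRingEnd ℂ) d‖
      = ‖f ((starRingEnd ℂ) w) - f ((starRingEnd ℂ) z) - ((starRingEnd ℂ) w - (starRingEnd ℂ) z) • d‖ := by
        rw [e1]; exact RCLike.norm_conj _
    _ ≤ c * ‖(starRingEnd ℂ) w - (starRingEnd ℂ) z‖ := hw
    _ = c * ‖w - z‖ := by rw [← map_sub, RCLike.norm_conj]

noncomputable def Lint (f : ℂ → ℂ) (a z : ℂ) : ℂ :=
  ∫ s in (0:ℝ)..1, deriv f (a + (s:ℂ) * (z - a))

noncomputable def Lint' (f : ℂ → ℂ) (a z : ℂ) : ℂ :=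
  ∫ s in (0:ℝ)..1, (s:ℂ) * deriv (deriv f) (a + (s:ℂ) * (z - a))

lemma segment_norm_le {a z : ℂ} {r : ℝ} (ha : ‖a‖ ≤ r) (hz : ‖z‖ ≤ r) {s : ℝ}
    (h0 : 0 ≤ s) (h1 : s ≤ 1) : ‖a + (s:ℂ) * (z - a)‖ ≤ r := by
  have e : a + (s:ℂ) * (z - a) = Complex.ofReal (1 - s) * a + Complex.ofReal s * z := by
    push_cast; ring
  rw [e]
  have h1' : ‖Complex.ofReal (1 - s) * a‖ ≤ (1 - s) * r := by
    rw [norm_mul, Complex.norm_real, Real.norm_eq_abs, _root_.abs_of_nonneg (by linarith : (0:ℝ) ≤ 1 - s)]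
    exact mul_le_mul_of_nonneg_left ha (by linarith)
  have h2' : ‖Complex.ofReal s * z‖ ≤ s * r := by
    rw [norm_mul, Complex.norm_real, Real.norm_eq_abs, _root_.abs_of_nonneg h0]
    exact mul_le_mul_of_nonneg_left hz h0
  calc ‖Complex.ofReal (1 - s) * a + Complex.ofReal s * z‖
      ≤ ‖Complex.ofReal (1 - s) * a‖ + ‖Complex.ofReal s * z‖ := norm_add_le _ _
    _ ≤ (1 - s) * r + s * r := add_le_add h1' h2'
    _ = r := by ring

lemma inner_hasDerivAt (a z : ℂ) (s : ℝ) :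
    HasDerivAt (fun w : ℂ => a + w * (z - a)) (z - a) ((s:ℂ)) := by
  simpa using ((hasDerivAt_id ((s:ℂ))).mul_const (z - a)).const_add a

lemma Lint_eq {f : ℂ → ℂ} (hf : Differentiable ℂ f) (hf'c : Continuous (deriv f))
    {a z : ℂ} (h : z ≠ a) : Lint f a z = (f z - f a) / (z - a) := by
  have key : ∀ s ∈ Set.uIcc (0:ℝ) 1,
      HasDerivAt (fun s : ℝ => f (a + (s:ℂ) * (z - a)))
        ((z - a) * deriv f (a + (s:ℂ) * (z - a))) s := by
    intro s _
    have h1 : HasDerivAt (fun w : ℂ => f (a + w * (z - a)))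
        (deriv f (a + (s:ℂ) * (z - a)) * (z - a)) ((s:ℂ)) :=
      ((hf _).hasDerivAt).comp _ (inner_hasDerivAt a z s)
    have := h1.comp_ofReal
    simpa [mul_comm] using this
  have hint : IntervalIntegrable (fun s : ℝ => (z - a) * deriv f (a + (s:ℂ) * (z - a)))
      volume 0 1 := by
    apply Continuous.intervalIntegrable
    exact continuous_const.mul (hf'c.comp (by continuity))
  have := intervalIntegral.integral_eq_sub_of_hasDerivAt key hint
  have e0 : a + ((0:ℝ):ℂ) * (z - a) = a := by push_cast; ring
  have e1 : a + ((1:ℝ):ℂ) * (z - a) = z := by push_cast; ring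
  rw [e0, e1] at this
  rw [intervalIntegral.integral_const_mul] at this
  have hza : z - a ≠ 0 := sub_ne_zero.mpr h
  rw [Lint]
  field_simp at this ⊢
  exact this

lemma Lint_norm_le {f : ℂ → ℂ} {a z : ℂ} {r M : ℝ}
    (ha : ‖a‖ ≤ r) (hz : ‖z‖ ≤ r)
    (hM : ∀ w : ℂ, ‖w‖ ≤ r → ‖deriv f w‖ ≤ M) : ‖Lint f a z‖ ≤ M := by
  have := intervalIntegral.norm_integral_le_of_norm_le_const
    (C := M) (f := fun s : ℝ => deriv f (a + (s:ℂ) * (z - a))) (a := (0:ℝ)) (b := 1) ?_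
  · simpa [Lint] using this
  · intro s hs
    rw [Set.uIoc_of_le (by norm_num : (0:ℝ) ≤ 1)] at hs
    exact hM _ (segment_norm_le ha hz hs.1.le hs.2)

lemma Lint'_norm_le {f : ℂ → ℂ} {a z : ℂ} {r M : ℝ}
    (ha : ‖a‖ ≤ r) (hz : ‖z‖ ≤ r) 
    (hM : ∀ w : ℂ, ‖w‖ ≤ r → ‖deriv (deriv f) w‖ ≤ M) : ‖Lint' f a z‖ ≤ M := by
  have := intervalIntegral.norm_integral_le_of_norm_le_const
    (C := M) (f := fun s : ℝ => (s:ℂ) * deriv (deriv f) (a + (s:ℂ) * (z - a))) (a := (0:ℝ)) (b := 1) ?_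
  · simpa [Lint'] using this
  · intro s hs
    rw [Set.uIoc_of_le (by norm_num : (0:ℝ) ≤ 1)] at hs
    rw [norm_mul, Complex.norm_real]
    calc |s| * ‖deriv (deriv f) (a + (s:ℂ) * (z - a))‖
        ≤ 1 * M := by
          apply mul_le_mul (by rw [_root_.abs_of_nonneg hs.1.le]; exact hs.2)
            (hM _ (segment_norm_le ha hz hs.1.le hs.2)) (norm_nonneg _) zero_le_one
      _ = M := one_mul M

lemma Lint_hasDerivAt {f : ℂ → ℂ} (hf' : Differentiable ℂ (deriv f))
    (hf''c : Continuous (deriv (deriv f))) (a z₀ : ℂ) :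
    HasDerivAt (Lint f a) (Lint' f a z₀) z₀ := by
  obtain ⟨M, hM⟩ := (isCompact_closedBall (0:ℂ) (‖a‖ + (‖z₀‖ + 1))).exists_bound_of_continuousOn
    hf''c.continuousOn
  have main := intervalIntegral.hasDerivAt_integral_of_dominated_loc_of_deriv_le
    (F := fun z (s : ℝ) => deriv f (a + (s:ℂ) * (z - a)))
    (F' := fun z (s : ℝ) => (s:ℂ) * deriv (deriv f) (a + (s:ℂ) * (z - a)))
    (x₀ := z₀) (a := (0:ℝ)) (b := 1) (μ := volume) (bound := fun _ => max M 0)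
    (s := Metric.ball z₀ 1) (Metric.ball_mem_nhds z₀ one_pos)
    (Filter.Eventually.of_forall (fun z => Continuous.aestronglyMeasurable (by
      exact hf'.continuous.comp (by continuity))))
    (Continuous.intervalIntegrable (by
      exact hf'.continuous.comp (by continuity) :
      Continuous fun s : ℝ => deriv f (a + (s:ℂ) * (z₀ - a))) 0 1)
    (Continuous.aestronglyMeasurable (by
      exact (Complex.continuous_ofReal.mul (hf''c.comp (by continuity))) :
      Continuous fun s : ℝ => (s:ℂ) * deriv (deriv f) (a + (s:ℂ) * (z₀ - a))))
    ?_ (intervalIntegrable_const) ?_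
  · exact main.2
  · apply Filter.Eventually.of_forall
    intro s hs z hz
    rw [Set.uIoc_of_le (by norm_num : (0:ℝ) ≤ 1)] at hs
    rw [norm_mul, Complex.norm_real, Real.norm_eq_abs, _root_.abs_of_nonneg hs.1.le]
    have hpt : a + (s:ℂ) * (z - a) ∈ Metric.closedBall (0:ℂ) (‖a‖ + (‖z₀‖ + 1)) := by
      rw [Metric.mem_closedBall, dist_zero_right]
      have hna : ‖a‖ ≤ ‖a‖ + (‖z₀‖ + 1) := by linarith [norm_nonneg z₀]
      have hnz : ‖z‖ ≤ ‖a‖ + (‖z₀‖ + 1) := by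
        have hz1 : ‖z - z₀‖ ≤ 1 := (mem_ball_iff_norm.mp hz).le
        have : ‖z‖ ≤ ‖z₀‖ + 1 := by
          calc ‖z‖ = ‖z₀ + (z - z₀)‖ := by congr 1; ring
            _ ≤ ‖z₀‖ + ‖z - z₀‖ := norm_add_le _ _
            _ ≤ ‖z₀‖ + 1 := by linarith
        linarith [norm_nonneg a]
      exact segment_norm_le hna hnz hs.1.le hs.2
    calc s * ‖deriv (deriv f) (a + (s:ℂ) * (z - a))‖ ≤ 1 * M := by
          apply mul_le_mul hs.2 (hM _ hpt) (norm_nonneg _) zero_le_one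
      _ = M := one_mul M
      _ ≤ max M 0 := le_max_left M 0
  · apply Filter.Eventually.of_forall
    intro s hs z hz
    have h1 : HasDerivAt (fun z : ℂ => a + (s:ℂ) * (z - a)) ((s:ℂ)) z := by
      simpa using (((hasDerivAt_id z).sub_const a).const_mul ((s:ℂ))).const_add a
    have := ((hf' _).hasDerivAt).comp z h1
    simpa [mul_comm, Function.comp_def] using this

lemma Lint'_eq {f : ℂ → ℂ} (hf : Differentiable ℂ f) (hf' : Differentiable ℂ (deriv f))
    (hf''c : Continuous (deriv (deriv f))) {a z : ℂ} (h : z ≠ a) :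
    Lint' f a z = (deriv f z * (z - a) - (f z - f a)) / (z - a) ^ 2 := by
  have h1 := Lint_hasDerivAt hf' hf''c a z
  have h2 : HasDerivAt (fun w => (f w - f a) / (w - a))
      ((deriv f z * (z - a) - (f z - f a) * 1) / (z - a) ^ 2) z :=
    HasDerivAt.div ((hf z).hasDerivAt.sub_const (f a)) ((hasDerivAt_id z).sub_const a)
      (sub_ne_zero.mpr h)
  have heq : Lint f a =ᶠ[nhds z] fun w => (f w - f a) / (w - a) := by
    filter_upwards [eventually_ne_nhds h] with w hw
    exact Lint_eq hf hf'.continuous hw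
  have h3 : HasDerivAt (Lint f a)
      ((deriv f z * (z - a) - (f z - f a) * 1) / (z - a) ^ 2) z :=
    h2.congr_of_eventuallyEq heq
  have := h1.unique h3
  rw [this]; ring_nf

lemma cauchy_vanish {h : ℂ → ℂ} (hd : ∀ w : ℂ, 0 ≤ w.im → DifferentiableAt ℂ h w)
    (hint : Integrable (fun x : ℝ => h x) volume)
    {R₁ C : ℝ} (hC : 0 ≤ C) (hR₁ : 1 ≤ R₁)
    (hdecay : ∀ w : ℂ, 0 ≤ w.im → R₁ ≤ ‖w‖ → ‖h w‖ ≤ C / ‖w‖ ^ 3) :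
    ∫ x : ℝ, h ((x : ℂ)) = 0 := by
  have key : ∀ R : ℝ, R₁ ≤ R → ‖∫ x in (-R)..R, h ((x:ℂ))‖ ≤ 4 * C / R ^ 2 := by
    intro R hR
    have hR1 : (1:ℝ) ≤ R := le_trans hR₁ hR
    have hR0 : (0:ℝ) < R := lt_of_lt_of_le one_pos hR1
    have hRc : (0:ℝ) < R ^ 3 := by positivity
    have hdec : ∀ w : ℂ, 0 ≤ w.im → R ≤ ‖w‖ → ‖h w‖ ≤ C / R ^ 3 := by
      intro w hw hRw
      refine le_trans (hdecay w hw (le_trans hR hRw)) ?_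
      exact div_le_div_of_nonneg_left hC hRc (pow_le_pow_left₀ hR0.le hRw 3)
    set z₁ : ℂ := ((-R : ℝ) : ℂ) with hz₁
    set z₂ : ℂ := ((R : ℝ) : ℂ) + ((R : ℝ) : ℂ) * I with hz₂
    have hre1 : z₁.re = -R := by simp [hz₁]
    have him1 : z₁.im = 0 := by simp [hz₁]
    have hre2 : z₂.re = R := by simp [hz₂]
    have him2 : z₂.im = R := by simp [hz₂]
    have Hd : DifferentiableOn ℂ h
        (Set.uIcc z₁.re z₂.re ×ℂ Set.uIcc z₁.im z₂.im) := by
      intro p hp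
      rw [Complex.mem_reProdIm] at hp
      have hmem : p.im ∈ Set.uIcc z₁.im z₂.im := hp.2
      rw [him1, him2, Set.uIcc_of_le hR0.le] at hmem
      exact (hd p hmem.1).differentiableWithinAt
    have rect := Complex.integral_boundary_rect_eq_zero_of_differentiableOn h z₁ z₂ Hd
    rw [hre1, hre2, him1, him2] at rect
    simp only [Complex.ofReal_zero, zero_mul, add_zero] at rect
    have hbot : (∫ x in (-R)..R, h ((x:ℂ)))
        = (∫ x in (-R)..R, h ((x:ℂ) + (R:ℝ) * I))
          - I • (∫ y in (0:ℝ)..R, h ((R:ℝ) + (y:ℝ) * I))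
          + I • (∫ y in (0:ℝ)..R, h (((-R:ℝ):ℂ) + (y:ℝ) * I)) := by
      have h2 := rect
      push_cast at h2 ⊢
      linear_combination h2
    have btop : ‖∫ x in (-R)..R, h ((x:ℂ) + (R:ℝ) * I)‖ ≤ C / R ^ 3 * |R - (-R)| := by
      apply intervalIntegral.norm_integral_le_of_norm_le_const
      intro x hx
      have him : ((x:ℂ) + (R:ℝ) * I).im = R := by simp
      apply hdec
      · rw [him]; exact hR0.le
      · have habs : |((x:ℂ) + (R:ℝ) * I).im| ≤ ‖(x:ℂ) + (R:ℝ) * I‖ := Complex.abs_im_le_norm _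
        rwa [him, abs_of_pos hR0] at habs
    have bright : ‖∫ y in (0:ℝ)..R, h ((R:ℝ) + (y:ℝ) * I)‖ ≤ C / R ^ 3 * |R - 0| := by
      apply intervalIntegral.norm_integral_le_of_norm_le_const
      intro y hy
      rw [Set.uIoc_of_le hR0.le] at hy
      have hre : (((R:ℝ):ℂ) + (y:ℝ) * I).re = R := by simp
      apply hdec
      · simp [hy.1.le]
      · have habs : |(((R:ℝ):ℂ) + (y:ℝ) * I).re| ≤ ‖((R:ℝ):ℂ) + (y:ℝ) * I‖ :=
          Complex.abs_re_le_norm _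
        rwa [hre, abs_of_pos hR0] at habs
    have bleft : ‖∫ y in (0:ℝ)..R, h (((-R:ℝ):ℂ) + (y:ℝ) * I)‖ ≤ C / R ^ 3 * |R - 0| := by
      apply intervalIntegral.norm_integral_le_of_norm_le_const
      intro y hy
      rw [Set.uIoc_of_le hR0.le] at hy
      have hre : (((-R:ℝ):ℂ) + (y:ℝ) * I).re = -R := by simp
      apply hdec
      · simp [hy.1.le]
      · have habs : |(((-R:ℝ):ℂ) + (y:ℝ) * I).re| ≤ ‖((-R:ℝ):ℂ) + (y:ℝ) * I‖ :=
          Complex.abs_re_le_norm _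
        rw [hre, abs_neg, abs_of_pos hR0] at habs
        exact habs
    rw [hbot]
    have hnorm : ∀ v : ℂ, ‖I • v‖ = ‖v‖ := by
      intro v; rw [norm_smul, Complex.norm_I, one_mul]
    calc ‖(∫ x in (-R)..R, h ((x:ℂ) + (R:ℝ) * I))
          - I • (∫ y in (0:ℝ)..R, h ((R:ℝ) + (y:ℝ) * I))
          + I • (∫ y in (0:ℝ)..R, h (((-R:ℝ):ℂ) + (y:ℝ) * I))‖
        ≤ ‖(∫ x in (-R)..R, h ((x:ℂ) + (R:ℝ) * I))
          - I • (∫ y in (0:ℝ)..R, h ((R:ℝ) + (y:ℝ) * I))‖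
          + ‖I • (∫ y in (0:ℝ)..R, h (((-R:ℝ):ℂ) + (y:ℝ) * I))‖ := norm_add_le _ _
      _ ≤ ‖(∫ x in (-R)..R, h ((x:ℂ) + (R:ℝ) * I))‖
          + ‖I • (∫ y in (0:ℝ)..R, h ((R:ℝ) + (y:ℝ) * I))‖
          + ‖I • (∫ y in (0:ℝ)..R, h (((-R:ℝ):ℂ) + (y:ℝ) * I))‖ := by
            have := norm_sub_le (∫ x in (-R)..R, h ((x:ℂ) + (R:ℝ) * I))
              (I • (∫ y in (0:ℝ)..R, h ((R:ℝ) + (y:ℝ) * I)))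
            linarith
      _ ≤ C / R ^ 3 * |R - (-R)| + C / R ^ 3 * |R - 0| + C / R ^ 3 * |R - 0| := by
            rw [hnorm, hnorm]
            exact add_le_add (add_le_add btop bright) bleft
      _ ≤ 4 * C / R ^ 2 := by
            rw [abs_of_pos (by linarith : (0:ℝ) < R - (-R)), sub_zero, abs_of_pos hR0]
            rw [div_mul_eq_mul_div, div_mul_eq_mul_div, ← add_div, ← add_div]
            rw [div_le_div_iff₀ hRc (by positivity)]
            ring_nf
            nlinarith [hC, hR0, hR1]
  have t1 : Tendsto (fun R : ℝ => ∫ x in (-R)..R, h ((x:ℂ))) atTop (nhds (∫ x : ℝ, h ((x:ℂ)))) :=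
    intervalIntegral_tendsto_integral hint tendsto_neg_atTop_atBot tendsto_id
  have t2 : Tendsto (fun R : ℝ => ∫ x in (-R)..R, h ((x:ℂ))) atTop (nhds 0) := by
    apply squeeze_zero_norm'
    · filter_upwards [eventually_ge_atTop R₁] with R hR
      exact key R hR
    · have : Tendsto (fun R : ℝ => R ^ 2) atTop atTop := tendsto_pow_atTop (by norm_num)
      exact Tendsto.div_atTop tendsto_const_nhds this
  exact tendsto_nhds_unique t1 t2

lemma le_combined {A C₁ C₂ x r : ℝ} (hA : 1 ≤ A) (hC₁ : 0 ≤ C₁) (hC₂ : 0 ≤ C₂)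
    (h : (|x| ≤ A ∧ r ≤ C₁) ∨ (A ≤ |x| ∧ r ≤ C₂ / x ^ 2)) :
    r ≤ max (C₁ * (1 + A ^ 2)) (2 * C₂) / (1 + x ^ 2) := by
  have hx2 : (0:ℝ) < 1 + x ^ 2 := by positivity
  rcases h with ⟨hx, hr⟩ | ⟨hx, hr⟩
  · have h1 : C₁ ≤ C₁ * (1 + A ^ 2) / (1 + x ^ 2) := by
      rw [le_div_iff₀ hx2]
      have hxA : x ^ 2 ≤ A ^ 2 := by nlinarith [_root_.sq_abs x, abs_nonneg x]
      nlinarith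
    calc r ≤ C₁ := hr
      _ ≤ C₁ * (1 + A ^ 2) / (1 + x ^ 2) := h1
      _ ≤ _ := by gcongr; exact le_max_left _ _
  · have hx1 : (1:ℝ) ≤ x ^ 2 := by nlinarith [_root_.sq_abs x, abs_nonneg x]
    have h1 : C₂ / x ^ 2 ≤ 2 * C₂ / (1 + x ^ 2) := by
      rw [div_le_div_iff₀ (by nlinarith) hx2]
      nlinarith
    calc r ≤ C₂ / x ^ 2 := hr
      _ ≤ 2 * C₂ / (1 + x ^ 2) := h1
      _ ≤ _ := by gcongr; exact le_max_right _ _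

lemma my_integrable {u : ℝ → ℂ} (hm : AEStronglyMeasurable u volume) {A C₂ : ℝ} (hA : 1 ≤ A)
    (hnear : ∃ C₁, ∀ x : ℝ, |x| ≤ A → ‖u x‖ ≤ C₁)
    (hfar : ∀ x : ℝ, A ≤ |x| → ‖u x‖ ≤ C₂ / x ^ 2) : Integrable u := by
  obtain ⟨C₁, hC₁⟩ := hnear
  have hC₁0 : 0 ≤ C₁ := le_trans (norm_nonneg (u 0)) (hC₁ 0 (by simp; linarith))
  have hC₂0 : 0 ≤ C₂ := by
    by_contra hneg
    push_neg at hneg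
    have h1 := hfar A (by rw [abs_of_pos (by linarith)])
    have h2 : C₂ / A ^ 2 < 0 := div_neg_of_neg_of_pos hneg (by positivity)
    linarith [norm_nonneg (u A)]
  have hint : Integrable (fun x : ℝ => max (C₁ * (1 + A ^ 2)) (2 * C₂) / (1 + x ^ 2)) volume := by
    simpa [div_eq_mul_inv] using
      integrable_inv_one_add_sq.const_mul (max (C₁ * (1 + A ^ 2)) (2 * C₂))
  refine hint.mono' hm (Filter.Eventually.of_forall fun x => ?_)
  apply le_combined hA hC₁0 hC₂0
  rcases le_or_gt |x| A with hx | hx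
  · exact Or.inl ⟨hx, hC₁ x hx⟩
  · exact Or.inr ⟨hx.le, hfar x hx.le⟩

lemma div_bound_far {X P M₁ Mf n d : ℝ} (hX : 1 ≤ X) (hP : X ^ 2 ≤ P)
    (hM₁ : 0 ≤ M₁) (hMf : 0 ≤ Mf) (hn : n ≤ 2 * M₁ * X + Mf + P) (hn0 : 0 ≤ n)
    (hd : X ^ 2 / 4 * P ^ 2 ≤ d) :
    n / d ≤ 4 * (2 * M₁ + Mf + 1) / X ^ 2 := by
  have hP1 : (1:ℝ) ≤ P := le_trans (by nlinarith) hP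
  have hd0 : (0:ℝ) < X ^ 2 / 4 * P ^ 2 := by positivity
  rw [div_le_div_iff₀ (lt_of_lt_of_le hd0 hd) (by positivity)]
  have hX0 : (0:ℝ) < X := by linarith
  have hxp2 : X ≤ P ^ 2 := by nlinarith
  have hp2 : (1:ℝ) ≤ P ^ 2 := by nlinarith
  have hpp2 : P ≤ P ^ 2 := by nlinarith
  have t1 : 0 ≤ 2 * M₁ * (X ^ 2 * (P ^ 2 - X)) := by
    apply mul_nonneg (by linarith) (mul_nonneg (sq_nonneg X) (by linarith))
  have t2 : 0 ≤ Mf * (X ^ 2 * (P ^ 2 - 1)) := by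
    apply mul_nonneg hMf (mul_nonneg (sq_nonneg X) (by linarith))
  have t3 : 0 ≤ X ^ 2 * (P ^ 2 - P) := mul_nonneg (sq_nonneg X) (by linarith)
  have key : (2 * M₁ * X + Mf + P) * X ^ 2 ≤ 4 * (2 * M₁ + Mf + 1) * (X ^ 2 / 4 * P ^ 2) := by
    nlinarith [t1, t2, t3]
  calc n * X ^ 2 ≤ (2 * M₁ * X + Mf + P) * X ^ 2 := by nlinarith
    _ ≤ 4 * (2 * M₁ + Mf + 1) * (X ^ 2 / 4 * P ^ 2) := key
    _ ≤ 4 * (2 * M₁ + Mf + 1) * d := by nlinarith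

lemma div_bound_far2 {X P Mf n d : ℝ} (hX : 1 ≤ X) (hP : X ^ 2 ≤ P)
    (hMf : 0 ≤ Mf) (hn : n ≤ Mf + P) (hn0 : 0 ≤ n) (hd : X / 2 * P ^ 2 ≤ d) :
    n / d ≤ 2 * (Mf + 1) / X ^ 2 := by
  have hP1 : (1:ℝ) ≤ P := le_trans (by nlinarith) hP
  have hd0 : (0:ℝ) < X / 2 * P ^ 2 := by positivity
  rw [div_le_div_iff₀ (lt_of_lt_of_le hd0 hd) (by positivity)]
  have hX0 : (0:ℝ) < X := by linarith
  have hxp2 : X ≤ P ^ 2 := by nlinarith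
  have hXP : X ≤ P := by nlinarith
  have t1 : 0 ≤ Mf * (X * (P ^ 2 - X)) := by
    apply mul_nonneg hMf (mul_nonneg hX0.le (by linarith))
  have t2 : 0 ≤ X * P * (P - X) := by
    apply mul_nonneg (mul_nonneg hX0.le (by linarith)) (by linarith)
  have key : (Mf + P) * X ^ 2 ≤ 2 * (Mf + 1) * (X / 2 * P ^ 2) := by nlinarith [t1, t2]
  calc n * X ^ 2 ≤ (Mf + P) * X ^ 2 := by nlinarith
    _ ≤ 2 * (Mf + 1) * (X / 2 * P ^ 2) := key
    _ ≤ 2 * (Mf + 1) * d := by nlinarith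

lemma split_identity {fz a b c : ℂ} (ha : a ≠ 0) (hb : b ≠ 0) (hc : c ≠ 0) :
    (fz - a) / (-c) / (a * b) = -fz * (1 / (a * b * c)) + (b * c)⁻¹ := by
  field_simp
  ring

/-- Theorem 2(i) of the paper: for `f` entire satisfying (M1) and (M3), the function
`g(z) = -(f(z)/π)·∫_ℝ dx/(f(x)·conj(f(x))·(x - z))`, defined for `Im z < 0`, extends to
an entire function. -/
theorem g_extends_to_entire
    (f : ℂ → ℂ) (hf : Differentiable ℂ f)
    (hM1 : ∀ z : ℂ, z.im ≤ 0 → f z ≠ 0)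
    (hM3 : ∀ m : ℕ, ∀ ε : ℝ, 0 < ε → ∃ R : ℝ, 0 < R ∧ ∀ z : ℂ, z.im ≤ 0 →
      R ≤ ‖z‖ → ‖z‖ ^ m ≤ ε * ‖f z‖) :
    ∃ G : ℂ → ℂ, Differentiable ℂ G ∧ ∀ z : ℂ, z.im < 0 →
      G z = -(f z / (Real.pi : ℂ)) *
        ∫ x : ℝ, 1 / (f (x : ℂ) * (starRingEnd ℂ) (f (x : ℂ)) * ((x : ℂ) - z)) := by
  classical
  have hfc : Continuous f := hf.continuous
  have hfa : AnalyticOnNhd ℂ f Set.univ := analyticOnNhd_univ_iff_differentiable.mpr hf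
  have hf' : Differentiable ℂ (deriv f) := analyticOnNhd_univ_iff_differentiable.mp hfa.deriv
  have hf'a : AnalyticOnNhd ℂ (deriv f) Set.univ := hfa.deriv
  have hf'' : Differentiable ℂ (deriv (deriv f)) :=
    analyticOnNhd_univ_iff_differentiable.mp hf'a.deriv
  have hf'c : Continuous (deriv f) := hf'.continuous
  have hf''c : Continuous (deriv (deriv f)) := hf''.continuous
  -- the reflected function
  set fb : ℂ → ℂ := fun w => (starRingEnd ℂ) (f ((starRingEnd ℂ) w)) with hfbdef
  have hfb_diff : Differentiable ℂ fb :=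
    fun z => (hasDerivAt_conj_conj ((hf _).hasDerivAt)).differentiableAt
  have hfb_ne : ∀ w : ℂ, 0 ≤ w.im → fb w ≠ 0 := by
    intro w hw
    simp only [hfbdef, map_ne_zero]
    exact hM1 _ (by simp only [Complex.conj_im]; linarith)
  have hfb_real : ∀ x : ℝ, fb ((x:ℂ)) = (starRingEnd ℂ) (f ((x:ℂ))) := by
    intro x; simp only [hfbdef, Complex.conj_ofReal]
  have hfreal_ne : ∀ x : ℝ, f ((x:ℂ)) ≠ 0 := fun x => hM1 _ (by simp)
  -- growth
  obtain ⟨R₀, hR₀pos, hR₀⟩ := hM3 2 1 one_pos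
  have hgrow : ∀ w : ℂ, w.im ≤ 0 → R₀ ≤ ‖w‖ → ‖w‖ ^ 2 ≤ ‖f w‖ := by
    intro w h1 h2
    have := hR₀ w h1 (by exact h2)
    simpa using this
  have hgrowb : ∀ w : ℂ, 0 ≤ w.im → R₀ ≤ ‖w‖ → ‖w‖ ^ 2 ≤ ‖fb w‖ := by
    intro w h1 h2
    have him : ((starRingEnd ℂ) w).im ≤ 0 := by simp only [Complex.conj_im]; linarith
    have hnw : ‖(starRingEnd ℂ) w‖ = ‖w‖ := RCLike.norm_conj w
    have := hgrow _ him (by rwa [hnw])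
    calc ‖w‖ ^ 2 = ‖(starRingEnd ℂ) w‖ ^ 2 := by rw [hnw]
      _ ≤ ‖f ((starRingEnd ℂ) w)‖ := this
      _ = ‖fb w‖ := (RCLike.norm_conj _).symm
  have hfx_low : ∀ x : ℝ, max R₀ 1 ≤ |x| → x ^ 2 ≤ ‖f ((x:ℂ))‖ := by
    intro x hx
    have h1 : ‖(x:ℂ)‖ = |x| := by rw [Complex.norm_real, Real.norm_eq_abs]
    have := hgrow ((x:ℂ)) (by simp) (by rw [h1]; exact le_trans (le_max_left _ _) hx)
    rwa [h1, _root_.sq_abs] at this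
  -- the kernel denominators
  set D : ℝ → ℂ := fun x => f ((x:ℂ)) * (starRingEnd ℂ) (f ((x:ℂ))) with hDdef
  have hD_ne : ∀ x : ℝ, D x ≠ 0 := fun x =>
    mul_ne_zero (hfreal_ne x) ((map_ne_zero _).mpr (hfreal_ne x))
  have hD_cont : Continuous D :=
    (hfc.comp Complex.continuous_ofReal).mul
      (Complex.continuous_conj.comp (hfc.comp Complex.continuous_ofReal))
  have hD_norm : ∀ x : ℝ, ‖D x‖ = ‖f ((x:ℂ))‖ ^ 2 := by
    intro x; rw [hDdef]; simp only []
    rw [norm_mul, RCLike.norm_conj, sq]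
  -- a.e. avoidance of the diagonal
  have hae : ∀ z : ℂ, ∀ᵐ x : ℝ, z ≠ ((x:ℂ)) := by
    intro z
    rw [MeasureTheory.ae_iff]
    have hsub : {x : ℝ | ¬ z ≠ ((x:ℂ))} ⊆ {z.re} := by
      intro x hx
      simp only [Set.mem_setOf_eq, not_not] at hx
      simp only [Set.mem_singleton_iff]
      rw [hx]; simp
    exact measure_mono_null hsub (measure_singleton _)
  -- measurability of the kernels
  have hmeasD : Measurable (fun x : ℝ => (D x)⁻¹) := hD_cont.measurable.inv
  have hmeasF : ∀ z : ℂ, AEStronglyMeasurable (fun x : ℝ => Lint f ((x:ℂ)) z / D x) volume := by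
    intro z
    have hv : AEStronglyMeasurable
        (fun x : ℝ => ((f z - f ((x:ℂ))) / (z - ((x:ℂ)))) / D x) volume := by
      apply Measurable.aestronglyMeasurable
      simp only [div_eq_mul_inv]
      exact ((measurable_const.sub (hfc.comp Complex.continuous_ofReal).measurable).mul
        ((measurable_const.sub Complex.measurable_ofReal).inv)).mul hmeasD
    refine hv.congr ?_
    filter_upwards [hae z] with x hx
    rw [Lint_eq hf hf'c hx]
  have hmeasF' : ∀ z : ℂ, AEStronglyMeasurable (fun x : ℝ => Lint' f ((x:ℂ)) z / D x) volume := by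
    intro z
    have hv : AEStronglyMeasurable
        (fun x : ℝ => ((deriv f z * (z - ((x:ℂ))) - (f z - f ((x:ℂ)))) / (z - ((x:ℂ))) ^ 2)
          / D x) volume := by
      apply Measurable.aestronglyMeasurable
      simp only [div_eq_mul_inv]
      refine Measurable.mul (Measurable.mul ?_ ?_) hmeasD
      · exact (measurable_const.mul (measurable_const.sub Complex.measurable_ofReal)).sub
          (measurable_const.sub (hfc.comp Complex.continuous_ofReal).measurable)
      · exact ((measurable_const.sub Complex.measurable_ofReal).pow_const 2).inv
    refine hv.congr ?_
    filter_upwards [hae z] with x hx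
    rw [Lint'_eq hf hf' hf''c hx]
  -- integrability of the kernel
  have hintF : ∀ z : ℂ, Integrable (fun x : ℝ => Lint f ((x:ℂ)) z / D x) volume := by
    intro z
    set A := max (max R₀ 1) (2 * ‖z‖ + 2) with hAdef
    have hA1 : (1:ℝ) ≤ A := le_trans (le_max_right R₀ 1) (le_max_left _ _)
    set r := A + ‖z‖ with hrdef
    have hr0 : (0:ℝ) ≤ r := by have := norm_nonneg z; simp only [hrdef]; linarith
    obtain ⟨M₁, hM₁⟩ :=
      (isCompact_closedBall (0:ℂ) r).exists_bound_of_continuousOn hf'c.continuousOn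
    obtain ⟨Mf, hMf⟩ :=
      (isCompact_closedBall (0:ℂ) r).exists_bound_of_continuousOn hfc.continuousOn
    obtain ⟨C₁, hC₁⟩ := (isCompact_Icc (a := -A) (b := A)).exists_bound_of_continuousOn
      ((hD_cont.continuousOn).inv₀ (fun x _ => hD_ne x))
    have hMf0 : 0 ≤ Mf := le_trans (norm_nonneg (f 0))
      (hMf 0 (by rw [Metric.mem_closedBall, dist_zero_right, norm_zero]; exact hr0))
    apply my_integrable (hmeasF z) hA1 (C₂ := 2 * (Mf + 1))
    · refine ⟨M₁ * C₁, fun x hx => ?_⟩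
      have hmem : x ∈ Set.Icc (-A) A := by
        rw [Set.mem_Icc]
        constructor
        · linarith [neg_abs_le x]
        · linarith [le_abs_self x]
      have hb1 : ‖Lint f ((x:ℂ)) z‖ ≤ M₁ := by
        apply Lint_norm_le (r := r)
        · rw [Complex.norm_real, Real.norm_eq_abs]
          have := norm_nonneg z; simp only [hrdef]; linarith
        · have := hA1; simp only [hrdef]; linarith
        · intro w hw; exact hM₁ w (by rwa [Metric.mem_closedBall, dist_zero_right])
      have hb2 : ‖(D x)⁻¹‖ ≤ C₁ := hC₁ x hmem
      calc ‖Lint f ((x:ℂ)) z / D x‖ = ‖Lint f ((x:ℂ)) z‖ * ‖(D x)⁻¹‖ := by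
            rw [div_eq_mul_inv, norm_mul]
        _ ≤ M₁ * C₁ := mul_le_mul hb1 hb2 (norm_nonneg _) (le_trans (norm_nonneg _) hb1)
    · intro x hx
      have hX1 : (1:ℝ) ≤ |x| := le_trans hA1 hx
      have h4 : 2 * ‖z‖ + 2 ≤ |x| := le_trans (le_max_right _ _) hx
      have hzx : z ≠ ((x:ℂ)) := by
        intro h
        have hzz : ‖z‖ = |x| := by rw [h, Complex.norm_real, Real.norm_eq_abs]
        rw [← hzz] at h4; linarith [norm_nonneg z]
      have hP : x ^ 2 ≤ ‖f ((x:ℂ))‖ := hfx_low x (le_trans (le_max_left _ _) hx)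
      have hdist : |x| / 2 ≤ ‖z - ((x:ℂ))‖ := by
        have h1 : ‖(x:ℂ)‖ - ‖z‖ ≤ ‖(x:ℂ) - z‖ := norm_sub_norm_le _ _
        have h2 : ‖(x:ℂ) - z‖ = ‖z - (x:ℂ)‖ := norm_sub_rev _ _
        have h3 : ‖(x:ℂ)‖ = |x| := by rw [Complex.norm_real, Real.norm_eq_abs]
        rw [h3, h2] at h1; linarith
      rw [Lint_eq hf hf'c hzx, div_div, norm_div, norm_mul]
      have hnum : ‖f z - f ((x:ℂ))‖ ≤ Mf + ‖f ((x:ℂ))‖ := by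
        have hfz : ‖f z‖ ≤ Mf := hMf z (by
          rw [Metric.mem_closedBall, dist_zero_right]
          have := hA1; simp only [hrdef]; linarith)
        calc ‖f z - f ((x:ℂ))‖ ≤ ‖f z‖ + ‖f ((x:ℂ))‖ := norm_sub_le _ _
          _ ≤ Mf + ‖f ((x:ℂ))‖ := by linarith
      have hden : |x| / 2 * ‖f ((x:ℂ))‖ ^ 2 ≤ ‖z - ((x:ℂ))‖ * ‖D x‖ := by
        rw [hD_norm x]
        apply mul_le_mul hdist le_rfl (by positivity) (norm_nonneg _)
      have hfin := div_bound_far2 (X := |x|) hX1 (by rwa [_root_.sq_abs]) hMf0 hnum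
        (norm_nonneg _) hden
      rwa [_root_.sq_abs] at hfin
  -- derivative of the integral
  have hdiff : ∀ z₀ : ℂ, HasDerivAt (fun z => ∫ x : ℝ, Lint f ((x:ℂ)) z / D x)
      (∫ x : ℝ, Lint' f ((x:ℂ)) z₀ / D x) z₀ := by
    intro z₀
    set A := max (max R₀ 1) (2 * (‖z₀‖ + 1)) with hAdef
    have hA1 : (1:ℝ) ≤ A := le_trans (le_max_right R₀ 1) (le_max_left _ _)
    set r := A + (‖z₀‖ + 1) with hrdef
    have hr0 : (0:ℝ) ≤ r := by have := norm_nonneg z₀; simp only [hrdef]; linarith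
    obtain ⟨M₁, hM₁⟩ :=
      (isCompact_closedBall (0:ℂ) r).exists_bound_of_continuousOn hf'c.continuousOn
    obtain ⟨M₂, hM₂⟩ :=
      (isCompact_closedBall (0:ℂ) r).exists_bound_of_continuousOn hf''c.continuousOn
    obtain ⟨Mf, hMf⟩ :=
      (isCompact_closedBall (0:ℂ) r).exists_bound_of_continuousOn hfc.continuousOn
    obtain ⟨C₁, hC₁⟩ := (isCompact_Icc (a := -A) (b := A)).exists_bound_of_continuousOn
      ((hD_cont.continuousOn).inv₀ (fun x _ => hD_ne x))
    have hmem0 : (0:ℂ) ∈ Metric.closedBall (0:ℂ) r := by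
      rw [Metric.mem_closedBall, dist_zero_right, norm_zero]; exact hr0
    have hM₁0 : 0 ≤ M₁ := le_trans (norm_nonneg (deriv f 0)) (hM₁ 0 hmem0)
    have hM₂0 : 0 ≤ M₂ := le_trans (norm_nonneg (deriv (deriv f) 0)) (hM₂ 0 hmem0)
    have hMf0 : 0 ≤ Mf := le_trans (norm_nonneg (f 0)) (hMf 0 hmem0)
    have hC₁0 : 0 ≤ C₁ := le_trans (norm_nonneg ((D 0)⁻¹))
      (hC₁ 0 (by rw [Set.mem_Icc]; constructor <;> linarith))
    have hball_in : ∀ z ∈ Metric.ball z₀ 1, ‖z‖ ≤ ‖z₀‖ + 1 := by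
      intro z hz
      have h1 : ‖z - z₀‖ < 1 := mem_ball_iff_norm.mp hz
      calc ‖z‖ = ‖z₀ + (z - z₀)‖ := by congr 1; ring
        _ ≤ ‖z₀‖ + ‖z - z₀‖ := norm_add_le _ _
        _ ≤ ‖z₀‖ + 1 := by linarith
    have key := hasDerivAt_integral_of_dominated_loc_of_deriv_le (μ := volume)
      (F := fun z (x : ℝ) => Lint f ((x:ℂ)) z / D x)
      (F' := fun z (x : ℝ) => Lint' f ((x:ℂ)) z / D x)
      (bound := fun x : ℝ =>
        max ((M₂ * C₁) * (1 + A ^ 2)) (2 * (4 * (2 * M₁ + Mf + 1))) / (1 + x ^ 2))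
      (s := Metric.ball z₀ 1) (Metric.ball_mem_nhds z₀ one_pos)
      (Filter.Eventually.of_forall (fun z => hmeasF z)) (hintF z₀) (hmeasF' z₀)
      ?_ ?_ ?_
    · exact key.2
    · -- the bound
      apply Filter.Eventually.of_forall
      intro x z hz
      have hznorm : ‖z‖ ≤ ‖z₀‖ + 1 := hball_in z hz
      apply le_combined hA1 (mul_nonneg hM₂0 hC₁0) (by positivity)
      rcases le_or_gt |x| A with hxA | hxA
      · refine Or.inl ⟨hxA, ?_⟩
        have hmem : x ∈ Set.Icc (-A) A := by
          rw [Set.mem_Icc]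
          constructor
          · linarith [neg_abs_le x]
          · linarith [le_abs_self x]
        have hb1 : ‖Lint' f ((x:ℂ)) z‖ ≤ M₂ := by
          apply Lint'_norm_le (r := r)
          · rw [Complex.norm_real, Real.norm_eq_abs]
            have := norm_nonneg z₀; simp only [hrdef]; linarith
          · simp only [hrdef]; linarith
          · intro w hw; exact hM₂ w (by rwa [Metric.mem_closedBall, dist_zero_right])
        calc ‖Lint' f ((x:ℂ)) z / D x‖ = ‖Lint' f ((x:ℂ)) z‖ * ‖(D x)⁻¹‖ := by
              rw [div_eq_mul_inv, norm_mul]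
          _ ≤ M₂ * C₁ := mul_le_mul hb1 (hC₁ x hmem) (norm_nonneg _)
              (le_trans (norm_nonneg _) hb1)
      · refine Or.inr ⟨hxA.le, ?_⟩
        show ‖Lint' f ((x:ℂ)) z / D x‖ ≤ 4 * (2 * M₁ + Mf + 1) / x ^ 2
        have hX1 : (1:ℝ) ≤ |x| := le_trans hA1 hxA.le
        have h4 : 2 * (‖z₀‖ + 1) ≤ |x| := le_trans (le_max_right _ _) hxA.le
        have hzle : ‖z‖ ≤ |x| / 2 := by linarith
        have hzx : z ≠ ((x:ℂ)) := by
          intro h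
          have hzz : ‖z‖ = |x| := by rw [h, Complex.norm_real, Real.norm_eq_abs]
          rw [hzz] at hzle; linarith
        have hP : x ^ 2 ≤ ‖f ((x:ℂ))‖ := hfx_low x (le_trans (le_max_left _ _) hxA.le)
        have hdist : |x| / 2 ≤ ‖z - ((x:ℂ))‖ := by
          have h1 : ‖(x:ℂ)‖ - ‖z‖ ≤ ‖(x:ℂ) - z‖ := norm_sub_norm_le _ _
          have h2 : ‖(x:ℂ) - z‖ = ‖z - (x:ℂ)‖ := norm_sub_rev _ _
          have h3 : ‖(x:ℂ)‖ = |x| := by rw [Complex.norm_real, Real.norm_eq_abs]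
          rw [h3, h2] at h1; linarith
        have hdist2 : ‖z - ((x:ℂ))‖ ≤ 2 * |x| := by
          have h3 : ‖(x:ℂ)‖ = |x| := by rw [Complex.norm_real, Real.norm_eq_abs]
          calc ‖z - ((x:ℂ))‖ ≤ ‖z‖ + ‖(x:ℂ)‖ := norm_sub_le _ _
            _ ≤ |x| / 2 + |x| := by rw [h3]; linarith
            _ ≤ 2 * |x| := by linarith
        rw [Lint'_eq hf hf' hf''c hzx, div_div, norm_div, norm_mul, norm_pow]
        have hfz : ‖f z‖ ≤ Mf := hMf z (by
          rw [Metric.mem_closedBall, dist_zero_right]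
          simp only [hrdef]; linarith)
        have hfz' : ‖deriv f z‖ ≤ M₁ := hM₁ z (by
          rw [Metric.mem_closedBall, dist_zero_right]
          simp only [hrdef]; linarith)
        have hnum : ‖deriv f z * (z - ((x:ℂ))) - (f z - f ((x:ℂ)))‖ ≤
            2 * M₁ * |x| + Mf + ‖f ((x:ℂ))‖ := by
          calc ‖deriv f z * (z - ((x:ℂ))) - (f z - f ((x:ℂ)))‖
              ≤ ‖deriv f z * (z - ((x:ℂ)))‖ + ‖f z - f ((x:ℂ))‖ := norm_sub_le _ _
            _ ≤ ‖deriv f z‖ * ‖z - ((x:ℂ))‖ + (‖f z‖ + ‖f ((x:ℂ))‖) := by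
                rw [norm_mul]
                exact add_le_add le_rfl (norm_sub_le _ _)
            _ ≤ M₁ * (2 * |x|) + (Mf + ‖f ((x:ℂ))‖) := by
                apply add_le_add
                · exact mul_le_mul hfz' hdist2 (norm_nonneg _) hM₁0
                · linarith
            _ = 2 * M₁ * |x| + Mf + ‖f ((x:ℂ))‖ := by ring
        have hden : |x| ^ 2 / 4 * ‖f ((x:ℂ))‖ ^ 2 ≤ ‖z - ((x:ℂ))‖ ^ 2 * ‖D x‖ := by
          rw [hD_norm x]
          apply mul_le_mul _ le_rfl (by positivity) (by positivity)
          have : (|x| / 2) ^ 2 ≤ ‖z - ((x:ℂ))‖ ^ 2 :=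
            pow_le_pow_left₀ (by positivity) hdist 2
          calc |x| ^ 2 / 4 = (|x| / 2) ^ 2 := by ring
            _ ≤ ‖z - ((x:ℂ))‖ ^ 2 := this
        have hfin := div_bound_far (X := |x|) hX1 (by rwa [_root_.sq_abs]) hM₁0 hMf0 hnum
          (norm_nonneg _) hden
        rwa [_root_.sq_abs] at hfin
    · -- bound integrable
      simpa [div_eq_mul_inv] using integrable_inv_one_add_sq.const_mul
        (max ((M₂ * C₁) * (1 + A ^ 2)) (2 * (4 * (2 * M₁ + Mf + 1))))
    · -- differentiability in z
      apply Filter.Eventually.of_forall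
      intro x z _
      exact (Lint_hasDerivAt hf' hf''c ((x:ℂ)) z).div_const (D x)
  refine ⟨fun z => ((Real.pi : ℝ) : ℂ)⁻¹ * ∫ x : ℝ, Lint f ((x:ℂ)) z / D x, ?_, ?_⟩
  · intro z₀
    exact ((hdiff z₀).differentiableAt.const_mul _)
  · intro z hz
    have hxz_ne : ∀ x : ℝ, ((x:ℂ)) - z ≠ 0 := by
      intro x h
      have him : (((x:ℂ)) - z).im = 0 := by rw [h]; simp
      simp only [Complex.sub_im, Complex.ofReal_im, zero_sub] at him
      linarith
    have hzx' : ∀ x : ℝ, z ≠ ((x:ℂ)) := by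
      intro x h
      exact hxz_ne x (by rw [h, sub_self])
    set u : ℝ → ℂ := fun x => 1 / (f ((x:ℂ)) * (starRingEnd ℂ) (f ((x:ℂ))) * (((x:ℂ)) - z))
      with hudef
    set v : ℝ → ℂ := fun x => (fb ((x:ℂ)) * (((x:ℂ)) - z))⁻¹ with hvdef
    have huD : u = fun x => (D x * (((x:ℂ)) - z))⁻¹ := by
      funext x; rw [hudef]; simp only [hDdef, one_div]
    have hu_cont : Continuous u := by
      rw [huD]
      exact (hD_cont.mul (Complex.continuous_ofReal.sub continuous_const)).inv₀
        (fun x => mul_ne_zero (hD_ne x) (hxz_ne x))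
    have hv_cont : Continuous v := by
      rw [hvdef]
      exact ((hfb_diff.continuous.comp Complex.continuous_ofReal).mul
        (Complex.continuous_ofReal.sub continuous_const)).inv₀
        (fun x => mul_ne_zero (hfb_ne _ (by simp)) (hxz_ne x))
    set A := max (max R₀ 1) (2 * ‖z‖ + 2) with hAdef
    have hA1 : (1:ℝ) ≤ A := le_trans (le_max_right R₀ 1) (le_max_left _ _)
    have hmemIcc : ∀ x : ℝ, |x| ≤ A → x ∈ Set.Icc (-A) A := by
      intro x hx
      rw [Set.mem_Icc]
      constructor
      · linarith [neg_abs_le x]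
      · linarith [le_abs_self x]
    have hfarfacts : ∀ x : ℝ, A ≤ |x| →
        (1 ≤ |x| ∧ x ^ 2 ≤ ‖f ((x:ℂ))‖ ∧ |x| / 2 ≤ ‖((x:ℂ)) - z‖) := by
      intro x hx
      have hX1 : (1:ℝ) ≤ |x| := le_trans hA1 hx
      have hP : x ^ 2 ≤ ‖f ((x:ℂ))‖ := hfx_low x (le_trans (le_max_left _ _) hx)
      have h4 : 2 * ‖z‖ + 2 ≤ |x| := le_trans (le_max_right _ _) hx
      have h1 : ‖(x:ℂ)‖ - ‖z‖ ≤ ‖(x:ℂ) - z‖ := norm_sub_norm_le _ _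
      have h3 : ‖(x:ℂ)‖ = |x| := by rw [Complex.norm_real, Real.norm_eq_abs]
      rw [h3] at h1
      exact ⟨hX1, hP, by linarith⟩
    have hu_int : Integrable u volume := by
      obtain ⟨Cu, hCu⟩ :=
        (isCompact_Icc (a := -A) (b := A)).exists_bound_of_continuousOn hu_cont.continuousOn
      apply my_integrable hu_cont.aestronglyMeasurable hA1 (C₂ := 2 * (0 + 1))
      · exact ⟨Cu, fun x hx => hCu x (hmemIcc x hx)⟩
      · intro x hx
        obtain ⟨hX1, hP, hdist⟩ := hfarfacts x hx
        have hnorm : ‖u x‖ = 1 / (‖D x‖ * ‖((x:ℂ)) - z‖) := by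
          rw [huD]
          simp only [norm_inv, norm_mul, one_div]
        rw [hnorm, one_div]
        have hd : |x| / 2 * ‖f ((x:ℂ))‖ ^ 2 ≤ ‖D x‖ * ‖((x:ℂ)) - z‖ := by
          rw [hD_norm x, mul_comm (‖f ((x:ℂ))‖ ^ 2)]
          exact mul_le_mul hdist le_rfl (by positivity) (norm_nonneg _)
        have := div_bound_far2 (X := |x|) (Mf := 0) hX1 (by rwa [_root_.sq_abs])
          le_rfl (by nlinarith [hP, hX1, _root_.sq_abs x, abs_nonneg x]) zero_le_one hd
        rw [_root_.sq_abs] at this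
        rw [inv_eq_one_div]
        exact this
    have hv_int : Integrable v volume := by
      obtain ⟨Cv, hCv⟩ :=
        (isCompact_Icc (a := -A) (b := A)).exists_bound_of_continuousOn hv_cont.continuousOn
      apply my_integrable hv_cont.aestronglyMeasurable hA1 (C₂ := 2)
      · exact ⟨Cv, fun x hx => hCv x (hmemIcc x hx)⟩
      · intro x hx
        obtain ⟨hX1, hP, hdist⟩ := hfarfacts x hx
        have hx0 : x ≠ 0 := by intro h; rw [h, abs_zero] at hX1; linarith
        have hfbn : ‖fb ((x:ℂ))‖ = ‖f ((x:ℂ))‖ := by rw [hfb_real x, RCLike.norm_conj]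
        have h1 : x ^ 2 * (|x| / 2) ≤ ‖fb ((x:ℂ))‖ * ‖((x:ℂ)) - z‖ := by
          rw [hfbn]
          exact mul_le_mul hP hdist (by positivity) (norm_nonneg _)
        calc ‖v x‖ = (‖fb ((x:ℂ))‖ * ‖((x:ℂ)) - z‖)⁻¹ := by rw [hvdef, norm_inv, norm_mul]
          _ ≤ (x ^ 2 * (|x| / 2))⁻¹ := by
              apply inv_anti₀ (by positivity) h1
          _ = 2 / (x ^ 2 * |x|) := by field_simp
          _ ≤ 2 / x ^ 2 := by
              apply div_le_div_of_nonneg_left (by norm_num) (by positivity)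
              nlinarith
    have hvan : (∫ x : ℝ, v x) = 0 := by
      have := cauchy_vanish (h := fun w => (fb w * (w - z))⁻¹)
        (R₁ := max (max R₀ 1) (2 * ‖z‖ + 2)) (C := 2)
        ?_ ?_ (by norm_num) (le_trans (le_max_right R₀ 1) (le_max_left _ _)) ?_
      · exact this
      · intro w hw
        have hne1 : fb w ≠ 0 := hfb_ne w hw
        have hne2 : w - z ≠ 0 := by
          intro h
          have him : (w - z).im = 0 := by rw [h]; simp
          simp only [Complex.sub_im] at him
          linarith
        exact ((hfb_diff w).mul ((differentiable_id.sub_const z) w)).inv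
          (mul_ne_zero hne1 hne2)
      · exact hv_int
      · intro w hw hRw
        have h1 : ‖w‖ ^ 2 ≤ ‖fb w‖ :=
          hgrowb w hw (le_trans (le_trans (le_max_left R₀ 1) (le_max_left _ _)) hRw)
        have h4 : 2 * ‖z‖ + 2 ≤ ‖w‖ := le_trans (le_max_right _ _) hRw
        have h2 : ‖w‖ / 2 ≤ ‖w - z‖ := by
          have := norm_sub_norm_le w z
          linarith
        have hw1 : (1:ℝ) ≤ ‖w‖ := le_trans (le_trans (le_max_right R₀ 1) (le_max_left _ _)) hRw
        calc ‖(fb w * (w - z))⁻¹‖ = (‖fb w‖ * ‖w - z‖)⁻¹ := by rw [norm_inv, norm_mul]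
          _ ≤ (‖w‖ ^ 2 * (‖w‖ / 2))⁻¹ := by
              apply inv_anti₀ (by positivity)
              exact mul_le_mul h1 h2 (by positivity) (norm_nonneg _)
          _ = 2 / ‖w‖ ^ 3 := by
              have : ‖w‖ ≠ 0 := by positivity
              field_simp
    have hsplit : (fun x : ℝ => Lint f ((x:ℂ)) z / D x)
        = fun x : ℝ => -(f z) * u x + v x := by
      funext x
      rw [Lint_eq hf hf'c (hzx' x)]
      have h1 := hfreal_ne x
      have h2 : (starRingEnd ℂ) (f ((x:ℂ))) ≠ 0 := (map_ne_zero _).mpr h1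
      have h3 := hxz_ne x
      have hneg : z - ((x:ℂ)) = -((((x:ℂ)) - z)) := by ring
      rw [hneg]
      rw [hudef, hvdef, hDdef]
      simp only [hfb_real x]
      exact split_identity h1 h2 h3
    have hπ : ((Real.pi : ℝ) : ℂ) ≠ 0 := Complex.ofReal_ne_zero.mpr Real.pi_ne_zero
    show ((Real.pi : ℝ) : ℂ)⁻¹ * (∫ x : ℝ, Lint f ((x:ℂ)) z / D x) = -(f z / (Real.pi : ℂ)) * ∫ x : ℝ, u x
    rw [hsplit]
    rw [integral_add (hu_int.const_mul _) hv_int]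
    rw [hvan, add_zero]
    rw [integral_const_mul]
    field_simp
end

section
/- Let f be an entire function satisfying: (M1) f(z) ≠ 0 whenever Im z ≤ 0; (M2) |f(z)| ≤ |f̄(z)| whenever Im z ≥ 0, where f̄(z) := conj(f(conj z)); (M3) for every m ∈ ℕ, z^m/f(z) → 0 as |z| → ∞ uniformly on {z : Im z ≤ 0}. Let δ ∈ (0,1) and let w be continuous on {Im z ≥ 0}, holomorphic on the open upper half-plane, with |w(z)| ≤ δ for all Im z ≥ 0. Then for every z with Im z > 0: (1/π)·∫_ℝ w(x)/(f̄(x)·(f̄(x) − w(x)·f(x))·(x − z)) dx = 2i·w(z)/(f̄(z)·(f̄(z) − w(z)·f(z))). -/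
open Complex MeasureTheory

-- Lemma A: conjugate-reflection of an entire function is entire
theorem diffBar {f : ℂ → ℂ} (hf : Differentiable ℂ f) :
    Differentiable ℂ (fun z => (starRingEnd ℂ) (f ((starRingEnd ℂ) z))) := by
  intro z
  have H := (hf ((starRingEnd ℂ) z)).hasDerivAt
  rw [hasDerivAt_iff_isLittleO, Asymptotics.isLittleO_iff] at H
  refine HasDerivAt.differentiableAt (f' := (starRingEnd ℂ) (deriv f ((starRingEnd ℂ) z))) ?_
  rw [hasDerivAt_iff_isLittleO, Asymptotics.isLittleO_iff]
  intro c hc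
  have hcont : Filter.Tendsto (fun x : ℂ => (starRingEnd ℂ) x) (nhds z) (nhds ((starRingEnd ℂ) z)) :=
    (Complex.continuous_conj.tendsto z)
  filter_upwards [hcont.eventually (H hc)] with x hx
  have key : (starRingEnd ℂ) (f ((starRingEnd ℂ) x)) - (starRingEnd ℂ) (f ((starRingEnd ℂ) z))
      - (x - z) • (starRingEnd ℂ) (deriv f ((starRingEnd ℂ) z))
      = (starRingEnd ℂ) (f ((starRingEnd ℂ) x) - f ((starRingEnd ℂ) z)
        - ((starRingEnd ℂ) x - (starRingEnd ℂ) z) • deriv f ((starRingEnd ℂ) z)) := by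
    simp only [smul_eq_mul, map_sub, map_mul, Complex.conj_conj]
  rw [key]
  have : ‖(starRingEnd ℂ) x - (starRingEnd ℂ) z‖ = ‖x - z‖ := by
    rw [← map_sub]; exact RCLike.norm_conj _
  rw [RCLike.norm_conj]
  calc ‖f ((starRingEnd ℂ) x) - f ((starRingEnd ℂ) z)
      - ((starRingEnd ℂ) x - (starRingEnd ℂ) z) • deriv f ((starRingEnd ℂ) z)‖
      ≤ c * ‖(starRingEnd ℂ) x - (starRingEnd ℂ) z‖ := hx
    _ = c * ‖x - z‖ := by rw [this]

theorem logSubPos {u : ℂ} (h : 0 < u.im) : Complex.log u - Complex.log (-u) = Real.pi * I := by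
  have h1 : Complex.log u = Real.log (‖u‖) + Complex.arg u * I := rfl
  have h2 : Complex.log (-u) = Real.log (‖-u‖) + Complex.arg (-u) * I := rfl
  rw [h1, h2, norm_neg, Complex.arg_neg_eq_arg_sub_pi_of_im_pos h]
  push_cast; ring

theorem logSubNeg {u : ℂ} (h : u.im < 0) : Complex.log (-u) - Complex.log u = Real.pi * I := by
  have h1 : Complex.log u = Real.log (‖u‖) + Complex.arg u * I := rfl
  have h2 : Complex.log (-u) = Real.log (‖-u‖) + Complex.arg (-u) * I := rfl
  rw [h1, h2, norm_neg, Complex.arg_neg_eq_arg_add_pi_of_im_neg h]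
  push_cast; ring

theorem rectInv (z : ℂ) (T : ℝ) (hre : |z.re| < T) (him : 0 < z.im) (himT : z.im < T) :
    (∫ x : ℝ in (-T)..T, ((x : ℂ) - z)⁻¹) - (∫ x : ℝ in (-T)..T, ((x : ℂ) + T * I - z)⁻¹)
      + I • (∫ y : ℝ in (0:ℝ)..T, ((T : ℂ) + y * I - z)⁻¹)
      - I • (∫ y : ℝ in (0:ℝ)..T, (-(T : ℂ) + y * I - z)⁻¹) = 2 * Real.pi * I := by
  have hreT : z.re < T := (abs_lt.1 hre).2
  have hreT' : -T < z.re := (abs_lt.1 hre).1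
  -- bottom edge
  have hbot : (∫ x : ℝ in (-T)..T, ((x : ℂ) - z)⁻¹)
      = Complex.log ((T : ℂ) - z) - Complex.log (((-T : ℝ) : ℂ) - z) := by
    have := intervalIntegral.integral_eq_sub_of_hasDerivAt
      (f := fun x : ℝ => Complex.log ((x : ℂ) - z))
      (f' := fun x : ℝ => ((x : ℂ) - z)⁻¹) (a := -T) (b := T) ?_ ?_
    · simpa using this
    · intro x _
      have hd : HasDerivAt (fun x : ℝ => (x : ℂ) - z) 1 x :=
        ((hasDerivAt_id (x : ℂ)).sub_const z).comp_ofReal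
      have hs : ((x : ℂ) - z) ∈ Complex.slitPlane := by
        rw [Complex.mem_slitPlane_iff]; right; simp [Complex.sub_im, him.ne']
      simpa [one_div] using hd.clog_real hs
    · apply ContinuousOn.intervalIntegrable
      apply ContinuousOn.inv₀
      · exact (Complex.continuous_ofReal.sub continuous_const).continuousOn
      · intro x _ h
        have : ((x : ℂ) - z).im = 0 := by rw [h]; simp
        simp [Complex.sub_im] at this
        exact him.ne' this
  -- top edge
  have htop : (∫ x : ℝ in (-T)..T, ((x : ℂ) + T * I - z)⁻¹)
      = Complex.log ((T : ℂ) + T * I - z) - Complex.log (((-T : ℝ) : ℂ) + T * I - z) := by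
    have := intervalIntegral.integral_eq_sub_of_hasDerivAt
      (f := fun x : ℝ => Complex.log ((x : ℂ) + T * I - z))
      (f' := fun x : ℝ => ((x : ℂ) + T * I - z)⁻¹) (a := -T) (b := T) ?_ ?_
    · simpa using this
    · intro x _
      have hd : HasDerivAt (fun x : ℝ => (x : ℂ) + T * I - z) 1 x := by
        have : HasDerivAt (fun u : ℂ => u + T * I - z) 1 (x : ℂ) :=
          ((hasDerivAt_id (x : ℂ)).add_const _).sub_const z
        exact this.comp_ofReal
      have hs : ((x : ℂ) + T * I - z) ∈ Complex.slitPlane := by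
        rw [Complex.mem_slitPlane_iff]; right
        have : ((x : ℂ) + T * I - z).im = T - z.im := by simp
        rw [this]; exact ne_of_gt (by linarith)
      simpa [one_div] using hd.clog_real hs
    · apply ContinuousOn.intervalIntegrable
      apply ContinuousOn.inv₀
      · exact ((Complex.continuous_ofReal.add continuous_const).sub continuous_const).continuousOn
      · intro x _ h
        have : ((x : ℂ) + T * I - z).im = 0 := by rw [h]; simp
        simp at this
        linarith
  -- right edge
  have hright : (∫ y : ℝ in (0:ℝ)..T, ((T : ℂ) + y * I - z)⁻¹)
      = (-I) * Complex.log ((T : ℂ) + T * I - z) - (-I) * Complex.log ((T : ℂ) - z) := by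
    have := intervalIntegral.integral_eq_sub_of_hasDerivAt
      (f := fun y : ℝ => (-I) * Complex.log ((T : ℂ) + y * I - z))
      (f' := fun y : ℝ => ((T : ℂ) + y * I - z)⁻¹) (a := 0) (b := T) ?_ ?_
    · simpa using this
    · intro y _
      have hd : HasDerivAt (fun y : ℝ => (T : ℂ) + y * I - z) I y := by
        have : HasDerivAt (fun u : ℂ => (T : ℂ) + u * I - z) (1 * I) (y : ℂ) :=
          (((hasDerivAt_id ((y : ℝ) : ℂ)).mul_const I).const_add _).sub_const z
        simpa using this.comp_ofReal
      have hs : ((T : ℂ) + y * I - z) ∈ Complex.slitPlane := by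
        rw [Complex.mem_slitPlane_iff]; left
        have : ((T : ℂ) + y * I - z).re = T - z.re := by simp
        rw [this]; linarith
      have := (hd.clog_real hs).const_mul (-I)
      have key : -I * (I / ((T : ℂ) + y * I - z)) = ((T : ℂ) + y * I - z)⁻¹ := by
        rw [div_eq_mul_inv, ← mul_assoc]
        norm_num [Complex.I_mul_I]
      rwa [key] at this
    · apply ContinuousOn.intervalIntegrable
      apply ContinuousOn.inv₀
      · exact ((continuous_const.add (Complex.continuous_ofReal.mul continuous_const)).sub
          continuous_const).continuousOn
      · intro y _ h
        have : ((T : ℂ) + y * I - z).re = 0 := by rw [h]; simp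
        simp at this
        linarith
  -- left edge
  have hleft : (∫ y : ℝ in (0:ℝ)..T, (-(T : ℂ) + y * I - z)⁻¹)
      = (-I) * Complex.log (z + (T : ℂ) - T * I) - (-I) * Complex.log (z + (T : ℂ)) := by
    have := intervalIntegral.integral_eq_sub_of_hasDerivAt
      (f := fun y : ℝ => (-I) * Complex.log (z + (T : ℂ) - y * I))
      (f' := fun y : ℝ => (-(T : ℂ) + y * I - z)⁻¹) (a := 0) (b := T) ?_ ?_
    · simpa using this
    · intro y _
      have hd : HasDerivAt (fun y : ℝ => z + (T : ℂ) - y * I) (-I) y := by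
        have : HasDerivAt (fun u : ℂ => z + (T : ℂ) - u * I) (-(1 * I)) (y : ℂ) :=
          ((hasDerivAt_id ((y : ℝ) : ℂ)).mul_const I).const_sub _
        simpa using this.comp_ofReal
      have hs : (z + (T : ℂ) - y * I) ∈ Complex.slitPlane := by
        rw [Complex.mem_slitPlane_iff]; left
        have : (z + (T : ℂ) - y * I).re = z.re + T := by simp
        rw [this]; linarith
      have := (hd.clog_real hs).const_mul (-I)
      have key : -I * (-I / (z + (T : ℂ) - y * I)) = (-(T : ℂ) + y * I - z)⁻¹ := by
        have h2 : -(T : ℂ) + y * I - z = -(z + (T : ℂ) - y * I) := by ring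
        rw [h2, inv_neg, div_eq_mul_inv, ← mul_assoc]
        norm_num [Complex.I_mul_I]
      rwa [key] at this
    · apply ContinuousOn.intervalIntegrable
      apply ContinuousOn.inv₀
      · exact ((continuous_const.add (Complex.continuous_ofReal.mul continuous_const)).sub
          continuous_const).continuousOn
      · intro y _ h
        have : (-(T : ℂ) + y * I - z).re = 0 := by rw [h]; simp
        simp at this
        linarith
  rw [hbot, htop, hright, hleft, smul_eq_mul, smul_eq_mul]
  have hN : ((-T : ℝ) : ℂ) - z = -(z + (T : ℂ)) := by push_cast; ring
  have hM : ((-T : ℝ) : ℂ) + T * I - z = -(z + (T : ℂ) - T * I) := by push_cast; ring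
  rw [hN, hM]
  have hu1 : (0 : ℝ) < (z + (T : ℂ)).im := by simp [him]
  have hu2 : (z + (T : ℂ) - (T : ℂ) * I).im < 0 := by
    simp [Complex.sub_im, Complex.add_im]; linarith
  have e1 := logSubPos hu1
  have e2 := logSubNeg hu2
  have hI : I * I = -1 := Complex.I_mul_I
  linear_combination e1 + e2 + (Complex.log ((T:ℂ) - z) - Complex.log ((T:ℂ) + T*I - z)
    + Complex.log (z + (T:ℂ) - T*I) - Complex.log (z + (T:ℂ))) * hI

set_option maxHeartbeats 2000000 in
/-- Evaluation of the integral `J₂` (formula (2.24)): under (M1)–(M3) on the entire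
function `f` and `|w| ≤ δ < 1` on the closed upper half-plane (`w` continuous there and
holomorphic on the open half-plane), for every `z` with `Im z > 0`,
`(1/π)·∫_ℝ w(x)/(f̄(x)·(f̄(x) - w(x)f(x))·(x - z)) dx
  = 2i·w(z)/(f̄(z)·(f̄(z) - w(z)f(z)))`, where `f̄(z) = conj (f (conj z))`. -/
theorem J2_residue_evaluation
    (f : ℂ → ℂ) (hf : Differentiable ℂ f)
    (hM1 : ∀ z : ℂ, z.im ≤ 0 → f z ≠ 0)
    (hM2 : ∀ z : ℂ, 0 ≤ z.im →
      ‖f z‖ ≤ ‖(starRingEnd ℂ) (f ((starRingEnd ℂ) z))‖)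
    (hM3 : ∀ m : ℕ, ∀ ε : ℝ, 0 < ε → ∃ R : ℝ, 0 < R ∧ ∀ z : ℂ, z.im ≤ 0 →
      R ≤ ‖z‖ → ‖z‖ ^ m ≤ ε * ‖f z‖)
    (δ : ℝ) (hδ : δ ∈ Set.Ioo (0 : ℝ) 1)
    (w : ℂ → ℂ)
    (hwc : ContinuousOn w {z : ℂ | 0 ≤ z.im})
    (hwh : DifferentiableOn ℂ w {z : ℂ | 0 < z.im})
    (hwb : ∀ z : ℂ, 0 ≤ z.im → ‖w z‖ ≤ δ) :
    ∀ z : ℂ, 0 < z.im →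
      (1 / (Real.pi : ℂ)) * ∫ x : ℝ, w (x : ℂ) /
          ((starRingEnd ℂ) (f (x : ℂ)) *
            ((starRingEnd ℂ) (f (x : ℂ)) - w (x : ℂ) * f (x : ℂ)) * ((x : ℂ) - z)) =
        2 * Complex.I * w z /
          ((starRingEnd ℂ) (f ((starRingEnd ℂ) z)) *
            ((starRingEnd ℂ) (f ((starRingEnd ℂ) z)) - w z * f z)) := by
  intro z hz
  obtain ⟨hδ0, hδ1⟩ := hδ
  set fb : ℂ → ℂ := fun ζ => (starRingEnd ℂ) (f ((starRingEnd ℂ) ζ)) with hfbdef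
  set g : ℂ → ℂ := fun ζ => w ζ / (fb ζ * (fb ζ - w ζ * f ζ)) with hgdef
  have hfb : Differentiable ℂ fb := diffBar hf
  have hfb0 : ∀ ζ : ℂ, 0 ≤ ζ.im → fb ζ ≠ 0 := by
    intro ζ hζ
    simp only [hfbdef, ne_eq, map_eq_zero]
    exact hM1 _ (by simpa using neg_nonpos.2 hζ)
  have habs_fb : ∀ ζ : ℂ, ‖fb ζ‖ = ‖f ((starRingEnd ℂ) ζ)‖ := by
    intro ζ; simp [hfbdef]
  have hden : ∀ ζ : ℂ, 0 ≤ ζ.im →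
      (1 - δ) * ‖fb ζ‖ ≤ ‖fb ζ - w ζ * f ζ‖ := by
    intro ζ hζ
    have h1 : ‖w ζ * f ζ‖ ≤ δ * ‖fb ζ‖ := by
      rw [norm_mul]
      exact mul_le_mul (hwb ζ hζ) (hM2 ζ hζ) (norm_nonneg _) hδ0.le
    have h2 : ‖fb ζ‖ - ‖w ζ * f ζ‖
        ≤ ‖fb ζ - w ζ * f ζ‖ := by
      simpa using norm_sub_norm_le (fb ζ) (w ζ * f ζ)
    nlinarith [norm_nonneg (fb ζ)]
  have hden0 : ∀ ζ : ℂ, 0 ≤ ζ.im → fb ζ - w ζ * f ζ ≠ 0 := by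
    intro ζ hζ h0
    have h1 := hden ζ hζ
    rw [h0, norm_zero] at h1
    have h2 : 0 < ‖fb ζ‖ := norm_pos_iff.2 (hfb0 ζ hζ)
    nlinarith
  have hgc : ContinuousOn g {ζ : ℂ | 0 ≤ ζ.im} := by
    apply ContinuousOn.div hwc
    · exact (hfb.continuous.continuousOn).mul
        ((hfb.continuous.continuousOn).sub (hwc.mul hf.continuous.continuousOn))
    · exact fun ζ hζ => mul_ne_zero (hfb0 ζ hζ) (hden0 ζ hζ)
  have hgd : DifferentiableOn ℂ g {ζ : ℂ | 0 < ζ.im} := by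
    apply DifferentiableOn.div hwh
    · exact (hfb.differentiableOn).mul
        ((hfb.differentiableOn).sub (hwh.mul hf.differentiableOn))
    · exact fun ζ hζ => mul_ne_zero (hfb0 ζ (le_of_lt hζ)) (hden0 ζ (le_of_lt hζ))
  -- decay bound
  have hK : ∃ K : ℝ, 0 < K ∧ ∀ ζ : ℂ, 0 ≤ ζ.im →
      ‖g ζ‖ * (1 + ‖ζ‖) ^ 3 ≤ K := by
    obtain ⟨R₀, hR₀pos, hR₀⟩ := hM3 2 1 one_pos
    set R : ℝ := max R₀ 1 with hRdef
    have hR1 : (1:ℝ) ≤ R := le_max_right _ _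
    have hScomp : IsCompact ({ζ : ℂ | 0 ≤ ζ.im} ∩ Metric.closedBall 0 R) := by
      refine (isCompact_closedBall (0:ℂ) R).inter_left ?_
      exact isClosed_le continuous_const Complex.continuous_im
    obtain ⟨C, hC⟩ := hScomp.exists_bound_of_continuousOn
      (hgc.mono Set.inter_subset_left)
    refine ⟨max ((max C 0 + 1) * (1 + R) ^ 3) (8 * (δ / (1 - δ))) + 1, by positivity, ?_⟩
    intro ζ hζ
    by_cases hcase : ‖ζ‖ ≤ R
    · have hmem : ζ ∈ {ζ : ℂ | 0 ≤ ζ.im} ∩ Metric.closedBall 0 R := by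
        constructor
        · exact hζ
        · simpa [Metric.mem_closedBall, Complex.dist_eq] using hcase
      have h1 : ‖g ζ‖ ≤ max C 0 := le_trans (hC ζ hmem) (le_max_left _ _)
      have h2 : (1 + ‖ζ‖) ^ 3 ≤ (1 + R) ^ 3 := by
        apply pow_le_pow_left₀ (by positivity) (by linarith)
      have h3 : ‖g ζ‖ * (1 + ‖ζ‖) ^ 3 ≤ (max C 0 + 1) * (1 + R) ^ 3 := by
        apply mul_le_mul (by linarith) h2 (by positivity) (by positivity)
      calc ‖g ζ‖ * (1 + ‖ζ‖) ^ 3 ≤ (max C 0 + 1) * (1 + R) ^ 3 := h3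
        _ ≤ max ((max C 0 + 1) * (1 + R) ^ 3) (8 * (δ / (1 - δ))) := le_max_left _ _
        _ ≤ _ := by linarith
    · push_neg at hcase
      set a : ℝ := ‖ζ‖ with hadef
      have ha1 : 1 ≤ a := le_trans hR1 hcase.le
      have hfbig : a ^ 2 ≤ ‖fb ζ‖ := by
        rw [habs_fb]
        have him : ((starRingEnd ℂ) ζ).im ≤ 0 := by simpa using neg_nonpos.2 hζ
        have habs : ‖(starRingEnd ℂ) ζ‖ = a := by simp [hadef]
        have := hR₀ ((starRingEnd ℂ) ζ) him (by rw [habs]; exact le_trans (le_max_left _ _) hcase.le)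
        rw [habs] at this; linarith
    -- |g| ≤ δ / ((1-δ) a⁴)
      have hgle : ‖g ζ‖ ≤ δ / ((1 - δ) * (a ^ 2 * a ^ 2)) := by
        have hgabs : ‖g ζ‖
            = ‖w ζ‖ / (‖fb ζ‖ * ‖fb ζ - w ζ * f ζ‖) := by
          simp [hgdef, norm_div, norm_mul]
        rw [hgabs]
        have h1δ : (0:ℝ) < 1 - δ := by linarith
        apply div_le_div₀ hδ0.le (hwb ζ hζ) (by positivity)
        have h1 := hden ζ hζ
        have hF0 : (0:ℝ) ≤ ‖fb ζ‖ := norm_nonneg _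
        have ha0 : (0:ℝ) ≤ a ^ 2 := by positivity
        calc (1 - δ) * (a ^ 2 * a ^ 2)
            ≤ (1 - δ) * (‖fb ζ‖ * ‖fb ζ‖) := by
              apply mul_le_mul_of_nonneg_left _ h1δ.le
              exact mul_le_mul hfbig hfbig ha0 hF0
          _ = ‖fb ζ‖ * ((1 - δ) * ‖fb ζ‖) := by ring
          _ ≤ ‖fb ζ‖ * ‖fb ζ - w ζ * f ζ‖ :=
              mul_le_mul_of_nonneg_left h1 hF0
      have hpow : (1 + a) ^ 3 ≤ 8 * (a ^ 2 * a ^ 2) := by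
        have e2 : a ≤ a ^ 2 := by nlinarith
        have e3 : a ^ 2 ≤ a ^ 2 * a := by nlinarith
        have e4 : a ^ 2 * a ≤ a ^ 2 * a ^ 2 := by nlinarith
        nlinarith
      have hfinal : ‖g ζ‖ * (1 + a) ^ 3 ≤ 8 * (δ / (1 - δ)) := by
        have h1δ : (0:ℝ) < 1 - δ := by linarith
        have hd4 : (0:ℝ) < (1 - δ) * (a ^ 2 * a ^ 2) := by
          apply mul_pos h1δ (by positivity)
        have hgle' := (le_div_iff₀ hd4).1 hgle
        have hnn : (0:ℝ) ≤ ‖g ζ‖ := norm_nonneg _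
        rw [mul_div_assoc', le_div_iff₀ h1δ]
        nlinarith [mul_le_mul_of_nonneg_left hpow hnn]
      calc ‖g ζ‖ * (1 + a) ^ 3 ≤ 8 * (δ / (1 - δ)) := hfinal
        _ ≤ max ((max C 0 + 1) * (1 + R) ^ 3) (8 * (δ / (1 - δ))) := le_max_right _ _
        _ ≤ _ := by linarith
  obtain ⟨K, hKpos, hKb⟩ := hK
  have hgcont : Continuous fun x : ℝ => g (x : ℂ) := by
    apply hgc.comp_continuous Complex.continuous_ofReal
    intro x; simp [Set.mem_setOf_eq]
  have hsub_ne : ∀ x : ℝ, ((x : ℂ) - z) ≠ 0 := by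
    intro x h
    have h2 : ((x : ℂ) - z).im = 0 := by rw [h]; simp
    simp [Complex.sub_im] at h2
    linarith
  have hcont : Continuous fun x : ℝ => g (x : ℂ) / ((x : ℂ) - z) :=
    hgcont.div (Complex.continuous_ofReal.sub continuous_const) hsub_ne
  have hbound_real : ∀ x : ℝ, ‖g (x : ℂ) / ((x : ℂ) - z)‖ ≤ (K / z.im) * (1 + x ^ 2)⁻¹ := by
    intro x
    have h1 : z.im ≤ ‖(x : ℂ) - z‖ := by
      have h := Complex.abs_im_le_norm ((x : ℂ) - z)
      rw [Complex.sub_im, Complex.ofReal_im, zero_sub, abs_neg, abs_of_pos hz] at h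
      exact h
    have h2 : ‖g (x : ℂ)‖ * (1 + |x|) ^ 3 ≤ K := by
      have := hKb (x : ℂ) (by simp)
      simpa using this
    have h3 : 1 + x ^ 2 ≤ (1 + |x|) ^ 3 := by nlinarith [abs_nonneg x, _root_.sq_abs x]
    have hx2 : (0:ℝ) < 1 + x ^ 2 := by positivity
    have hgx : ‖g (x : ℂ)‖ ≤ K / (1 + x ^ 2) := by
      rw [le_div_iff₀ hx2]
      calc ‖g (x : ℂ)‖ * (1 + x ^ 2)
          ≤ ‖g (x : ℂ)‖ * (1 + |x|) ^ 3 :=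
            mul_le_mul_of_nonneg_left h3 (norm_nonneg _)
        _ ≤ K := h2
    have hnorm : ‖g (x : ℂ) / ((x : ℂ) - z)‖
        = ‖g (x : ℂ)‖ / ‖(x : ℂ) - z‖ := by
      rw [norm_div]
    rw [hnorm]
    calc ‖g (x : ℂ)‖ / ‖(x : ℂ) - z‖
        ≤ (K / (1 + x ^ 2)) / z.im := by
          apply div_le_div₀ (by positivity) hgx hz h1
      _ = (K / z.im) * (1 + x ^ 2)⁻¹ := by
          rw [div_div, mul_comm (1 + x ^ 2) z.im, ← div_div, div_eq_mul_inv (K / z.im)]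
  have hInt : Integrable fun x : ℝ => g (x : ℂ) / ((x : ℂ) - z) := by
    apply Integrable.mono' (integrable_inv_one_add_sq.const_mul (K / z.im))
      hcont.aestronglyMeasurable
    exact Filter.Eventually.of_forall hbound_real
  -- splitting the dslope integral along an edge
  have edge_split : ∀ (φ : ℝ → ℂ) (a b : ℝ), Continuous φ →
      (∀ t ∈ Set.uIcc a b, 0 ≤ (φ t).im) → (∀ t ∈ Set.uIcc a b, φ t ≠ z) →
      (∫ t in a..b, dslope g z (φ t))
        = (∫ t in a..b, g (φ t) / (φ t - z)) - g z * ∫ t in a..b, (φ t - z)⁻¹ := by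
    intro φ a b hφc hφim hφne
    have hgφ : ContinuousOn (fun t => g (φ t)) (Set.uIcc a b) :=
      hgc.comp hφc.continuousOn hφim
    have hinv : ContinuousOn (fun t => (φ t - z)⁻¹) (Set.uIcc a b) := by
      apply ContinuousOn.inv₀ ((hφc.sub continuous_const).continuousOn)
      intro t ht; exact sub_ne_zero.2 (hφne t ht)
    have h1 : IntervalIntegrable (fun t => g (φ t) / (φ t - z)) MeasureTheory.volume a b := by
      apply ContinuousOn.intervalIntegrable
      simp only [div_eq_mul_inv]
      exact hgφ.mul hinv
    have h2 : IntervalIntegrable (fun t => g z * (φ t - z)⁻¹) MeasureTheory.volume a b :=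
      (continuousOn_const.mul hinv).intervalIntegrable
    have hcongr : Set.EqOn (fun t => dslope g z (φ t))
        (fun t => g (φ t) / (φ t - z) - g z * (φ t - z)⁻¹) (Set.uIcc a b) := by
      intro t ht
      have hne := hφne t ht
      simp only
      rw [dslope_of_ne _ hne, slope_def_field, sub_div, div_eq_mul_inv (g z)]
    rw [intervalIntegral.integral_congr hcongr, intervalIntegral.integral_sub h1 h2,
      intervalIntegral.integral_const_mul]
  -- continuity and differentiability of dslope g z
  have hUopen : IsOpen {ζ : ℂ | 0 < ζ.im} := isOpen_lt continuous_const Complex.continuous_im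
  have hUz : {ζ : ℂ | 0 < ζ.im} ∈ nhds z := hUopen.mem_nhds hz
  have hdsc : ContinuousOn (dslope g z) {ζ : ℂ | 0 ≤ ζ.im} := by
    intro ζ hζ
    by_cases hcase : ζ = z
    · subst hcase
      exact (continuousAt_dslope_same.2 (hgd.differentiableAt hUz)).continuousWithinAt
    · have hcw : ContinuousWithinAt (fun ξ => (g ξ - g z) / (ξ - z)) {ζ : ℂ | 0 ≤ ζ.im} ζ := by
        apply ContinuousWithinAt.div
        · exact (hgc ζ hζ).sub continuousWithinAt_const
        · exact ((continuous_id.sub continuous_const).continuousAt).continuousWithinAt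
        · exact sub_ne_zero.2 hcase
      apply hcw.congr_of_eventuallyEq
      · have hev : ∀ᶠ ξ in nhds ζ, ξ ≠ z := eventually_ne_nhds hcase
        filter_upwards [nhdsWithin_le_nhds hev] with ξ hξ
        rw [dslope_of_ne _ hξ, slope_def_field]
      · rw [dslope_of_ne _ hcase, slope_def_field]
  have hdsd : DifferentiableOn ℂ (dslope g z) {ζ : ℂ | 0 < ζ.im} :=
    (Complex.differentiableOn_dslope hUz).2 hgd
  -- the contour identity for large T
  have hTlim : ∀ᶠ T in Filter.atTop,
      (∫ x in (-T)..T, g (x : ℂ) / ((x : ℂ) - z))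
        = 2 * Real.pi * I * g z
          + (∫ x in (-T)..T, g ((x : ℂ) + T * I) / ((x : ℂ) + T * I - z))
          - I • (∫ y in (0:ℝ)..T, g ((T : ℂ) + y * I) / ((T : ℂ) + y * I - z))
          + I • (∫ y in (0:ℝ)..T, g (-(T : ℂ) + y * I) / (-(T : ℂ) + y * I - z)) := by
    filter_upwards [Filter.eventually_gt_atTop (max |z.re| z.im)] with T hT
    have hTre : |z.re| < T := lt_of_le_of_lt (le_max_left _ _) hT
    have hTim : z.im < T := lt_of_le_of_lt (le_max_right _ _) hT
    have hT0 : 0 < T := lt_of_le_of_lt (abs_nonneg z.re) hTre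
    have e1 : (((-T : ℝ) : ℂ)).re = -T := by simp
    have e2 : (((-T : ℝ) : ℂ)).im = 0 := by simp
    have e3 : ((T : ℂ) + (T : ℝ) * I).re = T := by simp
    have e4 : ((T : ℂ) + (T : ℝ) * I).im = T := by simp
    have hrect := Complex.integral_boundary_rect_eq_zero_of_continuousOn_of_differentiableOn
      (dslope g z) (((-T : ℝ) : ℂ)) ((T : ℂ) + (T : ℝ) * I) ?_ ?_
    rotate_left
    · apply hdsc.mono
      intro ξ hξ
      rw [Complex.mem_reProdIm, e2, e4] at hξ
      have := hξ.2
      rw [Set.uIcc_of_le hT0.le, Set.mem_Icc] at this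
      exact this.1
    · apply hdsd.mono
      intro ξ hξ
      rw [Complex.mem_reProdIm, e2, e4] at hξ
      have := hξ.2
      rw [min_eq_left hT0.le, max_eq_right hT0.le, Set.mem_Ioo] at this
      exact this.1
    rw [e1, e2, e3, e4] at hrect
    simp only [Complex.ofReal_zero, zero_mul, add_zero, Complex.ofReal_neg] at hrect
    -- edge rewrites
    have hφ1 := edge_split (fun x : ℝ => (x : ℂ)) (-T) T Complex.continuous_ofReal
      (fun t _ => by simp) (fun t _ h => by
        have : z.im = 0 := by rw [← h]; simp
        linarith)
    have hφ2 := edge_split (fun x : ℝ => (x : ℂ) + T * I) (-T) T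
      (Complex.continuous_ofReal.add continuous_const)
      (fun t _ => by simp [hT0.le]) (fun t _ h => by
        have : z.im = T := by rw [← h]; simp
        linarith)
    have hφ3 := edge_split (fun y : ℝ => (T : ℂ) + y * I) 0 T
      (continuous_const.add (Complex.continuous_ofReal.mul continuous_const))
      (fun t ht => by
        rw [Set.uIcc_of_le hT0.le, Set.mem_Icc] at ht
        simp [ht.1]) (fun t _ h => by
        have : z.re = T := by rw [← h]; simp
        linarith [abs_lt.1 hTre])
    have hφ4 := edge_split (fun y : ℝ => -(T : ℂ) + y * I) 0 T
      (continuous_const.add (Complex.continuous_ofReal.mul continuous_const))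
      (fun t ht => by
        rw [Set.uIcc_of_le hT0.le, Set.mem_Icc] at ht
        simp [ht.1]) (fun t _ h => by
        have : z.re = -T := by rw [← h]; simp
        have := (abs_lt.1 hTre).1
        linarith)
    rw [hφ1, hφ2, hφ3, hφ4] at hrect
    have hrinv := rectInv z T hTre hz hTim
    simp only [smul_eq_mul] at hrect hrinv ⊢
    linear_combination hrect + g z * hrinv
  -- limits
  have hB : Filter.Tendsto (fun T : ℝ => ∫ x in (-T)..T, g (x : ℂ) / ((x : ℂ) - z))
      Filter.atTop (nhds (∫ x : ℝ, g (x : ℂ) / ((x : ℂ) - z))) :=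
    MeasureTheory.intervalIntegral_tendsto_integral hInt Filter.tendsto_neg_atTop_atBot Filter.tendsto_id
  have hbd0 : Filter.Tendsto (fun T : ℝ => 2 * K / T) Filter.atTop (nhds 0) :=
    tendsto_const_nhds.div_atTop Filter.tendsto_id
  have keybound : ∀ T : ℝ, 1 ≤ T → ∀ ζ : ℂ, 0 ≤ ζ.im → T ≤ ‖ζ‖ →
      1 ≤ ‖ζ - z‖ → ‖g ζ / (ζ - z)‖ ≤ K / T ^ 3 := by
    intro T hT1 ζ hζ hζT hζz
    have hT0 : (0:ℝ) < T := by linarith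
    have h1 : T ^ 3 ≤ (1 + ‖ζ‖) ^ 3 := by
      apply pow_le_pow_left₀ hT0.le
      have := norm_nonneg ζ
      linarith
    have h2 : ‖g ζ‖ * T ^ 3 ≤ K :=
      le_trans (mul_le_mul_of_nonneg_left h1 (norm_nonneg _)) (hKb ζ hζ)
    have h3 : ‖g ζ‖ ≤ K / T ^ 3 := by
      rw [le_div_iff₀ (by positivity)]
      exact h2
    have h4 : ‖g ζ / (ζ - z)‖ = ‖g ζ‖ / ‖ζ - z‖ := by
      rw [norm_div]
    rw [h4]
    calc ‖g ζ‖ / ‖ζ - z‖ ≤ ‖g ζ‖ / 1 :=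
          div_le_div_of_nonneg_left (norm_nonneg _) one_pos hζz
      _ = ‖g ζ‖ := div_one _
      _ ≤ K / T ^ 3 := h3
  have hTopt : Filter.Tendsto (fun T : ℝ =>
      ∫ x in (-T)..T, g ((x : ℂ) + T * I) / ((x : ℂ) + T * I - z)) Filter.atTop (nhds 0) := by
    apply squeeze_zero_norm' _ hbd0
    filter_upwards [Filter.eventually_ge_atTop (max (max (|z.re| + 1) (z.im + 1)) 1)] with T hT
    have hT1 : 1 ≤ T := le_trans (le_max_right _ _) hT
    have hTim : z.im + 1 ≤ T := le_trans (le_trans (le_max_right _ _) (le_max_left _ _)) hT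
    have hT0 : (0:ℝ) < T := by linarith
    have hC : ∀ x ∈ Set.uIoc (-T) T, ‖g ((x : ℂ) + T * I) / ((x : ℂ) + T * I - z)‖ ≤ K / T ^ 3 := by
      intro x _
      apply keybound T hT1 _ (by simp [hT0.le]) ?_ ?_
      · have him : ((x : ℂ) + T * I).im = T := by simp
        have h := Complex.abs_im_le_norm ((x : ℂ) + T * I)
        rw [him, abs_of_pos hT0] at h
        exact h
      · have him : ((x : ℂ) + T * I - z).im = T - z.im := by simp
        have h := Complex.abs_im_le_norm ((x : ℂ) + T * I - z)
        rw [him, abs_of_pos (by linarith)] at h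
        linarith
    refine le_trans (intervalIntegral.norm_integral_le_of_norm_le_const hC) ?_
    have habs : |T - (-T)| = 2 * T := by rw [abs_of_pos (by linarith)]; ring
    rw [habs, div_mul_eq_mul_div, div_le_div_iff₀ (by positivity) hT0]
    nlinarith [mul_nonneg (mul_nonneg (by linarith : (0:ℝ) ≤ 2*K) (sq_nonneg T))
      (by linarith : (0:ℝ) ≤ T - 1), sq_nonneg T]
  have hRt : Filter.Tendsto (fun T : ℝ =>
      ∫ y in (0:ℝ)..T, g ((T : ℂ) + y * I) / ((T : ℂ) + y * I - z)) Filter.atTop (nhds 0) := by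
    apply squeeze_zero_norm' _ hbd0
    filter_upwards [Filter.eventually_ge_atTop (max (max (|z.re| + 1) (z.im + 1)) 1)] with T hT
    have hT1 : 1 ≤ T := le_trans (le_max_right _ _) hT
    have hTre : |z.re| + 1 ≤ T := le_trans (le_trans (le_max_left _ _) (le_max_left _ _)) hT
    have hT0 : (0:ℝ) < T := by linarith
    have hzre := abs_lt.1 (show |z.re| < T by linarith)
    have hC : ∀ y ∈ Set.uIoc (0:ℝ) T, ‖g ((T : ℂ) + y * I) / ((T : ℂ) + y * I - z)‖ ≤ K / T ^ 3 := by
      intro y hy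
      rw [Set.uIoc_of_le hT0.le] at hy
      apply keybound T hT1 _ (by simp [hy.1.le]) ?_ ?_
      · have hre : ((T : ℂ) + y * I).re = T := by simp
        have h := Complex.abs_re_le_norm ((T : ℂ) + y * I)
        rw [hre, abs_of_pos hT0] at h
        exact h
      · have hre : ((T : ℂ) + y * I - z).re = T - z.re := by simp
        have h := Complex.abs_re_le_norm ((T : ℂ) + y * I - z)
        rw [hre, abs_of_pos (by linarith [le_abs_self z.re])] at h
        linarith [le_abs_self z.re]
    refine le_trans (intervalIntegral.norm_integral_le_of_norm_le_const hC) ?_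
    have habs : |T - 0| = T := by rw [sub_zero, abs_of_pos hT0]
    rw [habs, div_mul_eq_mul_div, div_le_div_iff₀ (by positivity) hT0]
    nlinarith [mul_nonneg (mul_nonneg hKpos.le (sq_nonneg T))
      (by linarith : (0:ℝ) ≤ 2*T - 1), sq_nonneg T]
  have hLt : Filter.Tendsto (fun T : ℝ =>
      ∫ y in (0:ℝ)..T, g (-(T : ℂ) + y * I) / (-(T : ℂ) + y * I - z)) Filter.atTop (nhds 0) := by
    apply squeeze_zero_norm' _ hbd0
    filter_upwards [Filter.eventually_ge_atTop (max (max (|z.re| + 1) (z.im + 1)) 1)] with T hT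
    have hT1 : 1 ≤ T := le_trans (le_max_right _ _) hT
    have hTre : |z.re| + 1 ≤ T := le_trans (le_trans (le_max_left _ _) (le_max_left _ _)) hT
    have hT0 : (0:ℝ) < T := by linarith
    have hzre := abs_lt.1 (show |z.re| < T by linarith)
    have hC : ∀ y ∈ Set.uIoc (0:ℝ) T, ‖g (-(T : ℂ) + y * I) / (-(T : ℂ) + y * I - z)‖ ≤ K / T ^ 3 := by
      intro y hy
      rw [Set.uIoc_of_le hT0.le] at hy
      apply keybound T hT1 _ (by simp [hy.1.le]) ?_ ?_
      · have hre : (-(T : ℂ) + y * I).re = -T := by simp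
        have h := Complex.abs_re_le_norm (-(T : ℂ) + y * I)
        rw [hre, abs_neg, abs_of_pos hT0] at h
        exact h
      · have hre : (-(T : ℂ) + y * I - z).re = -T - z.re := by simp
        have h := Complex.abs_re_le_norm (-(T : ℂ) + y * I - z)
        rw [hre, abs_of_neg (by linarith [neg_abs_le z.re]), neg_sub] at h
        linarith [neg_abs_le z.re]
    refine le_trans (intervalIntegral.norm_integral_le_of_norm_le_const hC) ?_
    have habs : |T - 0| = T := by rw [sub_zero, abs_of_pos hT0]
    rw [habs, div_mul_eq_mul_div, div_le_div_iff₀ (by positivity) hT0]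
    nlinarith [mul_nonneg (mul_nonneg hKpos.le (sq_nonneg T))
      (by linarith : (0:ℝ) ≤ 2*T - 1), sq_nonneg T]
  have hRHS : Filter.Tendsto (fun T : ℝ =>
      2 * Real.pi * I * g z
        + (∫ x in (-T)..T, g ((x : ℂ) + T * I) / ((x : ℂ) + T * I - z))
        - I • (∫ y in (0:ℝ)..T, g ((T : ℂ) + y * I) / ((T : ℂ) + y * I - z))
        + I • (∫ y in (0:ℝ)..T, g (-(T : ℂ) + y * I) / (-(T : ℂ) + y * I - z)))
      Filter.atTop (nhds (2 * Real.pi * I * g z)) := by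
    have hc : Filter.Tendsto (fun _ : ℝ => 2 * Real.pi * I * g z) Filter.atTop
        (nhds (2 * Real.pi * I * g z)) := tendsto_const_nhds
    have h := ((hc.add hTopt).sub (hRt.const_smul I)).add (hLt.const_smul I)
    simpa using h
  have hval : (∫ x : ℝ, g (x : ℂ) / ((x : ℂ) - z)) = 2 * Real.pi * I * g z := by
    apply tendsto_nhds_unique hB
    apply Filter.Tendsto.congr' _ hRHS
    filter_upwards [hTlim] with T h
    exact h.symm
  have hfbx : ∀ x : ℝ, fb ((x : ℂ)) = (starRingEnd ℂ) (f (x : ℂ)) := by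
    intro x; simp only [hfbdef]; rw [Complex.conj_ofReal]
  have hi : (fun x : ℝ => w (x : ℂ) / ((starRingEnd ℂ) (f (x : ℂ)) *
        ((starRingEnd ℂ) (f (x : ℂ)) - w (x : ℂ) * f (x : ℂ)) * ((x : ℂ) - z)))
      = fun x : ℝ => g (x : ℂ) / ((x : ℂ) - z) := by
    funext x
    rw [hgdef]
    simp only
    rw [div_div, hfbx x]
  rw [hi, hval]
  have hfz : (starRingEnd ℂ) (f ((starRingEnd ℂ) z)) = fb z := rfl
  rw [hfz, hgdef]
  simp only
  have hπ : (Real.pi : ℂ) ≠ 0 := Complex.ofReal_ne_zero.2 Real.pi_ne_zero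
  have hD : fb z * (fb z - w z * f z) ≠ 0 := mul_ne_zero (hfb0 z hz.le) (hden0 z hz.le)
  field_simp
end

section
/- Let f be an entire function satisfying: (M1) f(z) ≠ 0 whenever Im z ≤ 0; (M2) |f(z)| ≤ |f̄(z)| whenever Im z ≥ 0, where f̄(z) := conj(f(conj z)); (M3) for every m ∈ ℕ, z^m/f(z) → 0 as |z| → ∞ uniformly on {z : Im z ≤ 0}. Let δ ∈ (0,1) and let w be continuous on {Im z ≥ 0}, holomorphic on the open upper half-plane, with |w(z)| ≤ δ for all Im z ≥ 0. Then for every z with Im z > 0: ∫_ℝ conj(w(x))/(f(x)·(f(x) − conj(w(x))·conj(f(x)))·(x − z)) dx = 0. -/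
open Complex MeasureTheory Filter Set Topology intervalIntegral
open scoped Interval

lemma hasDerivAt_conj_comp {f : ℂ → ℂ} {z d : ℂ}
    (h : HasDerivAt f d ((starRingEnd ℂ) z)) :
    HasDerivAt (fun ζ => (starRingEnd ℂ) (f ((starRingEnd ℂ) ζ))) ((starRingEnd ℂ) d) z := by
  rw [hasDerivAt_iff_tendsto_slope] at h ⊢
  have hmap : Tendsto (fun y : ℂ => (starRingEnd ℂ) y) (𝓝[≠] z) (𝓝[≠] ((starRingEnd ℂ) z)) := by
    apply tendsto_nhdsWithin_of_tendsto_nhds_of_eventually_within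
    · exact (Complex.continuous_conj.tendsto z).mono_left nhdsWithin_le_nhds
    · filter_upwards [eventually_mem_nhdsWithin] with y hy
      simp only [mem_compl_iff, mem_singleton_iff] at hy ⊢
      exact fun hc => hy ((starRingEnd ℂ).injective hc)
  have h2 : Tendsto (fun y : ℂ => (starRingEnd ℂ) (slope f ((starRingEnd ℂ) z) ((starRingEnd ℂ) y)))
      (𝓝[≠] z) (𝓝 ((starRingEnd ℂ) d)) :=
    (Complex.continuous_conj.tendsto d).comp (h.comp hmap)
  refine h2.congr (fun y => ?_)
  simp only [slope_def_field, map_div₀, map_sub]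
  simp [Complex.conj_conj]

open Complex Filter Set Topology MeasureTheory intervalIntegral
open scoped Interval

set_option maxHeartbeats 1000000 in
lemma halfplane_integral_zero (F : ℂ → ℂ)
    (hc : ContinuousOn F {z : ℂ | 0 ≤ z.im})
    (hd : DifferentiableOn ℂ F {z : ℂ | 0 < z.im})
    (C R₀ : ℝ) (hC : 0 ≤ C) (hR₀ : 2 ≤ R₀)
    (hb : ∀ ζ : ℂ, 0 ≤ ζ.im → R₀ ≤ ‖ζ‖ →
      ‖F ζ‖ ≤ C / ‖ζ‖ ^ 3) :
    ∫ x : ℝ, F (x : ℝ) = 0 := by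
  have hcR : Continuous fun x : ℝ => F x :=
    hc.comp_continuous Complex.continuous_ofReal (fun x => by simp)
  -- integrability
  obtain ⟨M, hM⟩ := (isCompact_Icc (a := -R₀) (b := R₀)).exists_bound_of_continuousOn
    hcR.continuousOn
  set K : ℝ := max (2 * C) (max M 0 * (1 + R₀ ^ 2)) with hK
  have hKb : ∀ x : ℝ, ‖F x‖ ≤ K * (1 + x ^ 2)⁻¹ := by
    intro x
    rcases le_or_gt |x| R₀ with hx | hx
    · have hx' : x ∈ Icc (-R₀) R₀ := by
        exact abs_le.mp hx
      have h1 : ‖F x‖ ≤ max M 0 := le_trans (hM x hx') (le_max_left _ _)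
      have h2 : max M 0 ≤ K * (1 + x ^ 2)⁻¹ := by
        rw [le_mul_inv_iff₀ (by positivity)]
        calc max M 0 * (1 + x ^ 2) ≤ max M 0 * (1 + R₀ ^ 2) := by
              have : x ^ 2 ≤ R₀ ^ 2 := by nlinarith [abs_nonneg x, _root_.sq_abs x]
              nlinarith [le_max_right M 0]
          _ ≤ K := le_max_right _ _
      exact h1.trans h2
    · have habs : ‖(x : ℂ)‖ = |x| := (Complex.norm_real x).trans (Real.norm_eq_abs x)
      have h1 : ‖F x‖ ≤ C / |x| ^ 3 := by
        have := hb x (by simp) (by rw [habs]; exact hx.le)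
        rwa [habs] at this
      have h2 : C / |x| ^ 3 ≤ K * (1 + x ^ 2)⁻¹ := by
        rw [← div_eq_mul_inv]
        have hCK : C ≤ K := le_trans (by linarith) (le_max_left (2 * C) _)
        refine div_le_div₀ (hC.trans hCK) hCK (by positivity) ?_
        nlinarith [abs_nonneg x, _root_.sq_abs x]
      exact h1.trans h2
  have hint : Integrable fun x : ℝ => F x := by
    refine (integrable_inv_one_add_sq.const_mul K).mono' hcR.aestronglyMeasurable ?_
    exact Eventually.of_forall hKb
  have T1 : Tendsto (fun R : ℝ => ∫ x in (-R)..R, F x) atTop (𝓝 (∫ x : ℝ, F x)) :=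
    intervalIntegral_tendsto_integral hint tendsto_neg_atTop_atBot tendsto_id
  have T2 : Tendsto (fun R : ℝ => ∫ x in (-R)..R, F x) atTop (𝓝 0) := by
    refine squeeze_zero_norm' (a := fun R : ℝ => 4 * C / R ^ 2) ?_ ?_
    · filter_upwards [eventually_ge_atTop R₀] with R hR
      have hRpos : (0 : ℝ) < R := by linarith
      -- rectangle
      have Hc : ContinuousOn F ([[(-R : ℝ), R]] ×ℂ [[(0 : ℝ), R]]) := by
        apply hc.mono
        intro ζ hζ
        have := (Complex.mem_reProdIm.mp hζ).2
        rw [uIcc_of_le (by linarith : (0:ℝ) ≤ R)] at this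
        exact this.1
      have Hd : ∀ x ∈ (Ioo (min (-R) R) (max (-R) R) ×ℂ
          Ioo (min (0:ℝ) R) (max (0:ℝ) R)) \ (∅ : Set ℂ), DifferentiableAt ℂ F x := by
        intro x hx
        have hx' := (Complex.mem_reProdIm.mp hx.1).2
        rw [min_eq_left (by linarith : (0:ℝ) ≤ R)] at hx'
        refine (hd.differentiableAt ?_)
        exact (isOpen_lt continuous_const Complex.continuous_im).mem_nhds hx'.1
      have h0R : (0:ℝ) ≤ R := by linarith
      have rect := Complex.integral_boundary_rect_eq_zero_of_differentiable_on_off_countable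
        F (⟨-R, 0⟩ : ℂ) (⟨R, R⟩ : ℂ) ∅ countable_empty (by exact Hc) (by exact Hd)
      simp only [show ((⟨-R, 0⟩ : ℂ)).re = -R from rfl, show ((⟨-R, 0⟩ : ℂ)).im = 0 from rfl,
        show ((⟨R, R⟩ : ℂ)).re = R from rfl, show ((⟨R, R⟩ : ℂ)).im = R from rfl,
        Complex.ofReal_zero, zero_mul, add_zero, smul_eq_mul] at rect
      have hb' : ∀ ζ : ℂ, 0 ≤ ζ.im → R ≤ ‖ζ‖ → ‖F ζ‖ ≤ C / R ^ 3 := by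
        intro ζ h1 h2
        have h3 := hb ζ h1 (le_trans hR h2)
        refine h3.trans ?_
        gcongr
      have btop : ‖∫ x in (-R)..R, F (↑x + ↑R * I)‖ ≤ C / R ^ 3 * (2 * R) := by
        have h := intervalIntegral.norm_integral_le_of_norm_le_const (a := -R) (b := R)
          (C := C / R ^ 3) (f := fun x : ℝ => F (↑x + ↑R * I)) ?_
        · refine h.trans (le_of_eq ?_)
          rw [sub_neg_eq_add, _root_.abs_of_nonneg (by linarith)]
          ring
        · intro x _
          have him : ((x : ℂ) + ↑R * I).im = R := by simp
          refine hb' _ (by rw [him]; exact h0R) ?_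
          have habs := Complex.abs_im_le_norm ((x : ℂ) + ↑R * I)
          rw [him] at habs
          exact le_trans (le_abs_self R) habs
      have bside : ∀ a : ℝ, |a| = R → ‖∫ y in (0:ℝ)..R, F (↑a + ↑y * I)‖ ≤ C / R ^ 3 * R := by
        intro a ha
        have h := intervalIntegral.norm_integral_le_of_norm_le_const (a := (0:ℝ)) (b := R)
          (C := C / R ^ 3) (f := fun y : ℝ => F (↑a + ↑y * I)) ?_
        · refine h.trans (le_of_eq ?_)
          rw [sub_zero, _root_.abs_of_nonneg h0R]
        · intro y hy
          rw [Set.uIoc_of_le h0R] at hy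
          have him : ((a : ℂ) + ↑y * I).im = y := by simp
          refine hb' _ (by rw [him]; exact hy.1.le) ?_
          have habs := Complex.abs_re_le_norm ((a : ℂ) + ↑y * I)
          have hre : ((a : ℂ) + ↑y * I).re = a := by simp
          rw [hre, ha] at habs
          exact habs
      have key : ∫ x in (-R)..R, F ↑x
          = (∫ x in (-R)..R, F (↑x + ↑R * I)) - I * (∫ y in (0:ℝ)..R, F (↑R + ↑y * I))
            + I * (∫ y in (0:ℝ)..R, F (↑(-R) + ↑y * I)) := by linear_combination rect
      have hnormI : ∀ B : ℂ, ‖I * B‖ = ‖B‖ := by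
        intro B; rw [norm_mul, Complex.norm_I, one_mul]
      calc ‖∫ x in (-R)..R, F ↑x‖
          ≤ ‖(∫ x in (-R)..R, F (↑x + ↑R * I)) - I * (∫ y in (0:ℝ)..R, F (↑R + ↑y * I))‖
            + ‖I * (∫ y in (0:ℝ)..R, F (↑(-R) + ↑y * I))‖ := by rw [key]; exact norm_add_le _ _
        _ ≤ (‖∫ x in (-R)..R, F (↑x + ↑R * I)‖ + ‖I * (∫ y in (0:ℝ)..R, F (↑R + ↑y * I))‖)
            + ‖I * (∫ y in (0:ℝ)..R, F (↑(-R) + ↑y * I))‖ := by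
              gcongr; exact norm_sub_le _ _
        _ ≤ (C / R ^ 3 * (2 * R) + C / R ^ 3 * R) + C / R ^ 3 * R := by
              rw [hnormI, hnormI]
              gcongr
              · exact bside R (_root_.abs_of_nonneg h0R)
              · exact bside (-R) (by rw [abs_neg, _root_.abs_of_nonneg h0R])
        _ = 4 * C / R ^ 2 := by field_simp; ring
    · have : Tendsto (fun R : ℝ => (R ^ 2)⁻¹) atTop (𝓝 0) :=
        (tendsto_pow_atTop two_ne_zero).inv_tendsto_atTop
      simpa [div_eq_mul_inv] using this.const_mul (4 * C)
  exact tendsto_nhds_unique T1 T2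




/-- Vanishing of the integral `J₃` in the proof of Theorem 2(iii): under (M1)–(M3) on the
entire function `f` and `|w| ≤ δ < 1` on the closed upper half-plane (`w` continuous
there and holomorphic on the open half-plane), for every `z` with `Im z > 0`,
`∫_ℝ conj(w(x))/(f(x)·(f(x) - conj(w(x))·conj(f(x)))·(x - z)) dx = 0`. -/
theorem J3_eq_zero
    (f : ℂ → ℂ) (hf : Differentiable ℂ f)
    (hM1 : ∀ z : ℂ, z.im ≤ 0 → f z ≠ 0)
    (hM2 : ∀ z : ℂ, 0 ≤ z.im →
      ‖f z‖ ≤ ‖(starRingEnd ℂ) (f ((starRingEnd ℂ) z))‖)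
    (hM3 : ∀ m : ℕ, ∀ ε : ℝ, 0 < ε → ∃ R : ℝ, 0 < R ∧ ∀ z : ℂ, z.im ≤ 0 →
      R ≤ ‖z‖ → ‖z‖ ^ m ≤ ε * ‖f z‖)
    (δ : ℝ) (hδ : δ ∈ Set.Ioo (0 : ℝ) 1)
    (w : ℂ → ℂ)
    (hwc : ContinuousOn w {z : ℂ | 0 ≤ z.im})
    (hwh : DifferentiableOn ℂ w {z : ℂ | 0 < z.im})
    (hwb : ∀ z : ℂ, 0 ≤ z.im → ‖w z‖ ≤ δ) :
    ∀ z : ℂ, 0 < z.im →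
      ∫ x : ℝ, (starRingEnd ℂ) (w (x : ℂ)) /
        (f (x : ℂ) *
          (f (x : ℂ) - (starRingEnd ℂ) (w (x : ℂ)) * (starRingEnd ℂ) (f (x : ℂ))) *
          ((x : ℂ) - z)) = 0 := by

  intro z hz
  obtain ⟨hδ0, hδ1⟩ := hδ
  set fb : ℂ → ℂ := fun ζ => (starRingEnd ℂ) (f ((starRingEnd ℂ) ζ)) with hfb_def
  have hfb : Differentiable ℂ fb := by
    intro ζ
    exact (hasDerivAt_conj_comp ((hf _).hasDerivAt)).differentiableAt
  set c : ℂ := (starRingEnd ℂ) z with hc_def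
  set g : ℂ → ℂ := fun ζ => w ζ / (fb ζ * (fb ζ - w ζ * f ζ) * (ζ - c)) with hg_def
  -- nonvanishing facts on the closed upper half-plane
  have hfb_ne : ∀ ζ : ℂ, 0 ≤ ζ.im → fb ζ ≠ 0 := by
    intro ζ hζ
    simp only [hfb_def, ne_eq, map_eq_zero]
    exact hM1 _ (by simp [Complex.conj_im]; linarith)
  have hsub_ne : ∀ ζ : ℂ, 0 ≤ ζ.im → fb ζ - w ζ * f ζ ≠ 0 := by
    intro ζ hζ h
    have h1 : ‖fb ζ‖ = ‖w ζ‖ * ‖f ζ‖ := by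
      rw [sub_eq_zero] at h; rw [h, norm_mul]
    have h2 := hM2 ζ hζ
    have h3 := hwb ζ hζ
    have h4 : 0 < ‖fb ζ‖ := by
      simpa [norm_pos_iff] using hfb_ne ζ hζ
    nlinarith [norm_nonneg (f ζ)]
  have hc_ne : ∀ ζ : ℂ, 0 ≤ ζ.im → ζ - c ≠ 0 := by
    intro ζ hζ h
    have : (ζ - c).im = 0 := by rw [h]; simp
    simp [hc_def, Complex.sub_im, Complex.conj_im] at this
    linarith
  have hden_ne : ∀ ζ : ℂ, 0 ≤ ζ.im → fb ζ * (fb ζ - w ζ * f ζ) * (ζ - c) ≠ 0 := by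
    intro ζ hζ
    exact mul_ne_zero (mul_ne_zero (hfb_ne ζ hζ) (hsub_ne ζ hζ)) (hc_ne ζ hζ)
  -- continuity and differentiability of g
  have hgc : ContinuousOn g {ζ : ℂ | 0 ≤ ζ.im} := by
    apply hwc.div
    · exact ((hfb.continuous.continuousOn.mul
        (hfb.continuous.continuousOn.sub (hwc.mul hf.continuous.continuousOn))).mul
        (continuousOn_id.sub continuousOn_const))
    · intro ζ hζ; exact hden_ne ζ hζ
  have hsub : {ζ : ℂ | 0 < ζ.im} ⊆ {ζ : ℂ | 0 ≤ ζ.im} := fun ζ hζ => le_of_lt (Set.mem_setOf_eq ▸ hζ)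
  have hgd : DifferentiableOn ℂ g {ζ : ℂ | 0 < ζ.im} := by
    apply DifferentiableOn.div hwh
    · exact ((hfb.differentiableOn.mul
        (hfb.differentiableOn.sub (hwh.mul hf.differentiableOn))).mul
        (differentiableOn_id.sub (differentiableOn_const c)))
    · intro ζ hζ; exact hden_ne ζ (hsub hζ)
  -- the decay bound
  obtain ⟨R₃, hR₃pos, hR₃⟩ := hM3 3 1 one_pos
  set R₀ : ℝ := max (max R₃ (‖z‖ + 1)) 2 with hR₀_def
  have hR₀2 : (2:ℝ) ≤ R₀ := le_max_right _ _
  have hCnn : (0:ℝ) ≤ δ / (1 - δ) := div_nonneg hδ0.le (by linarith)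
  have hgb : ∀ ζ : ℂ, 0 ≤ ζ.im → R₀ ≤ ‖ζ‖ →
      ‖g ζ‖ ≤ (δ / (1 - δ)) / ‖ζ‖ ^ 3 := by
    intro ζ hζ hζR
    have habs_conj : ‖(starRingEnd ℂ) ζ‖ = ‖ζ‖ := Complex.norm_conj ζ
    have hζ1 : (1:ℝ) ≤ ‖ζ‖ := by
      have := le_trans hR₀2 hζR; linarith
    have hfb3 : ‖ζ‖ ^ 3 ≤ ‖fb ζ‖ := by
      have h := hR₃ ((starRingEnd ℂ) ζ) (by simp [Complex.conj_im]; linarith)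
        (by rw [habs_conj]; exact le_trans (le_trans (le_max_left _ _) (le_max_left _ _)) hζR)
      rw [habs_conj, one_mul] at h
      simpa [hfb_def, Complex.norm_conj] using h
    have hfb1 : (1:ℝ) ≤ ‖fb ζ‖ :=
      le_trans (one_le_pow₀ hζ1) hfb3
    have hB : (1 - δ) * ‖fb ζ‖ ≤ ‖fb ζ - w ζ * f ζ‖ := by
      have h1 : ‖fb ζ‖ - ‖w ζ * f ζ‖
          ≤ ‖fb ζ - w ζ * f ζ‖ := by
        simpa using norm_sub_norm_le (fb ζ) (w ζ * f ζ)
      have h2 : ‖w ζ * f ζ‖ ≤ δ * ‖fb ζ‖ := by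
        rw [norm_mul]
        have := hwb ζ hζ
        have h3 := hM2 ζ hζ
        have h4 : ‖f ζ‖ ≤ ‖fb ζ‖ := h3
        nlinarith [norm_nonneg (f ζ), norm_nonneg (w ζ)]
      nlinarith
    have hD : (1:ℝ) ≤ ‖ζ - c‖ := by
      have h1 : ‖ζ‖ - ‖c‖ ≤ ‖ζ - c‖ := by
        simpa using norm_sub_norm_le ζ c
      have h2 : ‖c‖ = ‖z‖ := Complex.norm_conj z
      have h3 : ‖z‖ + 1 ≤ ‖ζ‖ :=
        le_trans (le_trans (le_max_right R₃ _) (le_max_left _ _)) hζR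
      linarith
    have hgabs : ‖g ζ‖ = ‖w ζ‖ /
        (‖fb ζ‖ * ‖fb ζ - w ζ * f ζ‖ * ‖ζ - c‖) := by
      simp [hg_def, norm_div, norm_mul]
    rw [hgabs]
    have hw : ‖w ζ‖ ≤ δ := hwb ζ hζ
    have hdenpos : (0:ℝ) < (1 - δ) * ‖ζ‖ ^ 3 := mul_pos (by linarith) (by positivity)
    have hden : (1 - δ) * ‖ζ‖ ^ 3 ≤
        ‖fb ζ‖ * ‖fb ζ - w ζ * f ζ‖ * ‖ζ - c‖ := by
      have hA := hfb3
      have hApos : (0:ℝ) < ‖fb ζ‖ := by linarith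
      have hBpos : (0:ℝ) ≤ ‖fb ζ - w ζ * f ζ‖ := norm_nonneg _
      calc (1 - δ) * ‖ζ‖ ^ 3 ≤ (1 - δ) * ‖fb ζ‖ := by nlinarith
        _ ≤ ‖fb ζ - w ζ * f ζ‖ := hB
        _ = ‖fb ζ - w ζ * f ζ‖ * 1 * 1 := by ring
        _ ≤ ‖fb ζ‖ * ‖fb ζ - w ζ * f ζ‖ * ‖ζ - c‖ := by
            calc ‖fb ζ - w ζ * f ζ‖ * 1 * 1
                ≤ ‖fb ζ - w ζ * f ζ‖ * ‖fb ζ‖ * ‖ζ - c‖ := by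
                  apply mul_le_mul (by nlinarith) hD (by norm_num) (by positivity)
              _ = ‖fb ζ‖ * ‖fb ζ - w ζ * f ζ‖ * ‖ζ - c‖ := by
                  ring
    calc ‖w ζ‖ /
        (‖fb ζ‖ * ‖fb ζ - w ζ * f ζ‖ * ‖ζ - c‖)
        ≤ δ / ((1 - δ) * ‖ζ‖ ^ 3) := div_le_div₀ hδ0.le hw hdenpos hden
      _ = (δ / (1 - δ)) / ‖ζ‖ ^ 3 := by rw [div_div]
  -- apply the half-plane lemma
  have hg0 : ∫ x : ℝ, g (x : ℝ) = 0 :=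
    halfplane_integral_zero g hgc hgd (δ / (1 - δ)) R₀ hCnn hR₀2 hgb
  -- conjugation
  have hconj : ∀ x : ℝ, (starRingEnd ℂ) (w (x : ℂ)) /
        (f (x : ℂ) *
          (f (x : ℂ) - (starRingEnd ℂ) (w (x : ℂ)) * (starRingEnd ℂ) (f (x : ℂ))) *
          ((x : ℂ) - z)) = (starRingEnd ℂ) (g (x : ℝ)) := by
    intro x
    simp only [hg_def, hfb_def, hc_def, map_div₀, map_mul, map_sub,
      Complex.conj_conj, Complex.conj_ofReal]
  calc (∫ x : ℝ, (starRingEnd ℂ) (w (x : ℂ)) /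
        (f (x : ℂ) *
          (f (x : ℂ) - (starRingEnd ℂ) (w (x : ℂ)) * (starRingEnd ℂ) (f (x : ℂ))) *
          ((x : ℂ) - z)))
      = ∫ x : ℝ, (starRingEnd ℂ) (g (x : ℝ)) := by simp only [hconj]
    _ = (starRingEnd ℂ) (∫ x : ℝ, g (x : ℝ)) := integral_conj
    _ = 0 := by rw [hg0, map_zero]
end

section
/- Let K > 0 and K' > 0 be real numbers and define the entire function f(z) = Σ_{m≥0} (−1)^m·((K − i·K')²·z/4)^m/(2m)! (i.e., f(z) = cos((K − i·K')·√z/2)). Then for every n ∈ ℕ, z^n/f(z) → 0 as |z| → ∞ uniformly on the closed lower half-plane: for every ε > 0 there exists R > 0 such that for all z with Im z ≤ 0 and |z| ≥ R one has f(z) ≠ 0 and |z|^n ≤ ε·|f(z)|. -/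
open Complex

set_option maxHeartbeats 1600000 in
/-- Section 3 of the paper: the function `f(z) = cos((K - iK')√z/2)`, defined by the
everywhere-convergent power series `∑ (-1)^m ((K - iK')² z/4)^m/(2m)!`, grows faster than
any power of `|z|` uniformly on the closed lower half-plane: for every `n` and `ε > 0`
there is `R > 0` such that whenever `Im z ≤ 0` and `|z| ≥ R`, `f(z) ≠ 0` and
`|z|^n ≤ ε·|f(z)|`. -/
theorem cos_sqrt_superpolynomial_growth (K K' : ℝ) (hK : 0 < K) (hK' : 0 < K')
    (n : ℕ) (ε : ℝ) (hε : 0 < ε) :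
    ∃ R : ℝ, 0 < R ∧ ∀ z : ℂ, z.im ≤ 0 → R ≤ ‖z‖ →
      (∑' m : ℕ, (-1) ^ m * (((K : ℂ) - Complex.I * (K' : ℂ)) ^ 2 * z / 4) ^ m /
        ((2 * m).factorial : ℂ)) ≠ 0 ∧
      ‖z‖ ^ n ≤ ε * ‖(∑' m : ℕ,
        (-1) ^ m * (((K : ℂ) - Complex.I * (K' : ℂ)) ^ 2 * z / 4) ^ m /
          ((2 * m).factorial : ℂ))‖ := by
  set c : ℝ := min K K' / 2 with hcdef
  have hc0 : 0 < c := by have := lt_min hK hK'; positivity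
  set N : ℕ := 2 * (n + 1) with hNdef
  have hN0 : (0:ℝ) < (N.factorial : ℝ) := by positivity
  refine ⟨max 1 (max (1 / c ^ 2) (4 * N.factorial / (ε * c ^ N))), lt_of_lt_of_le one_pos (le_max_left _ _), ?_⟩
  intro z hz hR
  set r : ℝ := ‖z‖ with hrdef
  have hr1 : 1 ≤ r := le_trans (le_max_left _ _) hR
  have hr0 : (0:ℝ) ≤ r := by linarith
  have hrc : 1 / c ^ 2 ≤ r := le_trans (le_trans (le_max_left _ _) (le_max_right _ _)) hR
  have hrN : 4 * N.factorial / (ε * c ^ N) ≤ r :=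
    le_trans (le_trans (le_max_right _ _) (le_max_right _ _)) hR
  have hxr : |z.re| ≤ r := Complex.abs_re_le_norm z
  rw [abs_le] at hxr
  set p : ℝ := Real.sqrt ((r + z.re) / 2) with hpdef
  set q : ℝ := Real.sqrt ((r - z.re) / 2) with hqdef
  have hp0 : 0 ≤ p := Real.sqrt_nonneg _
  have hq0 : 0 ≤ q := Real.sqrt_nonneg _
  have hp2 : p ^ 2 = (r + z.re) / 2 := Real.sq_sqrt (by linarith [hxr.1])
  have hq2 : q ^ 2 = (r - z.re) / 2 := Real.sq_sqrt (by linarith [hxr.2])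
  have hr2 : r ^ 2 = z.re ^ 2 + z.im ^ 2 := by
    rw [hrdef, Complex.sq_norm, Complex.normSq_apply]; ring
  have habsz : ‖z‖ = r := hrdef.symm
  clear_value r
  have hpq : p * q = -z.im / 2 := by
    rw [hpdef, hqdef, ← Real.sqrt_mul (by linarith [hxr.1])]
    have h1 : (r + z.re) / 2 * ((r - z.re) / 2) = (-z.im / 2) ^ 2 := by
      linear_combination hr2 / 4
    rw [h1, Real.sqrt_sq (by linarith)]
  clear_value p q
  set s : ℂ := ⟨p, -q⟩ with hsdef
  have hs : s ^ 2 = z := by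
    apply Complex.ext
    · simp only [hsdef, pow_two, Complex.mul_re]
      linear_combination hp2 - hq2
    · simp only [hsdef, pow_two, Complex.mul_im]
      linear_combination (-2 : ℝ) * hpq
  set w : ℂ := ((K : ℂ) - Complex.I * (K' : ℂ)) / 2 * s with hwdef
  have hw2 : w ^ 2 = ((K : ℂ) - Complex.I * (K' : ℂ)) ^ 2 * z / 4 := by
    rw [hwdef, mul_pow, hs]; ring
  have hts : (∑' m : ℕ, (-1) ^ m * (((K : ℂ) - Complex.I * (K' : ℂ)) ^ 2 * z / 4) ^ m /
      ((2 * m).factorial : ℂ)) = Complex.cos w := by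
    rw [Complex.cos_eq_tsum]
    exact tsum_congr fun m => by rw [pow_mul, hw2]
  set y₀ : ℝ := (K * q + K' * p) / 2 with hy0def
  have hwim : w.im = -y₀ := by
    simp [hwdef, hsdef, Complex.mul_im, Complex.div_re, Complex.div_im, Complex.normSq_apply]
    ring
  clear_value s w
  have hsum : Real.sqrt r ≤ p + q := by
    have h1 : r ≤ (p + q) ^ 2 := by
      have hpq0 : 0 ≤ p * q := mul_nonneg hp0 hq0
      nlinarith [hp2, hq2, hpq0]
    calc Real.sqrt r ≤ Real.sqrt ((p + q) ^ 2) := Real.sqrt_le_sqrt h1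
      _ = p + q := Real.sqrt_sq (by linarith)
  set t : ℝ := Real.sqrt r with htdef
  have ht0 : 0 ≤ t := Real.sqrt_nonneg _
  have ht2 : t ^ 2 = r := Real.sq_sqrt hr0
  clear_value t
  have hmin : min K K' ≤ K := min_le_left _ _
  have hmin' : min K K' ≤ K' := min_le_right _ _
  have hy0 : c * t ≤ y₀ := by
    have a1 : min K K' * q ≤ K * q := mul_le_mul_of_nonneg_right hmin hq0
    have a2 : min K K' * p ≤ K' * p := mul_le_mul_of_nonneg_right hmin' hp0
    have a3 : min K K' * t ≤ min K K' * (p + q) :=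
      mul_le_mul_of_nonneg_left hsum (le_of_lt (lt_min hK hK'))
    have a4 : min K K' * (p + q) = min K K' * p + min K K' * q := mul_add _ _ _
    rw [hy0def, hcdef]
    linarith
  have h1cr : 1 ≤ c ^ 2 * r := by
    rw [div_le_iff₀ (by positivity)] at hrc
    linarith
  have hctsq : (c * t) ^ 2 = c ^ 2 * r := by rw [mul_pow, ht2]
  have hct1 : 1 ≤ c * t := by
    by_contra hlt
    push_neg at hlt
    have := pow_lt_one₀ (mul_nonneg hc0.le ht0) hlt (two_ne_zero)
    linarith
  -- lower bound on |cos w|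
  have hcosabs : (Real.exp y₀ - Real.exp (-y₀)) / 2 ≤ ‖Complex.cos w‖ := by
    rw [show Complex.cos w = (Complex.exp (w * I) + Complex.exp (-w * I)) / 2 by rw [← Complex.two_cos]; ring]
    have e1 : ‖Complex.exp (w * I)‖ = Real.exp y₀ := by
      rw [Complex.norm_exp]; congr 1; simp [Complex.mul_re, hwim]
    have e2 : ‖Complex.exp (-w * I)‖ = Real.exp (-y₀) := by
      rw [Complex.norm_exp]; congr 1; simp [Complex.mul_re, hwim]
    have tri : ∀ a b : ℂ, ‖a‖ - ‖b‖ ≤ ‖a + b‖ := by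
      intro a b
      have h := norm_add_le (a + b) (-b)
      simp only [add_neg_cancel_right, norm_neg] at h
      linarith
    have tri := tri (Complex.exp (w * I)) (Complex.exp (-w * I))
    rw [norm_div]
    simp only [Complex.norm_two]
    rw [e1, e2] at tri
    linarith
  -- exponential beats polynomial
  have hexp : (c * t) ^ N / (N.factorial : ℝ) ≤ Real.exp (c * t) :=
    Real.pow_div_factorial_le_exp _ (by positivity) N
  have hctN : (c * t) ^ N = c ^ N * r ^ (n + 1) := by
    rw [mul_pow, hNdef, pow_mul, pow_mul, ht2]
  have hE2 : (2:ℝ) ≤ Real.exp (c * t) := by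
    calc (2:ℝ) ≤ 1 + 1 := by norm_num
      _ ≤ Real.exp 1 := by linarith [Real.add_one_le_exp 1]
      _ ≤ Real.exp (c * t) := Real.exp_le_exp.mpr hct1
  have hey : Real.exp (c * t) ≤ Real.exp y₀ := Real.exp_le_exp.mpr hy0
  have hey' : Real.exp (-y₀) ≤ 1 := Real.exp_le_one_iff.mpr (by linarith)
  have hkey : r ^ n ≤ ε * ((Real.exp y₀ - Real.exp (-y₀)) / 2) := by
    have h4 : 4 * (N.factorial : ℝ) ≤ ε * c ^ N * r := by
      rw [div_le_iff₀ (by positivity)] at hrN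
      linarith
    have h5 : 4 * r ^ n ≤ ε * (c ^ N * r ^ (n + 1)) / (N.factorial : ℝ) := by
      rw [le_div_iff₀ hN0]
      have hrn : (0:ℝ) ≤ r ^ n := by positivity
      calc 4 * r ^ n * (N.factorial : ℝ) = (4 * (N.factorial : ℝ)) * r ^ n := by ring
        _ ≤ (ε * c ^ N * r) * r ^ n := mul_le_mul_of_nonneg_right h4 hrn
        _ = ε * (c ^ N * r ^ (n + 1)) := by ring
    have h6 : ε * (c ^ N * r ^ (n + 1)) / (N.factorial : ℝ) ≤ ε * Real.exp (c * t) := by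
      rw [← hctN]
      rw [div_le_iff₀ hN0] at hexp ⊢
      calc ε * (c*t)^N ≤ ε * (Real.exp (c*t) * N.factorial) :=
            mul_le_mul_of_nonneg_left hexp hε.le
        _ = ε * Real.exp (c*t) * N.factorial := by ring
    have h7 : Real.exp (c * t) ≤ 2 * (Real.exp y₀ - Real.exp (-y₀)) := by linarith
    have h8 : ε * Real.exp (c * t) ≤ ε * (2 * (Real.exp y₀ - Real.exp (-y₀))) :=
      mul_le_mul_of_nonneg_left h7 hε.le
    have h9 : 4 * r ^ n ≤ ε * Real.exp (c * t) := le_trans h5 h6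
    linarith [h8, h9]
  refine ⟨?_, ?_⟩
  · rw [hts]
    intro h
    rw [h] at hcosabs
    simp at hcosabs
    have : Real.exp (-y₀) < Real.exp y₀ := Real.exp_lt_exp.mpr (by linarith)
    linarith
  · rw [hts]
    calc r ^ n ≤ ε * ((Real.exp y₀ - Real.exp (-y₀)) / 2) := hkey
      _ ≤ ε * ‖Complex.cos w‖ := by
          exact mul_le_mul_of_nonneg_left hcosabs hε.le
end
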